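/- arXiv:1703.10192 — 3 statements merged into one kernel-verified Lean document; each statement's English description precedes it below -/
import Mathlib

section
/- Let (Ω,𝔉,P) be a probability space, H > 0, x ∈ ℝ, and r : ℝ → ℝ continuously differentiable with r(x) ≠ 0. Let X : Ω × [0,H] → ℝ be jointly measurable such that: (i) for P-almost every ω, the path t ↦ X(ω,t) is a piecewise C¹ path with N(ω) jump times which is a piecewise integral curve of r and avoids the level x at endpoints and jumps; (ii) N is measurable with E[N] < ∞; (iii) for every t ∈ [0,H], the law of X(t) has a density p(t,·) with respect to Lebesgue measure on ℝ, and there is η > 0 such that (t,y) ↦ p(t,y) is continuous on [0,H] × (x−η, x+η). Then the number c_x(H) of continuous crossings of the level x by X on [0,H] and the local time l_x(H) are integrable, and E[c_x(H)] = |r(x)| · E[l_x(H)] = |r(x)| · ∫₀^H p(s,x) ds. (Dalmao–Mordecki formula, Corollary 3.) -/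
open MeasureTheory Filter Set Topology
open scoped ENNReal

/-- The continuous crossing set of the level `x` by `f` on `(0,H)`. -/
def crossSet (H x : ℝ) (f : ℝ → ℝ) : Set ℝ :=
  {s : ℝ | s ∈ Set.Ioo 0 H ∧ ContinuousAt f s ∧ f s = x}

private lemma lemA {g d : ℝ → ℝ} {a b x δ : ℝ}
    (hg : ∀ s ∈ Icc a b, HasDerivWithinAt g (d s) (Icc a b) s)
    (hd : ∀ s ∈ Icc a b, |g s - x| ≤ δ → 0 < d s)
    (hδ : 0 ≤ δ) {w v : ℝ} (hw : w ∈ Icc a b) (hv : v ∈ Icc a b) (hwv : w < v)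
    (hgw : x + δ < g w) (hgv : g v ≤ x + δ) : False := by
  have hcont : ContinuousOn g (Icc a b) := fun s hs => (hg s hs).continuousWithinAt
  set T : Set ℝ := Icc w v ∩ g ⁻¹' Iic (x + δ) with hTdef
  have hsub : Icc w v ⊆ Icc a b := Icc_subset_Icc hw.1 hv.2
  have hTclosed : IsClosed T :=
    (hcont.mono hsub).preimage_isClosed_of_isClosed isClosed_Icc isClosed_Iic
  have hvT : v ∈ T := ⟨⟨hwv.le, le_rfl⟩, hgv⟩
  have hTbdd : BddBelow T := bddBelow_Icc.mono inter_subset_left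
  set t := sInf T with htdef
  have htT : t ∈ T := hTclosed.csInf_mem ⟨v, hvT⟩ hTbdd
  have hwt : w < t := by
    rcases lt_or_eq_of_le htT.1.1 with h | h
    · exact h
    · have : g t ≤ x + δ := htT.2
      rw [← h] at this
      exact absurd this (not_le.mpr hgw)
  have htab : t ∈ Icc a b := hsub htT.1
  have hnot : ∀ s ∈ Ico w t, x + δ < g s := by
    intro s hs
    by_contra hle
    exact absurd (csInf_le hTbdd ⟨⟨hs.1, hs.2.le.trans htT.1.2⟩, not_lt.mp hle⟩) (not_le.mpr hs.2)
  have hIcosub : Ico w t ⊆ Icc a b := fun s hs => ⟨hw.1.trans hs.1, hs.2.le.trans htab.2⟩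
  have hband : |g t - x| ≤ δ := by
    have hge : x + δ ≤ g t := by
      have hne : (𝓝[Ico w t] t).NeBot := right_nhdsWithin_Ico_neBot hwt
      have htend : Tendsto g (𝓝[Ico w t] t) (𝓝 (g t)) :=
        (hcont t htab).mono_left (nhdsWithin_mono _ hIcosub)
      exact ge_of_tendsto htend
        (eventually_mem_nhdsWithin.mono fun s hs => (hnot s hs).le)
    have hle : g t ≤ x + δ := htT.2
    rw [abs_le]; constructor <;> linarith
  have hpos : 0 < d t := hd t htab hband
  have hslope := hasDerivWithinAt_iff_tendsto_slope.1 (hg t htab)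
  have hev : ∀ᶠ s in 𝓝[Icc a b \ {t}] t, 0 < slope g t s := hslope.eventually_const_lt hpos
  have hmono : 𝓝[Ico w t] t ≤ 𝓝[Icc a b \ {t}] t :=
    nhdsWithin_mono _ (fun s hs => ⟨hIcosub hs, ne_of_lt hs.2⟩)
  have hne : (𝓝[Ico w t] t).NeBot := right_nhdsWithin_Ico_neBot hwt
  obtain ⟨s, hs_pos, hs_mem⟩ := ((hev.filter_mono hmono).and eventually_mem_nhdsWithin).exists
  have hst : s - t < 0 := sub_neg.mpr hs_mem.2
  have : g s - g t < 0 := by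
    rw [slope_def_field, div_pos_iff] at hs_pos
    rcases hs_pos with ⟨_, h⟩ | ⟨h, _⟩
    · linarith
    · linarith
  have h1 := hnot s hs_mem
  have h2 : g t ≤ x + δ := htT.2
  linarith

private lemma lemA' {g d : ℝ → ℝ} {a b x δ : ℝ}
    (hg : ∀ s ∈ Icc a b, HasDerivWithinAt g (d s) (Icc a b) s)
    (hd : ∀ s ∈ Icc a b, |g s - x| ≤ δ → 0 < d s)
    (hδ : 0 ≤ δ) {u w : ℝ} (hu : u ∈ Icc a b) (hw : w ∈ Icc a b) (huw : u < w)
    (hgu : x - δ ≤ g u) (hgw : g w < x - δ) : False := by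
  have hmaps : ∀ s ∈ Icc (-b) (-a), -s ∈ Icc a b := by
    intro s hs; exact ⟨by linarith [hs.2], by linarith [hs.1]⟩
  have hg' : ∀ s ∈ Icc (-b) (-a),
      HasDerivWithinAt (fun s => -g (-s)) (d (-s)) (Icc (-b) (-a)) s := by
    intro s hs
    have h1 : HasDerivWithinAt g (d (-s)) (Icc a b) (-s) := hg (-s) (hmaps s hs)
    have h2 : HasDerivWithinAt (fun t : ℝ => -t) (-1) (Icc (-b) (-a)) s :=
      (hasDerivAt_neg s).hasDerivWithinAt
    have h3 := HasDerivWithinAt.comp s h1 h2 (fun t ht => hmaps t ht)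
    have h4 := h3.neg
    rw [show d (-s) = -(d (-s) * -1) by ring]
    exact h4
  have hd' : ∀ s ∈ Icc (-b) (-a), |(-g (-s)) - (-x)| ≤ δ → 0 < d (-s) := by
    intro s hs habs
    refine hd (-s) (hmaps s hs) ?_
    calc |g (-s) - x| = |(-g (-s)) - (-x)| := by rw [← abs_neg]; ring_nf
    _ ≤ δ := habs
  refine lemA hg' hd' hδ (w := -w) (v := -u) ⟨by linarith [hw.2], by linarith [hw.1]⟩
    ⟨by linarith [hu.2], by linarith [hu.1]⟩ (by linarith) ?_ ?_
  · simp only [neg_neg]; linarith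
  · simp only [neg_neg]; linarith

lemma lemB {g d : ℝ → ℝ} {a b x δ : ℝ}
    (hg : ∀ s ∈ Icc a b, HasDerivWithinAt g (d s) (Icc a b) s)
    (hd : ∀ s ∈ Icc a b, |g s - x| ≤ δ → 0 < d s)
    (hδ : 0 ≤ δ) {u v w : ℝ} (hu : u ∈ Icc a b) (hv : v ∈ Icc a b)
    (hgu : |g u - x| ≤ δ) (hgv : |g v - x| ≤ δ) (hw : w ∈ Icc u v) : |g w - x| ≤ δ := by
  have hwab : w ∈ Icc a b := ⟨hu.1.trans hw.1, hw.2.trans hv.2⟩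
  rw [abs_le] at hgu hgv ⊢
  constructor
  · by_contra hlt
    push_neg at hlt
    have huw : u < w := by
      rcases lt_or_eq_of_le hw.1 with h | h
      · exact h
      · exfalso; rw [← h] at hlt; linarith [hgu.1]
    exact lemA' hg hd hδ hu hwab huw (by linarith [hgu.1]) (by linarith)
  · by_contra hlt
    push_neg at hlt
    have hwv : w < v := by
      rcases lt_or_eq_of_le hw.2 with h | h
      · exact h
      · exfalso; rw [h] at hlt; linarith [hgv.2]
    exact lemA hg hd hδ hwab hv hwv (by linarith) (by linarith [hgv.2])

private lemma growth {r g : ℝ → ℝ} {a b x ε c : ℝ} (hc : 0 < c)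
    (hband : ∀ y, |y - x| ≤ ε → c ≤ r y)
    (hg : ∀ s ∈ Icc a b, HasDerivWithinAt g (r (g s)) (Icc a b) s)
    {δ : ℝ} (hδε : δ ≤ ε) {u v : ℝ} (hu : u ∈ Icc a b) (hv : v ∈ Icc a b) (huv : u ≤ v)
    (hin : ∀ w ∈ Icc u v, |g w - x| ≤ δ) : c * (v - u) ≤ g v - g u := by
  have hsub : Icc u v ⊆ Icc a b := Icc_subset_Icc hu.1 hv.2
  have hcont : ContinuousOn g (Icc u v) :=
    fun s hs => ((hg s (hsub hs)).continuousWithinAt).mono hsub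
  have hda : ∀ s ∈ Ioo u v, HasDerivAt g (r (g s)) s := by
    intro s hs
    exact (hg s (hsub (Ioo_subset_Icc_self hs))).hasDerivAt
      (Icc_mem_nhds (lt_of_le_of_lt hu.1 hs.1) (lt_of_lt_of_le hs.2 hv.2))
  refine Convex.mul_sub_le_image_sub_of_le_deriv (convex_Icc u v) hcont ?_ ?_ u
    (left_mem_Icc.2 huv) v (right_mem_Icc.2 huv) huv
  · rw [interior_Icc]
    exact fun s hs => (hda s hs).differentiableAt.differentiableWithinAt
  · rw [interior_Icc]
    intro s hs
    rw [(hda s hs).deriv]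
    exact hband _ ((hin s (Ioo_subset_Icc_self hs)).trans hδε)

lemma hSclosed {r g : ℝ → ℝ} {a b x : ℝ} (hg : ∀ s ∈ Icc a b, HasDerivWithinAt g (r (g s)) (Icc a b) s) (δ : ℝ) :
    IsClosed {s ∈ Icc a b | |g s - x| ≤ δ} := by
  have hcont : ContinuousOn g (Icc a b) := fun s hs => (hg s hs).continuousWithinAt
  have h : {s ∈ Icc a b | |g s - x| ≤ δ} = Icc a b ∩ (fun s => |g s - x|) ⁻¹' Iic δ := rfl
  rw [h]
  exact ((hcont.sub continuousOn_const).abs).preimage_isClosed_of_isClosed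
    isClosed_Icc isClosed_Iic

lemma Sstruct {r g : ℝ → ℝ} {a b x ε c : ℝ} (hc : 0 < c)
    (hband : ∀ y, |y - x| ≤ ε → c ≤ r y)
    (hg : ∀ s ∈ Icc a b, HasDerivWithinAt g (r (g s)) (Icc a b) s)
    {δ : ℝ} (hδ0 : 0 ≤ δ) (hδε : δ ≤ ε)
    (hne : ({s ∈ Icc a b | |g s - x| ≤ δ}).Nonempty) :
    ∃ u v : ℝ, u ∈ Icc a b ∧ v ∈ Icc a b ∧ u ≤ v ∧ |g u - x| ≤ δ ∧ |g v - x| ≤ δ ∧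
      {s ∈ Icc a b | |g s - x| ≤ δ} = Icc u v ∧ c * (v - u) ≤ g v - g u ∧ v - u ≤ 2*δ/c := by
  set S := {s ∈ Icc a b | |g s - x| ≤ δ} with hS
  have hscl : IsClosed S := hSclosed hg δ
  have hsub : S ⊆ Icc a b := fun s hs => hs.1
  have hbddb : BddBelow S := bddBelow_Icc.mono hsub
  have hbdda : BddAbove S := (bddAbove_Icc (a := a) (b := b)).mono hsub
  have huS : sInf S ∈ S := hscl.csInf_mem hne hbddb
  have hvS : sSup S ∈ S := hscl.csSup_mem hne hbdda
  have hd : ∀ s ∈ Icc a b, |g s - x| ≤ δ → 0 < r (g s) :=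
    fun s hs h => hc.trans_le (hband _ (h.trans hδε))
  have huv : sInf S ≤ sSup S := csInf_le_csSup hne hbddb hbdda
  have hSeq : S = Icc (sInf S) (sSup S) := by
    apply Subset.antisymm
    · exact fun s hs => ⟨csInf_le hbddb hs, le_csSup hbdda hs⟩
    · intro w hw
      exact ⟨⟨huS.1.1.trans hw.1, hw.2.trans hvS.1.2⟩,
        lemB hg hd hδ0 huS.1 hvS.1 huS.2 hvS.2 hw⟩
  have hin : ∀ w ∈ Icc (sInf S) (sSup S), |g w - x| ≤ δ := by
    intro w hw; exact (hSeq ▸ hw : w ∈ S).2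
  have hgr := growth hc hband hg hδε huS.1 hvS.1 huv hin
  refine ⟨sInf S, sSup S, huS.1, hvS.1, huv, huS.2, hvS.2, hSeq, hgr, ?_⟩
  have h2δ : g (sSup S) - g (sInf S) ≤ 2*δ := by
    have h1 := abs_le.1 huS.2
    have h2 := abs_le.1 hvS.2
    linarith [h1.1, h2.2]
  rw [le_div_iff₀ hc]
  linarith

private lemma Sbdry {r g : ℝ → ℝ} {a b x ε c : ℝ} (hc : 0 < c)
    (hband : ∀ y, |y - x| ≤ ε → c ≤ r y)
    (hg : ∀ s ∈ Icc a b, HasDerivWithinAt g (r (g s)) (Icc a b) s)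
    {δ : ℝ} (hδ0 : 0 < δ) (hδε : δ ≤ ε) (hδa : δ < |g a - x|) (hδb : δ < |g b - x|)
    {u v : ℝ} (hu : u ∈ Icc a b) (hv : v ∈ Icc a b)
    (huS : |g u - x| ≤ δ) (hvS : |g v - x| ≤ δ)
    (hSeq : {s ∈ Icc a b | |g s - x| ≤ δ} = Icc u v) :
    g u = x - δ ∧ g v = x + δ := by
  have hcont : ContinuousOn g (Icc a b) := fun s hs => (hg s hs).continuousWithinAt
  constructor
  · -- g u = x - δ
    have hau : a < u := by
      rcases lt_or_eq_of_le hu.1 with h | h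
      · exact h
      · exfalso; rw [← h] at huS; exact absurd huS (not_le.mpr hδa)
    by_contra hne
    have habs := abs_le.1 huS
    have hgtu : x - δ < g u := by
      rcases lt_or_eq_of_le habs.1 with h | h
      · linarith
      · exact absurd (by linarith : g u = x - δ) hne
    have hF : (𝓝[Ico a u] u).NeBot := right_nhdsWithin_Ico_neBot hau
    have hIcosub : Ico a u ⊆ Icc a b := fun s hs => ⟨hs.1, hs.2.le.trans hu.2⟩
    have htend : Tendsto g (𝓝[Ico a u] u) (𝓝 (g u)) :=
      (hcont u hu).mono_left (nhdsWithin_mono _ hIcosub)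
    have hev1 : ∀ᶠ s in 𝓝[Ico a u] u, x - δ < g s := htend.eventually_const_lt hgtu
    have hev2 : ∀ᶠ s in 𝓝[Ico a u] u, g s < x + δ := by
      rcases lt_or_eq_of_le habs.2 with h | h
      · exact htend.eventually_lt_const (by linarith : g u < x + δ)
      · -- g u = x + δ : use positive slope
        have hpos : 0 < r (g u) := hc.trans_le (hband _ (huS.trans hδε))
        have hslope := hasDerivWithinAt_iff_tendsto_slope.1 (hg u hu)
        have hev : ∀ᶠ s in 𝓝[Icc a b \ {u}] u, 0 < slope g u s :=
          hslope.eventually_const_lt hpos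
        have hmono : 𝓝[Ico a u] u ≤ 𝓝[Icc a b \ {u}] u :=
          nhdsWithin_mono _ (fun s hs => ⟨hIcosub hs, ne_of_lt hs.2⟩)
        filter_upwards [hev.filter_mono hmono, eventually_mem_nhdsWithin] with s hsl hsm
        rw [slope_def_field, div_pos_iff] at hsl
        rcases hsl with ⟨h1, h2⟩ | ⟨h1, h2⟩
        · linarith [hsm.2]
        · linarith
    obtain ⟨s, hs1, hs2, hsm⟩ := (hev1.and (hev2.and eventually_mem_nhdsWithin)).exists
    have : s ∈ {s ∈ Icc a b | |g s - x| ≤ δ} :=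
      ⟨hIcosub hsm, abs_le.2 ⟨by linarith, by linarith⟩⟩
    rw [hSeq] at this
    exact absurd this.1 (not_le.mpr hsm.2)
  · -- g v = x + δ
    have hvb : v < b := by
      rcases lt_or_eq_of_le hv.2 with h | h
      · exact h
      · exfalso; rw [h] at hvS; exact absurd hvS (not_le.mpr hδb)
    by_contra hne
    have habs := abs_le.1 hvS
    have hltv : g v < x + δ := by
      rcases lt_or_eq_of_le habs.2 with h | h
      · linarith
      · exact absurd (by linarith : g v = x + δ) hne
    have hF : (𝓝[Ioc v b] v).NeBot := left_nhdsWithin_Ioc_neBot hvb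
    have hIocsub : Ioc v b ⊆ Icc a b := fun s hs => ⟨hv.1.trans hs.1.le, hs.2⟩
    have htend : Tendsto g (𝓝[Ioc v b] v) (𝓝 (g v)) :=
      (hcont v hv).mono_left (nhdsWithin_mono _ hIocsub)
    have hev1 : ∀ᶠ s in 𝓝[Ioc v b] v, g s < x + δ := htend.eventually_lt_const hltv
    have hev2 : ∀ᶠ s in 𝓝[Ioc v b] v, x - δ < g s := by
      rcases lt_or_eq_of_le habs.1 with h | h
      · exact htend.eventually_const_lt (by linarith : x - δ < g v)
      · -- g v = x - δ : use positive slope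
        have hpos : 0 < r (g v) := hc.trans_le (hband _ (hvS.trans hδε))
        have hslope := hasDerivWithinAt_iff_tendsto_slope.1 (hg v hv)
        have hsub2 : Ioc v b ⊆ Icc a b \ {v} := fun s hs =>
          ⟨hIocsub hs, by simpa using (ne_of_gt hs.1)⟩
        have hev : ∀ᶠ s in 𝓝[Ioc v b] v, 0 < slope g v s :=
          (hslope.eventually_const_lt hpos).filter_mono (nhdsWithin_mono _ hsub2)
        filter_upwards [hev, eventually_mem_nhdsWithin] with s hsl hsm
        rw [slope_def_field, div_pos_iff] at hsl
        rcases hsl with ⟨h1, h2⟩ | ⟨h1, h2⟩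
        · linarith
        · linarith [hsm.1]
    obtain ⟨s, hs1, hs2, hsm⟩ := (hev1.and (hev2.and eventually_mem_nhdsWithin)).exists
    have : s ∈ {s ∈ Icc a b | |g s - x| ≤ δ} :=
      ⟨hIocsub hsm, abs_le.2 ⟨by linarith, by linarith⟩⟩
    rw [hSeq] at this
    exact absurd this.2 (not_le.mpr hsm.1)

private lemma piecePos {r g : ℝ → ℝ} {a b x ε c : ℝ} (hc : 0 < c) (hε : 0 < ε) (hab : a < b)
    (hband : ∀ y, |y - x| ≤ ε → c ≤ r y)
    (hg : ∀ s ∈ Icc a b, HasDerivWithinAt g (r (g s)) (Icc a b) s)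
    (ha : g a ≠ x) (hb : g b ≠ x) :
    {s ∈ Icc a b | g s = x}.Subsingleton ∧
    (∀ δ, 0 < δ → δ ≤ ε → volume {s ∈ Icc a b | |g s - x| ≤ δ} ≤ ENNReal.ofReal (2*δ/c)) ∧
    Tendsto (fun δ => (volume {s ∈ Icc a b | |g s - x| ≤ δ}).toReal / (2*δ)) (𝓝[>] (0:ℝ))
      (𝓝 (({s ∈ Icc a b | g s = x}).ncard / r x)) := by
  have hcont : ContinuousOn g (Icc a b) := fun s hs => (hg s hs).continuousWithinAt
  have hrx : 0 < r x := hc.trans_le (hband x (by simpa using hε.le))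
  -- Subsingleton
  have hkey : ∀ s1 s2 : ℝ, s1 ∈ {s ∈ Icc a b | g s = x} → s2 ∈ {s ∈ Icc a b | g s = x} →
      s1 ≤ s2 → s1 = s2 := by
    intro s1 s2 h1 h2 h12
    have hd0 : ∀ s ∈ Icc a b, |g s - x| ≤ 0 → 0 < r (g s) :=
      fun s hs h => hc.trans_le (hband _ (h.trans hε.le))
    have hin : ∀ w ∈ Icc s1 s2, |g w - x| ≤ 0 :=
      fun w hw => lemB hg hd0 le_rfl h1.1 h2.1 (by simp [h1.2]) (by simp [h2.2]) hw
    have := growth hc hband hg hε.le h1.1 h2.1 h12 (by simpa using hin)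
    rw [h1.2, h2.2] at this
    nlinarith
  have hss : {s ∈ Icc a b | g s = x}.Subsingleton := by
    intro s1 h1 s2 h2
    rcases le_total s1 s2 with h | h
    · exact hkey s1 s2 h1 h2 h
    · exact (hkey s2 s1 h2 h1 h).symm
  refine ⟨hss, ?_, ?_⟩
  · -- volume bound
    intro δ hδ0 hδε
    rcases eq_empty_or_nonempty {s ∈ Icc a b | |g s - x| ≤ δ} with hS | hS
    · rw [hS]; simp
    · obtain ⟨u, v, hu, hv, huv, hgu, hgv, hSeq, hgr, hlen⟩ :=
        Sstruct hc hband hg hδ0.le hδε hS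
      rw [hSeq, Real.volume_Icc]
      exact ENNReal.ofReal_le_ofReal hlen
  · -- the limit
    rcases eq_empty_or_nonempty {s ∈ Icc a b | g s = x} with hZ | hZ
    · -- no crossing
      obtain ⟨s0, hs0, hmin⟩ := isCompact_Icc.exists_isMinOn (nonempty_Icc.2 hab.le)
        ((hcont.sub continuousOn_const).abs)
      have hm : 0 < |g s0 - x| := by
        rcases eq_or_lt_of_le (abs_nonneg (g s0 - x)) with h | h
        · exfalso
          have : s0 ∈ {s ∈ Icc a b | g s = x} := ⟨hs0, by have := h.symm; rwa [abs_eq_zero, sub_eq_zero] at this⟩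
          rw [hZ] at this; exact this
        · exact h
      have hev : ∀ᶠ δ in 𝓝[>] (0:ℝ), (volume {s ∈ Icc a b | |g s - x| ≤ δ}).toReal / (2*δ) = 0 := by
        filter_upwards [Ioo_mem_nhdsGT_of_mem (by exact ⟨le_rfl, hm⟩ : (0:ℝ) ∈ Ico 0 |g s0 - x|)] with δ hδ
        have : {s ∈ Icc a b | |g s - x| ≤ δ} = ∅ := by
          ext s; simp only [mem_setOf_eq, mem_empty_iff_false, iff_false, not_and]
          intro hs h
          exact absurd h (not_le.mpr (lt_of_lt_of_le hδ.2 (hmin hs)))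
        rw [this]
        simp
      rw [hZ]
      simp only [Set.ncard_empty, Nat.cast_zero, zero_div]
      exact Tendsto.congr' (hev.mono fun δ h => h.symm) tendsto_const_nhds
    · -- one crossing
      obtain ⟨sstar, hsmem⟩ := hZ
      have hsx : g sstar = x := hsmem.2
      have hsab : sstar ∈ Icc a b := hsmem.1
      have hsa : a < sstar := by
        rcases lt_or_eq_of_le hsab.1 with h | h
        · exact h
        · exact absurd (h ▸ hsx) ha
      have hsb : sstar < b := by
        rcases lt_or_eq_of_le hsab.2 with h | h
        · exact h
        · exact absurd (h.symm ▸ hsx) hb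
      have hZsing : {s ∈ Icc a b | g s = x} = {sstar} := hss.eq_singleton_of_mem hsmem
      have hncard : ({s ∈ Icc a b | g s = x}).ncard = 1 := by rw [hZsing]; exact Set.ncard_singleton _
      rw [hncard]
      have hstr : ∀ δ : ℝ, 0 < δ → δ ≤ ε →
          ∃ u v : ℝ, u ∈ Icc a b ∧ v ∈ Icc a b ∧ u ≤ v ∧ |g u - x| ≤ δ ∧ |g v - x| ≤ δ ∧
          {s ∈ Icc a b | |g s - x| ≤ δ} = Icc u v ∧ c * (v - u) ≤ g v - g u ∧ v - u ≤ 2*δ/c :=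
        fun δ h1 h2 => Sstruct hc hband hg h1.le h2
          ⟨sstar, hsab, by simp [hsx, h1.le]⟩
      choose! u v h1 h2 h3 h4 h5 h6 h7 h8 using hstr
      have hder : HasDerivAt g (r x) sstar := by
        have := (hg sstar hsab).hasDerivAt (Icc_mem_nhds hsa hsb)
        rwa [hsx] at this
      set δ1 := min ε (min |g a - x| |g b - x|) with hδ1def
      have hδ1 : 0 < δ1 := lt_min hε (lt_min (abs_pos.2 (sub_ne_zero.2 ha)) (abs_pos.2 (sub_ne_zero.2 hb)))
      -- facts for δ ∈ Ioo 0 δ1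
      have hfacts : ∀ δ : ℝ, δ ∈ Ioo (0:ℝ) δ1 →
          g (u δ) = x - δ ∧ g (v δ) = x + δ ∧ u δ ≤ sstar ∧ sstar ≤ v δ ∧
          v δ - u δ ≤ 2*δ/c ∧ (volume {s ∈ Icc a b | |g s - x| ≤ δ}).toReal = v δ - u δ := by
        intro δ hδ
        have hδ0 := hδ.1
        have hδε : δ ≤ ε := (hδ.2.le).trans (min_le_left _ _)
        have hδa : δ < |g a - x| := lt_of_lt_of_le hδ.2 ((min_le_right _ _).trans (min_le_left _ _))
        have hδb : δ < |g b - x| := lt_of_lt_of_le hδ.2 ((min_le_right _ _).trans (min_le_right _ _))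
        obtain ⟨hbu, hbv⟩ := Sbdry hc hband hg hδ0 hδε hδa hδb (h1 δ hδ0 hδε) (h2 δ hδ0 hδε)
          (h4 δ hδ0 hδε) (h5 δ hδ0 hδε) (h6 δ hδ0 hδε)
        have hsmem' : sstar ∈ Icc (u δ) (v δ) := by
          rw [← h6 δ hδ0 hδε]
          exact ⟨hsab, by simp [hsx, hδ0.le]⟩
        refine ⟨hbu, hbv, hsmem'.1, hsmem'.2, h8 δ hδ0 hδε, ?_⟩
        rw [h6 δ hδ0 hδε, Real.volume_Icc, ENNReal.toReal_ofReal (by linarith [h3 δ hδ0 hδε])]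
      -- the main limit
      have hmain : Tendsto (fun δ => (v δ - u δ) / (2*δ)) (𝓝[>] (0:ℝ)) (𝓝 ((1:ℝ) / r x)) := by
        rw [Metric.tendsto_nhdsWithin_nhds]
        intro θ hθ
        set θ2 := θ * c * r x with hθ2def
        have hθ2 : 0 < θ2 := by positivity
        obtain ⟨ρ, hρ0, hρ⟩ := Metric.tendsto_nhdsWithin_nhds.1
          (hasDerivAt_iff_tendsto_slope.1 hder) (θ2/2) (by positivity)
        have hptw : ∀ s : ℝ, |s - sstar| < ρ → |g s - g sstar - r x * (s - sstar)| ≤ (θ2/2) * |s - sstar| := by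
          intro s hs
          rcases eq_or_ne s sstar with h | h
          · simp [h]
          · have := hρ (by simpa using h) (by rwa [Real.dist_eq])
            rw [Real.dist_eq, slope_def_field] at this
            have hne : s - sstar ≠ 0 := sub_ne_zero.2 h
            calc |g s - g sstar - r x * (s - sstar)|
                = |(g s - g sstar) / (s - sstar) - r x| * |s - sstar| := by
                  rw [← abs_mul, sub_mul, div_mul_cancel₀ _ hne]
              _ ≤ (θ2/2) * |s - sstar| := by
                  apply mul_le_mul_of_nonneg_right this.le (abs_nonneg _)
        refine ⟨min δ1 (c * ρ / 2), lt_min hδ1 (by positivity), ?_⟩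
        intro δ hδmem hδdist
        rw [Real.dist_eq, sub_zero] at hδdist
        have hδ0 : 0 < δ := hδmem
        have hδδ1 : δ < δ1 := lt_of_abs_lt (lt_of_lt_of_le hδdist (min_le_left _ _))
        have hδρ : δ < c * ρ / 2 := lt_of_abs_lt (lt_of_lt_of_le hδdist (min_le_right _ _))
        obtain ⟨hbu, hbv, hus, hsv, hlen, _⟩ := hfacts δ ⟨hδ0, hδδ1⟩
        have hvu : 0 ≤ v δ - u δ := by linarith
        have hlenρ : v δ - u δ < ρ := by
          calc v δ - u δ ≤ 2*δ/c := hlen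
          _ < ρ := by rw [div_lt_iff₀ hc]; linarith [mul_comm ρ c]
        have huρ : |u δ - sstar| < ρ := by
          rw [abs_sub_lt_iff]; constructor <;> linarith
        have hvρ : |v δ - sstar| < ρ := by rw [abs_sub_lt_iff]; constructor <;> linarith
        have hEu := hptw (u δ) huρ
        have hEv := hptw (v δ) hvρ
        rw [hsx] at hEu hEv
        have habs_u : |u δ - sstar| = sstar - u δ := by rw [abs_of_nonpos (by linarith)]; ring
        have habs_v : |v δ - sstar| = v δ - sstar := abs_of_nonneg (by linarith)
        rw [hbu] at hEu
        rw [hbv] at hEv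
        rw [habs_u] at hEu
        rw [habs_v] at hEv
        -- |2δ - r x (v - u)| ≤ (θ2/2)(v-u)
        have hE : |2*δ - r x * (v δ - u δ)| ≤ (θ2/2) * (v δ - u δ) := by
          have h1' : |(x + δ - x - r x * (v δ - sstar)) - (x - δ - x - r x * (u δ - sstar))| ≤
              (θ2/2) * (v δ - sstar) + (θ2/2) * (sstar - u δ) := by
            exact (abs_sub _ _).trans (by exact add_le_add hEv hEu)
          calc |2*δ - r x * (v δ - u δ)|
              = |(x + δ - x - r x * (v δ - sstar)) - (x - δ - x - r x * (u δ - sstar))| := by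
                ring_nf
          _ ≤ (θ2/2) * (v δ - sstar) + (θ2/2) * (sstar - u δ) := h1'
          _ = (θ2/2) * (v δ - u δ) := by ring
        -- conclude
        have h2δ : (0:ℝ) < 2*δ := by linarith
        have hgoal : |(v δ - u δ)/(2*δ) - 1/(r x)| ≤ θ/2 := by
          have hrw : (v δ - u δ)/(2*δ) - 1/(r x) = (r x * (v δ - u δ) - 2*δ) / (2*δ * r x) := by
            field_simp
          rw [hrw, abs_div, abs_of_pos (by positivity : (0:ℝ) < 2*δ*r x)]
          rw [div_le_iff₀ (by positivity)]
          have : |r x * (v δ - u δ) - 2*δ| = |2*δ - r x * (v δ - u δ)| := abs_sub_comm _ _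
          rw [this]
          calc |2*δ - r x * (v δ - u δ)| ≤ (θ2/2) * (v δ - u δ) := hE
          _ ≤ (θ2/2) * (2*δ/c) := by
              apply mul_le_mul_of_nonneg_left hlen (by positivity)
          _ = θ/2 * (2*δ*r x) := by
              rw [hθ2def]
              field_simp
        rw [Real.dist_eq]
        calc |(v δ - u δ)/(2*δ) - 1/(r x)| ≤ θ/2 := hgoal
        _ < θ := by linarith
      -- transfer
      have hcongr : ∀ᶠ δ in 𝓝[>] (0:ℝ),
          (fun δ => (v δ - u δ) / (2*δ)) δ =
          (fun δ => (volume {s ∈ Icc a b | |g s - x| ≤ δ}).toReal / (2*δ)) δ := by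
        filter_upwards [Ioo_mem_nhdsGT_of_mem (⟨le_rfl, hδ1⟩ : (0:ℝ) ∈ Ico 0 δ1)] with δ hδ
        obtain ⟨_, _, _, _, _, hvol⟩ := hfacts δ hδ
        rw [hvol]
      have := hmain.congr' hcongr
      simpa using this

private lemma pieceMain {r g : ℝ → ℝ} {a b x ε c : ℝ} (hc : 0 < c) (hε : 0 < ε) (hab : a < b)
    (hband : (∀ y, |y - x| ≤ ε → c ≤ r y) ∨ (∀ y, |y - x| ≤ ε → r y ≤ -c))
    (hg : ∀ s ∈ Icc a b, HasDerivWithinAt g (r (g s)) (Icc a b) s)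
    (ha : g a ≠ x) (hb : g b ≠ x) :
    {s ∈ Icc a b | g s = x}.Subsingleton ∧
    (∀ δ, 0 < δ → δ ≤ ε → volume {s ∈ Icc a b | |g s - x| ≤ δ} ≤ ENNReal.ofReal (2*δ/c)) ∧
    Tendsto (fun δ => (volume {s ∈ Icc a b | |g s - x| ≤ δ}).toReal / (2*δ)) (𝓝[>] (0:ℝ))
      (𝓝 (({s ∈ Icc a b | g s = x}).ncard / |r x|)) := by
  rcases hband with hband | hband
  · have hrx : 0 < r x := hc.trans_le (hband x (by simpa using hε.le))
    have h := piecePos hc hε hab hband hg ha hb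
    rw [abs_of_pos hrx]
    exact h
  · -- reflect
    set r' : ℝ → ℝ := fun y => -r (2*x - y) with hr'def
    set g' : ℝ → ℝ := fun s => 2*x - g s with hg'def
    have hband' : ∀ y, |y - x| ≤ ε → c ≤ r' y := by
      intro y hy
      have : |(2*x - y) - x| ≤ ε := by
        rw [show (2*x - y) - x = -(y - x) by ring, abs_neg]; exact hy
      have := hband _ this
      simp only [hr'def]
      linarith
    have hg'deriv : ∀ s ∈ Icc a b, HasDerivWithinAt g' (r' (g' s)) (Icc a b) s := by
      intro s hs
      have h1 := (hg s hs).const_sub (2*x)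
      have : r' (g' s) = -(r (g s)) := by
        simp only [hr'def, hg'def]
        congr 1
        congr 1
        ring
      rw [this]
      exact h1
    have ha' : g' a ≠ x := by simp only [hg'def]; intro h; exact ha (by linarith)
    have hb' : g' b ≠ x := by simp only [hg'def]; intro h; exact hb (by linarith)
    have h := piecePos hc hε hab hband' hg'deriv ha' hb'
    have hZeq : {s ∈ Icc a b | g' s = x} = {s ∈ Icc a b | g s = x} := by
      ext s; simp only [mem_setOf_eq, hg'def, and_congr_right_iff]
      intro _; constructor <;> intro h' <;> linarith
    have hSeq : ∀ δ : ℝ, {s ∈ Icc a b | |g' s - x| ≤ δ} = {s ∈ Icc a b | |g s - x| ≤ δ} := by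
      intro δ
      ext s; simp only [mem_setOf_eq, hg'def, and_congr_right_iff]
      intro _
      rw [show 2*x - g s - x = -(g s - x) by ring, abs_neg]
    have hrx' : r' x = |r x| := by
      have hneg : r x ≤ -c := hband x (by simpa using hε.le)
      simp only [hr'def]
      rw [show 2*x - x = x by ring, abs_of_neg (by linarith : r x < 0)]
    rw [hZeq, hrx'] at h
    simp_rw [hSeq] at h
    exact h

private lemma pathMain {r : ℝ → ℝ} {x ε c H : ℝ}
    (hc : 0 < c) (hε : 0 < ε) (hH : 0 < H)
    (hband : (∀ y, |y - x| ≤ ε → c ≤ r y) ∨ (∀ y, |y - x| ≤ ε → r y ≤ -c))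
    (f : ℝ → ℝ) (k : ℕ) (τ : ℕ → ℝ) (g : ℕ → ℝ → ℝ)
    (hτ0 : τ 0 = 0) (hτk : τ (k+1) = H)
    (hτ : ∀ i ≤ k, τ i < τ (i+1))
    (hderiv : ∀ i ≤ k, ∀ s ∈ Icc (τ i) (τ (i+1)),
      HasDerivWithinAt (g i) (r (g i s)) (Icc (τ i) (τ (i+1))) s)
    (hfg : ∀ i ≤ k, ∀ s ∈ Ico (τ i) (τ (i+1)), f s = g i s)
    (hfH : f H = g k H)
    (hend : ∀ i ≤ k, g i (τ i) ≠ x ∧ g i (τ (i+1)) ≠ x) :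
    (crossSet H x f).Finite ∧
    (crossSet H x f).ncard ≤ k + 1 ∧
    (∀ δ : ℝ, 0 < δ → δ ≤ ε →
      volume ({u : ℝ | |f u - x| ≤ δ} ∩ Icc 0 H) ≤ ENNReal.ofReal (((k:ℝ)+1) * (2*δ/c))) ∧
    Tendsto (fun δ : ℝ => (volume ({u : ℝ | |f u - x| ≤ δ} ∩ Icc 0 H)).toReal / (2*δ))
      (𝓝[>] (0:ℝ)) (𝓝 ((crossSet H x f).ncard / |r x|)) := by
  classical
  have τmono : ∀ j, j ≤ k + 1 → ∀ i, i ≤ j → τ i ≤ τ j := by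
    intro j
    induction j with
    | zero => intro _ i hi; simp at hi; rw [hi]
    | succ n ih =>
      intro hn i hi
      rcases Nat.lt_succ_iff_lt_or_eq.1 (Nat.lt_succ_of_le hi) with h | h
      · have hik : i ≤ n := Nat.lt_succ_iff.1 h
        have hnk : n ≤ k := Nat.succ_le_succ_iff.1 hn
        calc τ i ≤ τ n := ih (hnk.trans (Nat.le_succ k)) i hik
        _ ≤ τ (n+1) := (hτ n hnk).le
      · rw [h]
  have hτpos : ∀ i, i ≤ k + 1 → 0 ≤ τ i := by
    intro i hi
    rw [← hτ0]
    exact τmono i hi 0 (Nat.zero_le i)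
  have hτleH : ∀ i, i ≤ k + 1 → τ i ≤ H := by
    intro i hi
    rw [← hτk]
    exact τmono (k+1) le_rfl i hi
  have cover : ∀ s : ℝ, 0 ≤ s → s < H → ∃ i, i ≤ k ∧ τ i ≤ s ∧ s < τ (i+1) := by
    intro s hs0 hsH
    set i := Nat.findGreatest (fun j => τ j ≤ s) k with hidef
    have hPi : τ i ≤ s := Nat.findGreatest_spec (P := fun j => τ j ≤ s) (Nat.zero_le k)
      (by show τ 0 ≤ s; rw [hτ0]; exact hs0)
    have hik : i ≤ k := Nat.findGreatest_le k
    refine ⟨i, hik, hPi, ?_⟩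
    rcases eq_or_lt_of_le hik with h | h
    · rw [h, hτk]; exact hsH
    · by_contra hle
      push_neg at hle
      exact Nat.findGreatest_is_greatest (Nat.lt_succ_self i) h hle
  set Z : ℕ → Set ℝ := fun i => {s ∈ Ioo (τ i) (τ (i+1)) | g i s = x} with hZdef
  have hZeq : ∀ i, i ≤ k → {s ∈ Icc (τ i) (τ (i+1)) | g i s = x} = Z i := by
    intro i hik
    ext s
    simp only [hZdef, mem_setOf_eq]
    constructor
    · rintro ⟨hs, hgs⟩
      rcases eq_or_lt_of_le hs.1 with h1 | h1
      · exact absurd (h1 ▸ hgs) (hend i hik).1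
      rcases eq_or_lt_of_le hs.2 with h2 | h2
      · exact absurd (h2 ▸ hgs) (hend i hik).2
      exact ⟨⟨h1, h2⟩, hgs⟩
    · rintro ⟨hs, hgs⟩
      exact ⟨Ioo_subset_Icc_self hs, hgs⟩
  -- the per-piece results
  have hpiece := fun (i : ℕ) (hik : i ≤ k) =>
    pieceMain hc hε (hτ i hik) hband (hderiv i hik) (hend i hik).1 (hend i hik).2
  have hZfin : ∀ i, i ≤ k → (Z i).Finite ∧ (Z i).ncard ≤ 1 := by
    intro i hik
    have hs := (hpiece i hik).1
    rw [hZeq i hik] at hs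
    refine ⟨hs.finite, ?_⟩
    rcases eq_empty_or_nonempty (Z i) with h | h
    · rw [h]; simp
    · obtain ⟨z, hz⟩ := h
      rw [hs.eq_singleton_of_mem hz]
      simp
  -- identification of the crossing set
  have hD1 : crossSet H x f = ⋃ i ∈ Finset.range (k+1), Z i := by
    ext s
    simp only [crossSet, mem_setOf_eq, mem_iUnion, Finset.mem_range, exists_prop]
    constructor
    · rintro ⟨hIoo, _, hfx⟩
      obtain ⟨i, hik, hτi, hτi1⟩ := cover s hIoo.1.le hIoo.2
      rcases eq_or_lt_of_le hτi with h | h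
      · exfalso
        have hfs : f s = g i s := hfg i hik s ⟨hτi, hτi1⟩
        apply (hend i hik).1
        rw [h, ← hfs]
        exact hfx
      · exact ⟨i, Nat.lt_succ_of_le hik, ⟨⟨h, hτi1⟩, by
          rw [← hfg i hik s ⟨hτi, hτi1⟩]; exact hfx⟩⟩
    · rintro ⟨i, hik1, his, hgs⟩
      have hik : i ≤ k := Nat.lt_succ_iff.1 hik1
      have hfs : f s = g i s := hfg i hik s ⟨his.1.le, his.2⟩
      have h0s : 0 < s := lt_of_le_of_lt (hτpos i (hik.trans (Nat.le_succ k))) his.1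
      have hsH : s < H := lt_of_lt_of_le his.2 (hτleH (i+1) (Nat.succ_le_succ hik))
      have hEq : f =ᶠ[𝓝 s] g i := by
        filter_upwards [isOpen_Ioo.mem_nhds his] with t ht
        exact hfg i hik t ⟨ht.1.le, ht.2⟩
      have hgc : ContinuousAt (g i) s :=
        ((hderiv i hik s (Ioo_subset_Icc_self his)).continuousWithinAt).continuousAt
          (Icc_mem_nhds his.1 his.2)
      refine ⟨⟨h0s, hsH⟩, ?_, by rw [hfs]; exact hgs⟩
      show Tendsto f (𝓝 s) (𝓝 (f s))
      rw [hfs]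
      exact hgc.congr' hEq.symm
  -- finite union and cardinality
  have hUnion : ∀ n, n ≤ k + 1 →
      (⋃ i ∈ Finset.range n, Z i).Finite ∧
      (⋃ i ∈ Finset.range n, Z i).ncard = ∑ i ∈ Finset.range n, (Z i).ncard := by
    intro n
    induction n with
    | zero => intro _; simp
    | succ n ih =>
      intro hn
      have hnk : n ≤ k := Nat.succ_le_succ_iff.1 hn
      obtain ⟨hfin, hcard⟩ := ih (hnk.trans (Nat.le_succ k))
      have hsplit : (⋃ i ∈ Finset.range (n+1), Z i) = Z n ∪ ⋃ i ∈ Finset.range n, Z i := by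
        rw [Finset.range_add_one, Finset.set_biUnion_insert]
      have hdisj : Disjoint (Z n) (⋃ i ∈ Finset.range n, Z i) := by
        rw [Set.disjoint_left]
        rintro s hsZ hsU
        simp only [mem_iUnion, Finset.mem_range, exists_prop] at hsU
        obtain ⟨i, hin, hsi⟩ := hsU
        have h1 : τ n < s := hsZ.1.1
        have h2 : s < τ (i+1) := hsi.1.2
        have h3 : τ (i+1) ≤ τ n := τmono n (hnk.trans (Nat.le_succ k)) (i+1) hin
        linarith
      have hZnfin := (hZfin n hnk).1
      constructor
      · rw [hsplit]; exact hZnfin.union hfin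
      · rw [hsplit, Set.ncard_union_eq hdisj hZnfin hfin, hcard, Finset.sum_range_succ]
        ring
  have hCfin : (crossSet H x f).Finite := by
    rw [hD1]; exact (hUnion (k+1) le_rfl).1
  have hCcard : (crossSet H x f).ncard = ∑ i ∈ Finset.range (k+1), (Z i).ncard := by
    rw [hD1]; exact (hUnion (k+1) le_rfl).2
  have hCle : (crossSet H x f).ncard ≤ k + 1 := by
    rw [hCcard]
    calc ∑ i ∈ Finset.range (k+1), (Z i).ncard ≤ ∑ _i ∈ Finset.range (k+1), 1 :=
      Finset.sum_le_sum (fun i hi => (hZfin i (Nat.lt_succ_iff.1 (Finset.mem_range.1 hi))).2)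
    _ = k + 1 := by simp
  -- occupation measure decomposition
  set Pc : ℕ → ℝ → Set ℝ := fun i δ => {s ∈ Icc (τ i) (τ (i+1)) | |g i s - x| ≤ δ} with hPcdef
  have hPcmeas : ∀ i, i ≤ k → ∀ δ, MeasurableSet (Pc i δ) :=
    fun i hik δ => (hSclosed (hderiv i hik) δ).measurableSet
  have hPcfin : ∀ i, i ≤ k → ∀ δ, volume (Pc i δ) < ⊤ := by
    intro i hik δ
    calc volume (Pc i δ) ≤ volume (Icc (τ i) (τ (i+1))) := measure_mono (fun s hs => hs.1)
    _ < ⊤ := by rw [Real.volume_Icc]; exact ENNReal.ofReal_lt_top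
  have hdecomp : ∀ δ : ℝ, volume ({u : ℝ | |f u - x| ≤ δ} ∩ Icc 0 H) =
      ∑ i ∈ Finset.range (k+1), volume (Pc i δ) := by
    intro δ
    set Po : ℕ → Set ℝ := fun i => Pc i δ ∩ Ico (τ i) (τ (i+1)) with hPodef
    have hPomeas : ∀ i ∈ Finset.range (k+1), MeasurableSet (Po i) := fun i hi =>
      (hPcmeas i (Nat.lt_succ_iff.1 (Finset.mem_range.1 hi)) δ).inter measurableSet_Ico
    have hPodisj : (↑(Finset.range (k+1)) : Set ℕ).PairwiseDisjoint Po := by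
      intro i hi j hj hij
      simp only [Finset.coe_range, mem_Iio] at hi hj
      rw [Function.onFun, Set.disjoint_left]
      intro s hsi hsj
      rcases lt_or_gt_of_ne hij with h | h
      · have h1 : s < τ (i+1) := hsi.2.2
        have h2 : τ (i+1) ≤ τ j := τmono j hj.le (i+1) h
        exact absurd hsj.2.1 (not_le.mpr (lt_of_lt_of_le h1 h2))
      · have h1 : s < τ (j+1) := hsj.2.2
        have h2 : τ (j+1) ≤ τ i := τmono i hi.le (j+1) h
        exact absurd hsi.2.1 (not_le.mpr (lt_of_lt_of_le h1 h2))
    have hPoPc : ∀ i, i ≤ k → volume (Po i) = volume (Pc i δ) := by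
      intro i hik
      apply le_antisymm (measure_mono inter_subset_left)
      have hsub : Pc i δ ⊆ Po i ∪ {τ (i+1)} := by
        intro s hs
        rcases eq_or_lt_of_le hs.1.2 with h | h
        · right; simp [h]
        · left; exact ⟨hs, hs.1.1, h⟩
      calc volume (Pc i δ) ≤ volume (Po i) + volume {τ (i+1)} :=
        (measure_mono hsub).trans (measure_union_le _ _)
      _ = volume (Po i) := by rw [Real.volume_singleton, add_zero]
    have hTW : ({u : ℝ | |f u - x| ≤ δ} ∩ Icc 0 H) ⊆ (⋃ i ∈ Finset.range (k+1), Po i) ∪ {H} := by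
      rintro s ⟨hfs, hs0, hsH⟩
      rcases eq_or_lt_of_le hsH with h | h
      · right; simp [h]
      · left
        obtain ⟨i, hik, h1, h2⟩ := cover s hs0 h
        simp only [mem_iUnion, Finset.mem_range, exists_prop]
        refine ⟨i, Nat.lt_succ_of_le hik, ⟨⟨⟨h1, h2.le⟩, ?_⟩, h1, h2⟩⟩
        rw [← hfg i hik s ⟨h1, h2⟩]
        exact hfs
    have hWT : (⋃ i ∈ Finset.range (k+1), Po i) ⊆ ({u : ℝ | |f u - x| ≤ δ} ∩ Icc 0 H) := by
      intro s hs
      simp only [mem_iUnion, Finset.mem_range, exists_prop] at hs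
      obtain ⟨i, hik1, hsi⟩ := hs
      have hik : i ≤ k := Nat.lt_succ_iff.1 hik1
      refine ⟨?_, hτpos i (hik.trans (Nat.le_succ k)) |>.trans hsi.2.1, hsi.2.2.le.trans
        (hτleH (i+1) (Nat.succ_le_succ hik))⟩
      show |f s - x| ≤ δ
      rw [hfg i hik s hsi.2]
      exact hsi.1.2
    have hWvol : volume (⋃ i ∈ Finset.range (k+1), Po i) =
        ∑ i ∈ Finset.range (k+1), volume (Po i) :=
      measure_biUnion_finset hPodisj hPomeas
    have hsum_eq : ∑ i ∈ Finset.range (k+1), volume (Po i) =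
        ∑ i ∈ Finset.range (k+1), volume (Pc i δ) :=
      Finset.sum_congr rfl (fun i hi => hPoPc i (Nat.lt_succ_iff.1 (Finset.mem_range.1 hi)))
    apply le_antisymm
    · have h1 : volume ({u : ℝ | |f u - x| ≤ δ} ∩ Icc 0 H) ≤
          volume (⋃ i ∈ Finset.range (k+1), Po i) + volume ({H} : Set ℝ) :=
        (measure_mono hTW).trans (measure_union_le _ _)
      rw [Real.volume_singleton, add_zero, hWvol, hsum_eq] at h1
      exact h1
    · rw [← hsum_eq, ← hWvol]
      exact measure_mono hWT
  refine ⟨hCfin, hCle, ?_, ?_⟩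
  · -- volume bound
    intro δ hδ0 hδε
    rw [hdecomp δ]
    have hb1 : ∑ i ∈ Finset.range (k+1), volume (Pc i δ) ≤
        ∑ _i ∈ Finset.range (k+1), ENNReal.ofReal (2*δ/c) := by
      apply Finset.sum_le_sum
      intro i hi
      exact (hpiece i (Nat.lt_succ_iff.1 (Finset.mem_range.1 hi))).2.1 δ hδ0 hδε
    have hb2 : ∑ _i ∈ Finset.range (k+1), ENNReal.ofReal (2*δ/c) =
        ENNReal.ofReal (((k:ℝ)+1) * (2*δ/c)) := by
      rw [Finset.sum_const, Finset.card_range, nsmul_eq_mul,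
        ENNReal.ofReal_mul (by positivity : (0:ℝ) ≤ (k:ℝ)+1)]
      congr 1
      rw [show ((k:ℝ)+1) = ((k+1 : ℕ) : ℝ) by push_cast; ring, ENNReal.ofReal_natCast]
    exact hb1.trans (le_of_eq hb2)
  · -- limit
    have hptwise : ∀ δ : ℝ, (volume ({u : ℝ | |f u - x| ≤ δ} ∩ Icc 0 H)).toReal / (2*δ) =
        ∑ i ∈ Finset.range (k+1), (volume (Pc i δ)).toReal / (2*δ) := by
      intro δ
      rw [hdecomp δ, ENNReal.toReal_sum (fun i hi =>
        (hPcfin i (Nat.lt_succ_iff.1 (Finset.mem_range.1 hi)) δ).ne), Finset.sum_div]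
    have hsum : Tendsto (fun δ : ℝ => ∑ i ∈ Finset.range (k+1), (volume (Pc i δ)).toReal / (2*δ))
        (𝓝[>] (0:ℝ)) (𝓝 (∑ i ∈ Finset.range (k+1), ((Z i).ncard : ℝ) / |r x|)) := by
      apply tendsto_finset_sum
      intro i hi
      have hik := Nat.lt_succ_iff.1 (Finset.mem_range.1 hi)
      have h := (hpiece i hik).2.2
      rw [hZeq i hik] at h
      exact h
    have hval : ∑ i ∈ Finset.range (k+1), ((Z i).ncard : ℝ) / |r x| =
        ((crossSet H x f).ncard : ℝ) / |r x| := by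
      rw [hCcard, ← Finset.sum_div]
      congr 1
      push_cast
      ring
    rw [← hval]
    exact Tendsto.congr (fun δ => (hptwise δ).symm) hsum

private lemma p_nonneg {Ω : Type*} [MeasurableSpace Ω] (P : Measure Ω) [IsProbabilityMeasure P]
    (X : Ω → ℝ → ℝ) (p : ℝ → ℝ → ℝ) {H x η : ℝ}
    (hlaw : ∀ t ∈ Icc (0:ℝ) H, ∀ A : Set ℝ, MeasurableSet A →
      P {ω | X ω t ∈ A} = ENNReal.ofReal (∫ y in A, p t y))
    (hpcont : ContinuousOn (Function.uncurry p) (Icc (0:ℝ) H ×ˢ Ioo (x - η) (x + η)))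
    {s : ℝ} (hs : s ∈ Icc (0:ℝ) H) :
    ∀ y0 ∈ Ioo (x - η) (x + η), 0 ≤ p s y0 := by
  -- integrability and total mass
  have huniv := hlaw s hs univ MeasurableSet.univ
  rw [Measure.restrict_univ] at huniv
  simp only [mem_univ, setOf_true, measure_univ] at huniv
  have hint : Integrable (fun y => p s y) := by
    by_contra h
    rw [integral_undef h] at huniv
    simp at huniv
  have htot : (∫ y, p s y) = 1 := by
    symm at huniv
    rwa [ENNReal.ofReal_eq_one] at huniv
  intro y0 hy0
  by_contra hneg
  push_neg at hneg
  have hcy : ContinuousOn (fun y => p s y) (Ioo (x - η) (x + η)) := by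
    apply hpcont.comp (Continuous.continuousOn (by fun_prop : Continuous fun y : ℝ => (s, y)))
    exact fun y hy => ⟨hs, hy⟩
  have hca : ContinuousAt (fun y => p s y) y0 := hcy.continuousAt (isOpen_Ioo.mem_nhds hy0)
  have hev : ∀ᶠ y in 𝓝 y0, p s y < p s y0 / 2 :=
    hca.eventually_lt_const (by linarith)
  obtain ⟨γ, hγ0, hγ⟩ := Metric.eventually_nhds_iff.1 hev
  set J := Icc (y0 - γ/2) (y0 + γ/2) with hJdef
  have hJsub : ∀ y ∈ J, p s y < p s y0 / 2 := by
    intro y hy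
    apply hγ
    rw [Real.dist_eq, abs_sub_lt_iff]
    exact ⟨by linarith [hy.2], by linarith [hy.1]⟩
  have hJmeas : MeasurableSet J := measurableSet_Icc
  have hvolJ : (volume J).toReal = γ := by
    rw [hJdef, Real.volume_Icc, ENNReal.toReal_ofReal (by linarith)]
    ring
  have hJle : ∫ y in J, p s y ≤ γ * (p s y0 / 2) := by
    have hmono : ∫ y in J, p s y ≤ ∫ y in J, (fun _ => p s y0 / 2) y :=
      setIntegral_mono_on hint.integrableOn (integrableOn_const (by
        rw [hJdef, Real.volume_Icc]; exact ENNReal.ofReal_ne_top)) hJmeas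
        (fun y hy => (hJsub y hy).le)
    have hconst : ∫ y in J, (fun _ => p s y0 / 2) y = γ * (p s y0 / 2) := by
      rw [setIntegral_const, measureReal_def, hvolJ, smul_eq_mul]
    linarith
  have hJneg : ∫ y in J, p s y < 0 := lt_of_le_of_lt hJle (by nlinarith)
  have hsplit : (∫ y in J, p s y) + (∫ y in Jᶜ, p s y) = 1 := by
    rw [integral_add_compl hJmeas hint, htot]
  have hcompl : 1 < ∫ y in Jᶜ, p s y := by linarith
  have hPc := hlaw s hs Jᶜ hJmeas.compl
  have : (1:ℝ≥0∞) < P {ω | X ω s ∈ Jᶜ} := by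
    rw [hPc]
    exact ENNReal.one_lt_ofReal.2 hcompl
  exact absurd prob_le_one (not_le.mpr this)

private lemma q_cont {p : ℝ → ℝ → ℝ} {H x η : ℝ}
    (hpcont : ContinuousOn (Function.uncurry p) (Icc (0:ℝ) H ×ˢ Ioo (x - η) (x + η)))
    {δ : ℝ} (hδ0 : 0 < δ) (hδη : δ < η) :
    ContinuousOn (fun s => ∫ y in Icc (x-δ) (x+δ), p s y) (Icc (0:ℝ) H) := by
  have hJsub : Icc (x-δ) (x+δ) ⊆ Ioo (x - η) (x + η) :=
    fun y hy => ⟨by linarith [hy.1], by linarith [hy.2]⟩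
  intro s₀ hs₀
  have hKcomp : IsCompact (Icc (0:ℝ) H ×ˢ Icc (x-δ) (x+δ)) :=
    isCompact_Icc.prod isCompact_Icc
  have hpK : ContinuousOn (Function.uncurry p) (Icc (0:ℝ) H ×ˢ Icc (x-δ) (x+δ)) :=
    hpcont.mono (prod_mono_right hJsub)
  obtain ⟨M, hM⟩ := hKcomp.exists_bound_of_continuousOn hpK
  apply continuousWithinAt_of_dominated (bound := fun _ => M)
  · filter_upwards [self_mem_nhdsWithin] with s hsmem
    have : ContinuousOn (fun y => p s y) (Icc (x-δ) (x+δ)) := by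
      apply hpcont.comp (Continuous.continuousOn (by fun_prop : Continuous fun y : ℝ => (s, y)))
      exact fun y hy => ⟨hsmem, hJsub hy⟩
    exact this.aestronglyMeasurable measurableSet_Icc
  · filter_upwards [self_mem_nhdsWithin] with s hsmem
    filter_upwards [ae_restrict_mem measurableSet_Icc] with y hy
    exact hM (s, y) ⟨hsmem, hy⟩
  · exact integrable_const M
  · filter_upwards [ae_restrict_mem measurableSet_Icc] with y hy
    have : ContinuousOn (fun s => p s y) (Icc (0:ℝ) H) := by
      apply hpcont.comp (Continuous.continuousOn (by fun_prop : Continuous fun s : ℝ => (s, y)))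
      exact fun t ht => ⟨ht, hJsub hy⟩
    exact this s₀ hs₀

/-- **Dalmao–Mordecki formula (Corollary 3).** Under integrability of the number of jumps
and continuity of the densities near the level `x`, the number of continuous crossings
`c_x(H)` and the local time `l_x(H)` are integrable and
`E[c_x(H)] = |r(x)| E[l_x(H)] = |r(x)| ∫₀^H p(s,x) ds`. -/
theorem dalmao_mordecki_formula
    {Ω : Type*} [MeasurableSpace Ω] (P : Measure Ω) [IsProbabilityMeasure P]
    (H x : ℝ) (hH : 0 < H)
    (r : ℝ → ℝ) (hr : ContDiff ℝ 1 r) (hrx : r x ≠ 0)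
    (X : Ω → ℝ → ℝ) (hX : Measurable (Function.uncurry X))
    (N : Ω → ℕ) (hN : Measurable N) (hNint : Integrable (fun ω => (N ω : ℝ)) P)
    (hpath : ∀ᵐ ω ∂P, ∃ (τ : ℕ → ℝ) (g : ℕ → ℝ → ℝ),
      τ 0 = 0 ∧ τ (N ω + 1) = H ∧ (∀ i ≤ N ω, τ i < τ (i+1)) ∧
      (∀ i ≤ N ω, ∀ s ∈ Icc (τ i) (τ (i+1)),
        HasDerivWithinAt (g i) (r (g i s)) (Icc (τ i) (τ (i+1))) s) ∧
      (∀ i ≤ N ω, ∀ s ∈ Ico (τ i) (τ (i+1)), X ω s = g i s) ∧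
      X ω H = g (N ω) H ∧
      (∀ i ≤ N ω, g i (τ i) ≠ x ∧ g i (τ (i+1)) ≠ x))
    (p : ℝ → ℝ → ℝ)
    (hlaw : ∀ t ∈ Icc (0:ℝ) H, ∀ A : Set ℝ, MeasurableSet A →
      P {ω | X ω t ∈ A} = ENNReal.ofReal (∫ y in A, p t y))
    (hpcont : ∃ η > (0:ℝ),
      ContinuousOn (Function.uncurry p) (Icc (0:ℝ) H ×ˢ Ioo (x - η) (x + η))) :
    ∃ l : Ω → ℝ,
      (∀ᵐ ω ∂P,
        Tendsto
          (fun δ : ℝ => (1 / (2 * δ)) *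
            ∫ s in Icc (0:ℝ) H, ({u : ℝ | |X ω u - x| ≤ δ}.indicator (fun _ => (1:ℝ)) s))
          (𝓝[>] (0:ℝ)) (𝓝 (l ω))) ∧
      Integrable (fun ω => ((crossSet H x (X ω)).ncard : ℝ)) P ∧
      Integrable l P ∧
      (∫ ω, ((crossSet H x (X ω)).ncard : ℝ) ∂P) = |r x| * (∫ ω, l ω ∂P) ∧
      (∫ ω, l ω ∂P) = ∫ s in (0:ℝ)..H, p s x := by
  classical
  obtain ⟨η, hη, hpc⟩ := hpcont
  have hrxpos : 0 < |r x| := abs_pos.2 hrx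
  -- choose a band around x where r is bounded away from 0 with constant sign
  have hcontr : Continuous r := hr.continuous
  have hevr : ∀ᶠ y in 𝓝 x, |r y - r x| < |r x| / 2 := by
    have h1 : Tendsto r (𝓝 x) (𝓝 (r x)) := hcontr.tendsto x
    have h2 := Metric.tendsto_nhds.1 h1 (|r x|/2) (by positivity)
    simpa [Real.dist_eq] using h2
  obtain ⟨ρ0, hρ00, hball⟩ := Metric.eventually_nhds_iff.1 hevr
  set ε : ℝ := min (ρ0/2) (η/2) with hεdef
  have hε : 0 < ε := lt_min (by positivity) (by positivity)
  have hεcontrol : ∀ y : ℝ, |y - x| ≤ ε → |r y - r x| < |r x|/2 := by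
    intro y hy
    apply hball
    rw [Real.dist_eq]
    calc |y - x| ≤ ε := hy
    _ ≤ ρ0/2 := min_le_left _ _
    _ < ρ0 := by linarith
  have hεη : ε < η := lt_of_le_of_lt (min_le_right _ _) (by linarith)
  set c : ℝ := |r x|/2 with hcdef
  have hc : 0 < c := by positivity
  have hband : (∀ y, |y - x| ≤ ε → c ≤ r y) ∨ (∀ y, |y - x| ≤ ε → r y ≤ -c) := by
    rcases lt_or_gt_of_ne hrx with hneg | hpos
    · right
      intro y hy
      have h1 := abs_lt.1 (hεcontrol y hy)
      have hcval : c = -(r x)/2 := by rw [hcdef, abs_of_neg hneg]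
      linarith [h1.2]
    · left
      intro y hy
      have h1 := abs_lt.1 (hεcontrol y hy)
      have hcval : c = r x/2 := by rw [hcdef, abs_of_pos hpos]
      linarith [h1.1]
  -- a.e. pathwise conclusions
  have hgood : ∀ᵐ ω ∂P, (crossSet H x (X ω)).Finite ∧
      (crossSet H x (X ω)).ncard ≤ N ω + 1 ∧
      (∀ δ : ℝ, 0 < δ → δ ≤ ε →
        volume ({u : ℝ | |X ω u - x| ≤ δ} ∩ Icc 0 H) ≤
          ENNReal.ofReal (((N ω : ℝ)+1) * (2*δ/c))) ∧
      Tendsto (fun δ : ℝ => (volume ({u : ℝ | |X ω u - x| ≤ δ} ∩ Icc 0 H)).toReal / (2*δ))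
        (𝓝[>] (0:ℝ)) (𝓝 ((crossSet H x (X ω)).ncard / |r x|)) := by
    filter_upwards [hpath] with ω hω
    obtain ⟨τ, g, hτ0, hτk, hτ, hderiv, hfg, hfH, hend⟩ := hω
    exact pathMain hc hε hH hband (X ω) (N ω) τ g hτ0 hτk hτ hderiv hfg hfH hend
  set l : Ω → ℝ := fun ω => ((crossSet H x (X ω)).ncard : ℝ) / |r x| with hldef
  -- measurability infrastructure
  have hXm : ∀ ω, Measurable (X ω) := fun ω => hX.comp measurable_prodMk_left
  have hSm : ∀ (ω : Ω) (δ : ℝ), MeasurableSet {u : ℝ | |X ω u - x| ≤ δ} := fun ω δ =>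
    measurableSet_le (((hXm ω).sub measurable_const).abs) measurable_const
  have hΦeq : ∀ (δ : ℝ) (ω : Ω), (1 / (2 * δ)) *
      ∫ s in Icc (0:ℝ) H, ({u : ℝ | |X ω u - x| ≤ δ}.indicator (fun _ => (1:ℝ)) s) =
      (volume ({u : ℝ | |X ω u - x| ≤ δ} ∩ Icc 0 H)).toReal / (2*δ) := by
    intro δ ω
    have hind : ({u : ℝ | |X ω u - x| ≤ δ}.indicator (fun _ => (1:ℝ))) =
        ({u : ℝ | |X ω u - x| ≤ δ}.indicator 1) := rfl
    rw [hind, integral_indicator_one (hSm ω δ), measureReal_def, Measure.restrict_apply (hSm ω δ), one_div,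
      inv_mul_eq_div]
  set ν : Measure ℝ := volume.restrict (Icc (0:ℝ) H) with hνdef
  haveI hνfin : IsFiniteMeasure ν := by
    constructor
    rw [hνdef, Measure.restrict_apply_univ, Real.volume_Icc]
    exact ENNReal.ofReal_lt_top
  have hAm : ∀ δ : ℝ, MeasurableSet {q : Ω × ℝ | |Function.uncurry X q - x| ≤ δ} := fun δ =>
    measurableSet_le ((hX.sub measurable_const).abs) measurable_const
  have hνm : ∀ δ : ℝ, Measurable (fun ω =>
      ν (Prod.mk ω ⁻¹' {q : Ω × ℝ | |Function.uncurry X q - x| ≤ δ})) := fun δ =>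
    measurable_measure_prodMk_left (hAm δ)
  have hpre : ∀ (δ : ℝ) (ω : Ω),
      Prod.mk ω ⁻¹' {q : Ω × ℝ | |Function.uncurry X q - x| ≤ δ} =
      {u : ℝ | |X ω u - x| ≤ δ} := fun δ ω => rfl
  have hΦm : ∀ δ : ℝ, Measurable (fun ω =>
      (volume ({u : ℝ | |X ω u - x| ≤ δ} ∩ Icc 0 H)).toReal / (2*δ)) := by
    intro δ
    have heq : (fun ω => (volume ({u : ℝ | |X ω u - x| ≤ δ} ∩ Icc 0 H)).toReal / (2*δ)) =
        fun ω => (ν (Prod.mk ω ⁻¹' {q : Ω × ℝ | |Function.uncurry X q - x| ≤ δ})).toReal / (2*δ) := by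
      funext ω
      rw [hpre δ ω, hνdef, Measure.restrict_apply (hSm ω δ)]
    rw [heq]
    exact ((hνm δ).ennreal_toReal).div_const _
  -- the sequence
  set δseq : ℕ → ℝ := fun n => ε / ((n:ℝ)+1) with hδseqdef
  have hδseqpos : ∀ n, 0 < δseq n := by
    intro n
    have : (0:ℝ) < (n:ℝ)+1 := by positivity
    exact div_pos hε this
  have hδseqle : ∀ n, δseq n ≤ ε := by
    intro n
    apply div_le_self hε.le
    have := Nat.cast_nonneg (α := ℝ) n
    linarith
  have hδ0lim : Tendsto δseq atTop (𝓝 (0:ℝ)) := by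
    have h1 := tendsto_one_div_add_atTop_nhds_zero_nat (𝕜 := ℝ)
    have h2 := h1.const_mul ε
    rw [mul_zero] at h2
    refine h2.congr (fun n => ?_)
    rw [hδseqdef, mul_one_div]
  have hδseqlim : Tendsto δseq atTop (𝓝[>] (0:ℝ)) :=
    tendsto_nhdsWithin_of_tendsto_nhds_of_eventually_within _ hδ0lim
      (Eventually.of_forall (fun n => hδseqpos n))
  have hlim_ae : ∀ᵐ ω ∂P, Tendsto (fun n =>
      (volume ({u : ℝ | |X ω u - x| ≤ δseq n} ∩ Icc 0 H)).toReal / (2*δseq n)) atTop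
      (𝓝 (l ω)) := by
    filter_upwards [hgood] with ω hω
    exact (hω.2.2.2).comp hδseqlim
  have hlaem : AEStronglyMeasurable l P :=
    (aemeasurable_of_tendsto_metrizable_ae atTop (fun n => (hΦm (δseq n)).aemeasurable)
      hlim_ae).aestronglyMeasurable
  -- bounds
  have hGint : Integrable (fun ω => ((N ω : ℝ)+1)/c) P :=
    (hNint.add (integrable_const 1)).div_const c
  have hΦle : ∀ᵐ ω ∂P, ∀ δ : ℝ, 0 < δ → δ ≤ ε →
      (volume ({u : ℝ | |X ω u - x| ≤ δ} ∩ Icc 0 H)).toReal / (2*δ) ≤ ((N ω : ℝ)+1)/c := by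
    filter_upwards [hgood] with ω hω
    intro δ h1 h2
    have hv := hω.2.2.1 δ h1 h2
    have htr : (volume ({u : ℝ | |X ω u - x| ≤ δ} ∩ Icc 0 H)).toReal ≤
        ((N ω : ℝ)+1) * (2*δ/c) := by
      have := ENNReal.toReal_mono ENNReal.ofReal_ne_top hv
      rwa [ENNReal.toReal_ofReal (by positivity)] at this
    calc (volume ({u : ℝ | |X ω u - x| ≤ δ} ∩ Icc 0 H)).toReal / (2*δ)
        ≤ (((N ω : ℝ)+1) * (2*δ/c)) / (2*δ) := by gcongr
    _ = ((N ω : ℝ)+1)/c := by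
        field_simp
  have hlbound : ∀ᵐ ω ∂P, ‖l ω‖ ≤ ((N ω : ℝ)+1)/c := by
    filter_upwards [hgood] with ω hω
    have hcard : ((crossSet H x (X ω)).ncard : ℝ) ≤ (N ω : ℝ) + 1 := by
      have := hω.2.1
      push_cast
      exact_mod_cast this
    rw [hldef, Real.norm_eq_abs, abs_of_nonneg (by positivity)]
    rw [hcdef]
    rw [div_le_div_iff₀ hrxpos (by positivity)]
    have h1 : (0:ℝ) ≤ ((crossSet H x (X ω)).ncard : ℝ) := by positivity
    nlinarith
  have hlint : Integrable l P := Integrable.mono' hGint hlaem hlbound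
  have hceq : (fun ω => ((crossSet H x (X ω)).ncard : ℝ)) = fun ω => |r x| * l ω := by
    funext ω
    rw [hldef]
    field_simp
  refine ⟨l, ?_, ?_, hlint, ?_, ?_⟩
  · -- a.e. convergence of the occupation quotients
    filter_upwards [hgood] with ω hω
    exact Tendsto.congr (fun δ => (hΦeq δ ω).symm) hω.2.2.2
  · rw [hceq]
    exact hlint.const_mul _
  · rw [hceq]
    exact integral_const_mul _ _
  · -- the density formula
    have key : ∀ δ : ℝ, 0 < δ → δ ≤ ε →
        ∫ ω, (volume ({u : ℝ | |X ω u - x| ≤ δ} ∩ Icc 0 H)).toReal / (2*δ) ∂P =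
        ∫ s in Icc (0:ℝ) H, (∫ y in Icc (x-δ) (x+δ), p s y) / (2*δ) := by
      intro δ hδ0 hδε
      have hδη : δ < η := lt_of_le_of_lt hδε hεη
      have hqint : IntegrableOn (fun s => ∫ y in Icc (x-δ) (x+δ), p s y) (Icc (0:ℝ) H) :=
        (q_cont hpc hδ0 hδη).integrableOn_Icc
      have hqnn : 0 ≤ᵐ[ν] fun s => ∫ y in Icc (x-δ) (x+δ), p s y := by
        rw [hνdef]
        filter_upwards [ae_restrict_mem measurableSet_Icc] with s hs
        apply setIntegral_nonneg measurableSet_Icc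
        intro y hy
        exact p_nonneg P X p hlaw hpc hs y ⟨by linarith [hy.1], by linarith [hy.2]⟩
      have e0 : (fun ω => (volume ({u : ℝ | |X ω u - x| ≤ δ} ∩ Icc 0 H)).toReal / (2*δ)) =
          fun ω => (ν (Prod.mk ω ⁻¹' {q : Ω × ℝ | |Function.uncurry X q - x| ≤ δ})).toReal / (2*δ) := by
        funext ω
        rw [hpre δ ω, hνdef, Measure.restrict_apply (hSm ω δ)]
      rw [e0, integral_div]
      have e1 : ∫ ω, (ν (Prod.mk ω ⁻¹' {q : Ω × ℝ | |Function.uncurry X q - x| ≤ δ})).toReal ∂P =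
          (∫⁻ ω, ν (Prod.mk ω ⁻¹' {q : Ω × ℝ | |Function.uncurry X q - x| ≤ δ}) ∂P).toReal := by
        apply integral_toReal (hνm δ).aemeasurable
        exact Eventually.of_forall (fun ω => measure_lt_top ν _)
      rw [e1]
      have e2 : ∫⁻ ω, ν (Prod.mk ω ⁻¹' {q : Ω × ℝ | |Function.uncurry X q - x| ≤ δ}) ∂P =
          (P.prod ν) {q : Ω × ℝ | |Function.uncurry X q - x| ≤ δ} :=
        (Measure.prod_apply (hAm δ)).symm
      have e3 : (P.prod ν) {q : Ω × ℝ | |Function.uncurry X q - x| ≤ δ} =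
          ∫⁻ s, P ((fun ω => (ω, s)) ⁻¹' {q : Ω × ℝ | |Function.uncurry X q - x| ≤ δ}) ∂ν :=
        Measure.prod_apply_symm (hAm δ)
      have e4 : ∫⁻ s, P ((fun ω => (ω, s)) ⁻¹' {q : Ω × ℝ | |Function.uncurry X q - x| ≤ δ}) ∂ν =
          ∫⁻ s, ENNReal.ofReal (∫ y in Icc (x-δ) (x+δ), p s y) ∂ν := by
        rw [hνdef]
        apply lintegral_congr_ae
        filter_upwards [ae_restrict_mem measurableSet_Icc] with s hs
        have hset : ((fun ω => (ω, s)) ⁻¹' {q : Ω × ℝ | |Function.uncurry X q - x| ≤ δ}) =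
            {ω | X ω s ∈ Icc (x-δ) (x+δ)} := by
          ext ω
          simp only [mem_preimage, mem_setOf_eq, Function.uncurry, mem_Icc]
          rw [abs_le]
          constructor <;> intro h <;> constructor <;> linarith [h.1, h.2]
        rw [hset, hlaw s hs _ measurableSet_Icc]
      have e5 : ∫⁻ s, ENNReal.ofReal (∫ y in Icc (x-δ) (x+δ), p s y) ∂ν =
          ENNReal.ofReal (∫ s, (∫ y in Icc (x-δ) (x+δ), p s y) ∂ν) :=
        (ofReal_integral_eq_lintegral_ofReal hqint hqnn).symm
      rw [e2, e3, e4, e5, ENNReal.toReal_ofReal (integral_nonneg_of_ae hqnn)]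
      rw [← integral_div]
    have hDCT : Tendsto (fun n => ∫ ω,
        (volume ({u : ℝ | |X ω u - x| ≤ δseq n} ∩ Icc 0 H)).toReal / (2*δseq n) ∂P) atTop
        (𝓝 (∫ ω, l ω ∂P)) := by
      apply tendsto_integral_of_dominated_convergence (bound := fun ω => ((N ω : ℝ)+1)/c)
        (fun n => (hΦm (δseq n)).aestronglyMeasurable) hGint ?_ hlim_ae
      intro n
      filter_upwards [hΦle] with ω hω
      rw [Real.norm_eq_abs, abs_of_nonneg (div_nonneg ENNReal.toReal_nonneg
        (by linarith [hδseqpos n]))]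
      exact hω (δseq n) (hδseqpos n) (hδseqle n)
    have hkeyseq : (fun n => ∫ ω,
        (volume ({u : ℝ | |X ω u - x| ≤ δseq n} ∩ Icc 0 H)).toReal / (2*δseq n) ∂P)
        = fun n => ∫ s in Icc (0:ℝ) H,
            (∫ y in Icc (x - δseq n) (x + δseq n), p s y) / (2*δseq n) :=
      funext fun n => key (δseq n) (hδseqpos n) (hδseqle n)
    rw [hkeyseq] at hDCT
    -- uniform continuity of p near the level x
    have hKsub : Icc (x-ε) (x+ε) ⊆ Ioo (x-η) (x+η) :=
      fun y hy => ⟨by linarith [hy.1], by linarith [hy.2]⟩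
    have hxK : x ∈ Icc (x-ε) (x+ε) := ⟨by linarith, by linarith⟩
    have hpxcont : ContinuousOn (fun s => p s x) (Icc (0:ℝ) H) := by
      apply hpc.comp (Continuous.continuousOn (by fun_prop : Continuous fun s : ℝ => (s, x)))
      exact fun t ht => ⟨ht, hKsub hxK⟩
    have hpxint : IntegrableOn (fun s => p s x) (Icc (0:ℝ) H) := hpxcont.integrableOn_Icc
    have hUC := (isCompact_Icc.prod
      (isCompact_Icc : IsCompact (Icc (x-ε) (x+ε)))).uniformContinuousOn_of_continuous
      (hpc.mono (prod_mono_right hKsub))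
    rw [Metric.uniformContinuousOn_iff] at hUC
    have hplim : Tendsto (fun n => ∫ s in Icc (0:ℝ) H,
        (∫ y in Icc (x - δseq n) (x + δseq n), p s y) / (2*δseq n))
        atTop (𝓝 (∫ s in Icc (0:ℝ) H, p s x)) := by
      rw [Metric.tendsto_atTop]
      intro θ hθ
      obtain ⟨ρ, hρ0, hρ⟩ := hUC (θ/(2*(H+1))) (by positivity)
      obtain ⟨M, hM⟩ := eventually_atTop.1 (hδ0lim.eventually_lt_const hρ0)
      refine ⟨M, fun n hn => ?_⟩
      have hδρ : δseq n < ρ := hM n hn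
      have hδ0 : 0 < δseq n := hδseqpos n
      have hδε : δseq n ≤ ε := hδseqle n
      have hδη : δseq n < η := lt_of_le_of_lt hδε hεη
      set δ := δseq n with hδdef
      have hqintδ : IntegrableOn (fun s => ∫ y in Icc (x-δ) (x+δ), p s y) (Icc (0:ℝ) H) :=
        (q_cont hpc hδ0 hδη).integrableOn_Icc
      have hJsub : Icc (x-δ) (x+δ) ⊆ Icc (x-ε) (x+ε) :=
        Icc_subset_Icc (by linarith) (by linarith)
      have hvolJfin : volume (Icc (x-δ) (x+δ)) < ⊤ := by
        rw [Real.volume_Icc]; exact ENNReal.ofReal_lt_top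
      have hvolJ : (volume (Icc (x-δ) (x+δ))).toReal = 2*δ := by
        rw [Real.volume_Icc, ENNReal.toReal_ofReal (by linarith)]; ring
      -- pointwise estimate
      have hptw : ∀ s ∈ Icc (0:ℝ) H,
          ‖(∫ y in Icc (x-δ) (x+δ), p s y) / (2*δ) - p s x‖ ≤ θ/(2*(H+1)) := by
        intro s hs
        have hpsint : IntegrableOn (fun y => p s y) (Icc (x-δ) (x+δ)) := by
          apply ContinuousOn.integrableOn_Icc
          apply hpc.comp (Continuous.continuousOn
            (by fun_prop : Continuous fun y : ℝ => (s, y)))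
          exact fun y hy => ⟨hs, hKsub (hJsub hy)⟩
        have hconst : ∫ _y in Icc (x-δ) (x+δ), p s x = (2*δ) * p s x := by
          rw [setIntegral_const, measureReal_def, hvolJ, smul_eq_mul]
        have hdiff : (∫ y in Icc (x-δ) (x+δ), p s y) - (2*δ) * p s x =
            ∫ y in Icc (x-δ) (x+δ), (p s y - p s x) := by
          rw [integral_sub hpsint (integrableOn_const hvolJfin.ne), hconst]
        have hbnd : ‖∫ y in Icc (x-δ) (x+δ), (p s y - p s x)‖ ≤
            (θ/(2*(H+1))) * (volume (Icc (x-δ) (x+δ))).toReal := by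
          apply norm_setIntegral_le_of_norm_le_const hvolJfin
          intro y hy
          have hd : dist ((s, y) : ℝ × ℝ) ((s, x) : ℝ × ℝ) < ρ := by
            rw [Prod.dist_eq]
            apply max_lt
            · rw [dist_self]; exact hρ0
            · rw [Real.dist_eq]
              have h1 := hy.1; have h2 := hy.2
              rw [abs_sub_lt_iff]
              constructor <;> linarith
          have := hρ (s, y) ⟨hs, hJsub hy⟩ (s, x) ⟨hs, hxK⟩ hd
          rw [Real.dist_eq] at this
          exact (le_of_lt this).trans_eq (by norm_num)
        have h2δ : (0:ℝ) < 2*δ := by linarith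
        have hre : (∫ y in Icc (x-δ) (x+δ), p s y) / (2*δ) - p s x =
            ((∫ y in Icc (x-δ) (x+δ), p s y) - (2*δ) * p s x) / (2*δ) := by
          field_simp
        rw [hre, hdiff]
        rw [norm_div, Real.norm_eq_abs (2*δ), abs_of_pos h2δ]
        rw [div_le_iff₀ h2δ]
        calc ‖∫ y in Icc (x-δ) (x+δ), (p s y - p s x)‖
            ≤ (θ/(2*(H+1))) * (volume (Icc (x-δ) (x+δ))).toReal := hbnd
        _ = θ/(2*(H+1)) * (2*δ) := by rw [hvolJ]
      -- conclude
      have hout : ‖(∫ s in Icc (0:ℝ) H, (∫ y in Icc (x-δ) (x+δ), p s y) / (2*δ)) -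
          ∫ s in Icc (0:ℝ) H, p s x‖ ≤ (θ/(2*(H+1))) * H := by
        rw [← integral_sub (hqintδ.div_const _) hpxint]
        have hvolH : (volume (Icc (0:ℝ) H)).toReal = H := by
          rw [Real.volume_Icc, ENNReal.toReal_ofReal (by linarith), sub_zero]
        calc ‖∫ s in Icc (0:ℝ) H, ((∫ y in Icc (x-δ) (x+δ), p s y) / (2*δ) - p s x)‖
            ≤ (θ/(2*(H+1))) * (volume (Icc (0:ℝ) H)).toReal := by
              apply norm_setIntegral_le_of_norm_le_const
                (by rw [Real.volume_Icc]; exact ENNReal.ofReal_lt_top)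
              exact hptw
        _ = (θ/(2*(H+1))) * H := by rw [hvolH]
      rw [Real.dist_eq]
      calc |(∫ s in Icc (0:ℝ) H, (∫ y in Icc (x-δ) (x+δ), p s y) / (2*δ)) -
          ∫ s in Icc (0:ℝ) H, p s x| ≤ (θ/(2*(H+1))) * H := hout
      _ < θ := by
          rw [div_mul_eq_mul_div, div_lt_iff₀ (by positivity)]
          nlinarith
    have hfinal : ∫ ω, l ω ∂P = ∫ s in Icc (0:ℝ) H, p s x :=
      tendsto_nhds_unique hDCT hplim
    rw [hfinal, intervalIntegral.integral_of_le hH.le]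
    exact integral_Icc_eq_integral_Ioc
end

section
/- Under the hypotheses of the Dalmao–Mordecki formula, assume in addition that the process is stationary in the sense that there is a single density q : ℝ → ℝ, continuous on a neighborhood of x, such that for every t ∈ [0,H] the law of X(t) has density q with respect to Lebesgue measure. Then the expected number of continuous crossings of the level x by X on [0,H] is E[c_x(H)] = H · |r(x)| · q(x). (Stationary case, one-dimensional Kac–Rice formula.) -/
open MeasureTheory Filter Set Topology
open scoped ENNReal

/-- If `g` has positive derivative within `s` at `t`, then nearby points of `s` on the right
have larger value and nearby points on the left smaller value. -/
lemma slope_sign {g : ℝ → ℝ} {s : Set ℝ} {t d : ℝ}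
    (hd : HasDerivWithinAt g d s t) (hpos : 0 < d) :
    ∃ ε > 0, ∀ p ∈ s, |p - t| < ε → ((t < p → g t < g p) ∧ (p < t → g p < g t)) := by
  have h := hasDerivWithinAt_iff_tendsto_slope.1 hd
  have h2 : ∀ᶠ p in 𝓝[s \ {t}] t, 0 < slope g t p :=
    h (Ioi_mem_nhds hpos)
  rw [eventually_nhdsWithin_iff] at h2
  rw [Metric.eventually_nhds_iff] at h2
  obtain ⟨ε, hε, hb⟩ := h2
  refine ⟨ε, hε, fun p hp hpe => ?_⟩
  constructor
  · intro hlt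
    have hps : p ∈ s \ {t} := ⟨hp, by simp [(ne_of_gt hlt)]⟩
    have h3 := hb (by simpa [Real.dist_eq] using hpe) hps
    rw [slope_def_field] at h3
    rcases div_pos_iff.1 h3 with ⟨h4, _⟩ | ⟨_, h5⟩
    · linarith
    · linarith
  · intro hlt
    have hps : p ∈ s \ {t} := ⟨hp, by simp [(ne_of_lt hlt)]⟩
    have h3 := hb (by simpa [Real.dist_eq] using hpe) hps
    rw [slope_def_field] at h3
    rcases div_pos_iff.1 h3 with ⟨_, h4⟩ | ⟨h5, _⟩
    · linarith
    · linarith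

/-- An integral curve of `r` attains a level `y` with `r y > 0` at most once. -/
lemma level_once_pos {r g : ℝ → ℝ} {a b y : ℝ}
    (hg : ∀ t ∈ Icc a b, HasDerivWithinAt g (r (g t)) (Icc a b) t)
    (hy : 0 < r y) :
    ∀ t1 ∈ Icc a b, ∀ t2 ∈ Icc a b, g t1 = y → g t2 = y → t1 = t2 := by
  have hcont : ContinuousOn g (Icc a b) := fun t ht => (hg t ht).continuousWithinAt
  suffices key : ∀ t1 ∈ Icc a b, ∀ t2 ∈ Icc a b, g t1 = y → g t2 = y → t1 < t2 → False by
    intro t1 h1 t2 h2 e1 e2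
    rcases lt_trichotomy t1 t2 with h | h | h
    · exact absurd (key t1 h1 t2 h2 e1 e2 h) (fun x => x)
    · exact h
    · exact absurd (key t2 h2 t1 h1 e2 e1 h) (fun x => x)
  intro t1 h1 t2 h2 e1 e2 hlt
  -- local sign at t2
  have hd2 : 0 < r (g t2) := by rw [e2]; exact hy
  obtain ⟨ε2, hε2, hb2⟩ := slope_sign (hg t2 h2) hd2
  -- pick s2 ∈ (t1, t2) close to t2 with g s2 < y
  set c := max t1 (t2 - ε2) with hc
  have hct2 : c < t2 := max_lt hlt (by linarith)
  set s2 := (c + t2) / 2 with hs2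
  have hcs2 : c < s2 := by rw [hs2]; linarith
  have hs2t2 : s2 < t2 := by rw [hs2]; linarith
  have ht1s2 : t1 < s2 := lt_of_le_of_lt (le_max_left _ _) hcs2
  have hs2m : s2 ∈ Icc a b := ⟨le_trans h1.1 (le_of_lt ht1s2), le_trans (le_of_lt hs2t2) h2.2⟩
  have hs2d : |s2 - t2| < ε2 := by
    rw [abs_sub_lt_iff]
    constructor
    · linarith
    · have : t2 - ε2 ≤ c := le_max_right _ _
      linarith
  have hgs2 : g s2 < y := by
    have := (hb2 s2 hs2m hs2d).2 hs2t2
    rw [e2] at this; exact this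
  -- the set of level points in [t1, s2]
  set S := Icc t1 s2 ∩ g ⁻¹' {y} with hS
  have hSne : S.Nonempty := ⟨t1, ⟨le_refl _, le_of_lt ht1s2⟩, by simpa using e1⟩
  have hSbdd : BddAbove S := BddAbove.mono (inter_subset_left) bddAbove_Icc
  have hSclosed : IsClosed S :=
    ContinuousOn.preimage_isClosed_of_isClosed
      (hcont.mono (Icc_subset_Icc h1.1 (le_trans (le_of_lt hs2t2) h2.2)))
      isClosed_Icc isClosed_singleton
  set u := sSup S with hu
  have hScomp : IsCompact S := IsCompact.of_isClosed_subset isCompact_Icc hSclosed inter_subset_left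
  have huS : u ∈ S := hScomp.sSup_mem hSne
  have hgu : g u = y := huS.2
  have hus2 : u < s2 := lt_of_le_of_ne huS.1.2 (fun h => by rw [h] at hgu; linarith)
  have hum : u ∈ Icc a b := ⟨le_trans h1.1 huS.1.1, le_trans (le_of_lt hus2) hs2m.2⟩
  -- local sign at u
  have hdu : 0 < r (g u) := by rw [hgu]; exact hy
  obtain ⟨ε1, hε1, hb1⟩ := slope_sign (hg u hum) hdu
  set c1 := min s2 (u + ε1) with hc1
  have huc1 : u < c1 := lt_min hus2 (by linarith)
  set s1 := (u + c1) / 2 with hs1def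
  have hus1 : u < s1 := by rw [hs1def]; linarith
  have hs1c1 : s1 < c1 := by rw [hs1def]; linarith
  have hs1s2 : s1 < s2 := lt_of_lt_of_le hs1c1 (min_le_left _ _)
  have hs1m : s1 ∈ Icc a b := ⟨le_trans hum.1 (le_of_lt hus1), le_trans (le_of_lt hs1s2) hs2m.2⟩
  have hs1d : |s1 - u| < ε1 := by
    rw [abs_sub_lt_iff]
    constructor
    · have : c1 ≤ u + ε1 := min_le_right _ _
      linarith
    · linarith
  have hgs1 : y < g s1 := by
    have := (hb1 s1 hs1m hs1d).1 hus1
    rw [hgu] at this; exact this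
  -- IVT between s1 and s2 gives a level point above u, contradiction with sSup
  have hsub : uIcc s1 s2 ⊆ Icc a b := by
    rw [uIcc_of_le (le_of_lt hs1s2)]
    exact Icc_subset_Icc hs1m.1 hs2m.2
  have hivt := intermediate_value_uIcc (hcont.mono hsub)
  have hymem : y ∈ uIcc (g s1) (g s2) := by
    rw [uIcc_of_ge (by linarith : g s2 ≤ g s1)]
    exact ⟨le_of_lt hgs2, le_of_lt hgs1⟩
  obtain ⟨t, htm, hgt⟩ := hivt hymem
  rw [uIcc_of_le (le_of_lt hs1s2)] at htm
  have htS : t ∈ S := ⟨⟨le_trans huS.1.1 (le_trans (le_of_lt hus1) htm.1), htm.2⟩, by simpa using hgt⟩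
  have : t ≤ u := le_csSup hSbdd htS
  linarith [lt_of_lt_of_le hus1 htm.1]

/-- An integral curve of `r` attains a level `y` with `r y ≠ 0` at most once. -/
lemma level_once {r g : ℝ → ℝ} {a b y : ℝ}
    (hg : ∀ t ∈ Icc a b, HasDerivWithinAt g (r (g t)) (Icc a b) t)
    (hy : r y ≠ 0) :
    ∀ t1 ∈ Icc a b, ∀ t2 ∈ Icc a b, g t1 = y → g t2 = y → t1 = t2 := by
  rcases hy.lt_or_gt with h | h
  · -- apply positive case to -g with r' z = - r (-z)
    have hg' : ∀ t ∈ Icc a b, HasDerivWithinAt (fun s => -g s)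
        ((fun z => -r (-z)) ((fun s => -g s) t)) (Icc a b) t := by
      intro t ht
      have := (hg t ht).neg
      simp only [neg_neg]
      exact this
    have hy' : 0 < (fun z => -r (-z)) (-y) := by simpa using h
    intro t1 h1 t2 h2 e1 e2
    exact level_once_pos (r := fun z => -r (-z)) (g := fun s => -g s) (y := -y)
      hg' hy' t1 h1 t2 h2 (by simp [e1]) (by simp [e2])
  · exact level_once_pos hg h


lemma no_interior_max {r g : ℝ → ℝ} {a b l u t0 : ℝ}
    (hg : ∀ t ∈ Icc a b, HasDerivWithinAt g (r (g t)) (Icc a b) t)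
    (hr : ∀ y ∈ Icc l u, r y ≠ 0)
    (ht0 : t0 ∈ Icc a b) (hmax : IsMaxOn g (Icc a b) t0)
    (hband : g t0 ∈ Icc l u) (hga : g a < g t0) (hgb : g b < g t0) : False := by
  have h1 : a < t0 := lt_of_le_of_ne ht0.1 (fun h => by rw [← h] at hga; exact lt_irrefl _ hga)
  have h2 : t0 < b := lt_of_le_of_ne ht0.2 (fun h => by rw [h] at hgb; exact lt_irrefl _ hgb)
  have hnhds : Icc a b ∈ 𝓝 t0 := Icc_mem_nhds h1 h2
  have hda : HasDerivAt g (r (g t0)) t0 := (hg t0 ht0).hasDerivAt hnhds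
  exact hr _ hband ((hmax.isLocalMax hnhds).hasDerivAt_eq_zero hda)

lemma no_interior_min {r g : ℝ → ℝ} {a b l u t0 : ℝ}
    (hg : ∀ t ∈ Icc a b, HasDerivWithinAt g (r (g t)) (Icc a b) t)
    (hr : ∀ y ∈ Icc l u, r y ≠ 0)
    (ht0 : t0 ∈ Icc a b) (hmin : IsMinOn g (Icc a b) t0)
    (hband : g t0 ∈ Icc l u) (hga : g t0 < g a) (hgb : g t0 < g b) : False := by
  have h1 : a < t0 := lt_of_le_of_ne ht0.1 (fun h => by rw [← h] at hga; exact lt_irrefl _ hga)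
  have h2 : t0 < b := lt_of_le_of_ne ht0.2 (fun h => by rw [h] at hgb; exact lt_irrefl _ hgb)
  have hnhds : Icc a b ∈ 𝓝 t0 := Icc_mem_nhds h1 h2
  have hda : HasDerivAt g (r (g t0)) t0 := (hg t0 ht0).hasDerivAt hnhds
  exact hr _ hband ((hmin.isLocalMin hnhds).hasDerivAt_eq_zero hda)

/-- If an integral curve of `r` on `[a,b]` passes through `x ∈ [l,u]` where `r ≠ 0` on `[l,u]`,
and takes values outside `[l,u]` at the endpoints, then its image covers `[l,u]`. -/
lemma band_subset_image {r g : ℝ → ℝ} {a b l u x : ℝ}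
    (hg : ∀ t ∈ Icc a b, HasDerivWithinAt g (r (g t)) (Icc a b) t)
    (hr : ∀ y ∈ Icc l u, r y ≠ 0)
    (hab : a ≤ b) (hx : x ∈ Icc l u)
    {s : ℝ} (hs : s ∈ Icc a b) (hgs : g s = x)
    (hga : g a ∉ Icc l u) (hgb : g b ∉ Icc l u) :
    Icc l u ⊆ g '' (Icc a b) := by
  have hcont : ContinuousOn g (Icc a b) := fun t ht => (hg t ht).continuousWithinAt
  obtain ⟨tM, htM, hM⟩ := isCompact_Icc.exists_isMaxOn (nonempty_Icc.2 hab) hcont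
  obtain ⟨tm, htm, hm⟩ := isCompact_Icc.exists_isMinOn (nonempty_Icc.2 hab) hcont
  have hMx : x ≤ g tM := hgs ▸ hM hs
  have hmx : g tm ≤ x := hgs ▸ hm hs
  have hMu : u < g tM := by
    by_contra hcon
    push_neg at hcon
    have hMband : g tM ∈ Icc l u := ⟨le_trans hx.1 hMx, hcon⟩
    have hgal : g a < g tM := by
      rcases lt_or_ge (g a) l with h | h
      · exact lt_of_lt_of_le h hMband.1
      · exact absurd ⟨h, le_trans (hM (left_mem_Icc.2 hab)) hcon⟩ hga
    have hgbl : g b < g tM := by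
      rcases lt_or_ge (g b) l with h | h
      · exact lt_of_lt_of_le h hMband.1
      · exact absurd ⟨h, le_trans (hM (right_mem_Icc.2 hab)) hcon⟩ hgb
    exact no_interior_max hg hr htM hM hMband hgal hgbl
  have hml : g tm < l := by
    by_contra hcon
    push_neg at hcon
    have hmband : g tm ∈ Icc l u := ⟨hcon, le_trans hmx hx.2⟩
    have hgal : g tm < g a := by
      rcases lt_or_ge u (g a) with h | h
      · exact lt_of_le_of_lt hmband.2 h
      · exact absurd ⟨le_trans hcon (hm (left_mem_Icc.2 hab)), h⟩ hga
    have hgbl : g tm < g b := by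
      rcases lt_or_ge u (g b) with h | h
      · exact lt_of_le_of_lt hmband.2 h
      · exact absurd ⟨le_trans hcon (hm (right_mem_Icc.2 hab)), h⟩ hgb
    exact no_interior_min hg hr htm hm hmband hgal hgbl
  intro y hy
  have hsub : uIcc tm tM ⊆ Icc a b := uIcc_subset_Icc htm htM
  have := intermediate_value_uIcc (hcont.mono hsub)
  have hymem : y ∈ uIcc (g tm) (g tM) := by
    rw [mem_uIcc]
    left
    exact ⟨le_of_lt (lt_of_lt_of_le hml hy.1), le_of_lt (lt_of_le_of_lt hy.2 hMu)⟩
  obtain ⟨t, ht, hgt⟩ := this hymem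
  exact ⟨t, hsub ht, hgt⟩

/-- If an integral curve of `r` on `[a,b]` never equals `x ∈ [l,u]` (where `r ≠ 0` on `[l,u]`)
and its endpoint values lie outside `[l,u]`, then it never enters `[l,u]`. -/
lemma no_cross_avoids_band {r g : ℝ → ℝ} {a b l u x : ℝ}
    (hg : ∀ t ∈ Icc a b, HasDerivWithinAt g (r (g t)) (Icc a b) t)
    (hr : ∀ y ∈ Icc l u, r y ≠ 0)
    (hab : a ≤ b) (hx : x ∈ Icc l u)
    (hnc : ∀ t ∈ Icc a b, g t ≠ x)
    (hga : g a ∉ Icc l u) (hgb : g b ∉ Icc l u) :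
    ∀ t ∈ Icc a b, g t ∉ Icc l u := by
  have hcont : ContinuousOn g (Icc a b) := fun t ht => (hg t ht).continuousWithinAt
  intro t ht hband
  rcases lt_or_gt_of_ne (hnc t ht) with hlt | hgt
  · -- g t < x : all values below x
    have hall : ∀ p ∈ Icc a b, g p < x := by
      intro p hp
      rcases lt_or_ge (g p) x with h | h
      · exact h
      · exfalso
        have hhx : x ∈ uIcc (g t) (g p) := by
          rw [mem_uIcc]; left; exact ⟨le_of_lt hlt, h⟩
        obtain ⟨t', ht', hgt'⟩ :=
          intermediate_value_uIcc (hcont.mono (uIcc_subset_Icc ht hp)) hhx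
        exact hnc t' (uIcc_subset_Icc ht hp ht') hgt'
    obtain ⟨tM, htM, hM⟩ := isCompact_Icc.exists_isMaxOn (nonempty_Icc.2 hab) hcont
    have hMband : g tM ∈ Icc l u := ⟨le_trans hband.1 (hM ht), le_trans (le_of_lt (hall tM htM)) hx.2⟩
    have hgal : g a < g tM := by
      rcases lt_or_ge (g a) l with h | h
      · exact lt_of_lt_of_le h hMband.1
      · exact absurd ⟨h, le_trans (le_of_lt (hall a (left_mem_Icc.2 hab))) hx.2⟩ hga
    have hgbl : g b < g tM := by
      rcases lt_or_ge (g b) l with h | h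
      · exact lt_of_lt_of_le h hMband.1
      · exact absurd ⟨h, le_trans (le_of_lt (hall b (right_mem_Icc.2 hab))) hx.2⟩ hgb
    exact no_interior_max hg hr htM hM hMband hgal hgbl
  · -- x < g t : all values above x
    have hall : ∀ p ∈ Icc a b, x < g p := by
      intro p hp
      rcases lt_or_ge x (g p) with h | h
      · exact h
      · exfalso
        have hhx : x ∈ uIcc (g t) (g p) := by
          rw [mem_uIcc]; right; exact ⟨h, le_of_lt hgt⟩
        obtain ⟨t', ht', hgt'⟩ :=
          intermediate_value_uIcc (hcont.mono (uIcc_subset_Icc ht hp)) hhx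
        exact hnc t' (uIcc_subset_Icc ht hp ht') hgt'
    obtain ⟨tm, htm, hm⟩ := isCompact_Icc.exists_isMinOn (nonempty_Icc.2 hab) hcont
    have hmband : g tm ∈ Icc l u := ⟨le_trans hx.1 (le_of_lt (hall tm htm)), le_trans (hm ht) hband.2⟩
    have hgal : g tm < g a := by
      rcases lt_or_ge u (g a) with h | h
      · exact lt_of_le_of_lt hmband.2 h
      · exact absurd ⟨le_trans hx.1 (le_of_lt (hall a (left_mem_Icc.2 hab))), h⟩ hga
    have hgbl : g tm < g b := by
      rcases lt_or_ge u (g b) with h | h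
      · exact lt_of_le_of_lt hmband.2 h
      · exact absurd ⟨le_trans hx.1 (le_of_lt (hall b (right_mem_Icc.2 hab))), h⟩ hgb
    exact no_interior_min hg hr htm hm hmband hgal hgbl


/-- Key change-of-variables identity: the time spent by the integral curve in the band,
measured on `V = Ioo a b ∩ g⁻¹' (Icc l u)`, equals `∫_{g '' V} |r|⁻¹`. -/
lemma piece_time_eq {r g : ℝ → ℝ} {a b l u : ℝ}
    (hg : ∀ t ∈ Icc a b, HasDerivWithinAt g (r (g t)) (Icc a b) t)
    (hr : ∀ y ∈ Icc l u, r y ≠ 0) :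
    MeasurableSet (Ioo a b ∩ g ⁻¹' (Icc l u)) ∧
    (volume (Ioo a b ∩ g ⁻¹' (Icc l u))).toReal
      = ∫ y in g '' (Ioo a b ∩ g ⁻¹' (Icc l u)), |r y|⁻¹ := by
  set V := Ioo a b ∩ g ⁻¹' (Icc l u) with hV
  have hcont : ContinuousOn g (Icc a b) := fun t ht => (hg t ht).continuousWithinAt
  have hVsub : V ⊆ Icc a b := fun t ht => Ioo_subset_Icc_self ht.1
  have hVeq : V = Ioo a b ∩ (Icc a b ∩ g ⁻¹' (Icc l u)) := by
    ext t
    constructor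
    · intro ht; exact ⟨ht.1, hVsub ht, ht.2⟩
    · intro ht; exact ⟨ht.1, ht.2.2⟩
  have hVmeas : MeasurableSet V := by
    rw [hVeq]
    exact measurableSet_Ioo.inter
      (ContinuousOn.preimage_isClosed_of_isClosed hcont isClosed_Icc isClosed_Icc).measurableSet
  refine ⟨hVmeas, ?_⟩
  have hder : ∀ t ∈ V, HasDerivWithinAt g (r (g t)) V t :=
    fun t ht => ((hg t (hVsub ht)).mono hVsub)
  have hinj : InjOn g V := by
    intro t1 h1 t2 h2 he
    exact level_once hg (hr _ h1.2) t1 (hVsub h1) t2 (hVsub h2) rfl he.symm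
  have hcov := integral_image_eq_integral_abs_deriv_smul hVmeas hder hinj (fun y => |r y|⁻¹)
  rw [hcov]
  have : ∀ t ∈ V, |r (g t)| • |r (g t)|⁻¹ = (1:ℝ) := by
    intro t ht
    have : |r (g t)| ≠ 0 := abs_ne_zero.2 (hr _ ht.2)
    simp [smul_eq_mul, mul_inv_cancel₀ this]
  rw [setIntegral_congr_fun hVmeas this]
  simp [setIntegral_const, measureReal_def]


section PieceVol

variable {r g : ℝ → ℝ} {a b l u x : ℝ}

lemma rinv_integrableOn (hrc : ContinuousOn r (Icc l u)) (hr : ∀ y ∈ Icc l u, r y ≠ 0) :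
    IntegrableOn (fun y => |r y|⁻¹) (Icc l u) := by
  apply ContinuousOn.integrableOn_compact isCompact_Icc
  exact (hrc.abs).inv₀ (fun y hy => abs_ne_zero.2 (hr y hy))

/-- General bound: time in the band is at most `∫_[l,u] |r|⁻¹`. -/
lemma piece_vol_bound
    (hg : ∀ t ∈ Icc a b, HasDerivWithinAt g (r (g t)) (Icc a b) t)
    (hr : ∀ y ∈ Icc l u, r y ≠ 0) (hrc : ContinuousOn r (Icc l u)) :
    volume (Ioo a b ∩ g ⁻¹' (Icc l u)) ≤ ENNReal.ofReal (∫ y in Icc l u, |r y|⁻¹) := by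
  obtain ⟨hVmeas, hkey⟩ := piece_time_eq hg hr
  set V := Ioo a b ∩ g ⁻¹' (Icc l u) with hV
  have hfin : volume V < ⊤ :=
    lt_of_le_of_lt (measure_mono (fun t ht => ht.1)) measure_Ioo_lt_top
  have hmono : ∫ y in g '' V, |r y|⁻¹ ≤ ∫ y in Icc l u, |r y|⁻¹ := by
    apply setIntegral_mono_set (rinv_integrableOn hrc hr)
    · filter_upwards with y using inv_nonneg.2 (abs_nonneg _)
    · exact HasSubset.Subset.eventuallyLE (by
        rintro y ⟨t, ht, rfl⟩
        exact ht.2)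
  calc volume V = ENNReal.ofReal ((volume V).toReal) := (ENNReal.ofReal_toReal hfin.ne).symm
    _ ≤ ENNReal.ofReal (∫ y in Icc l u, |r y|⁻¹) := by
        apply ENNReal.ofReal_le_ofReal
        rw [hkey]; exact hmono

/-- Crossing case: time in the band is exactly `∫_[l,u] |r|⁻¹`. -/
lemma piece_vol_eq
    (hg : ∀ t ∈ Icc a b, HasDerivWithinAt g (r (g t)) (Icc a b) t)
    (hr : ∀ y ∈ Icc l u, r y ≠ 0)
    (hab : a ≤ b) (hx : x ∈ Icc l u)
    {s : ℝ} (hs : s ∈ Ioo a b) (hgs : g s = x)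
    (hga : g a ∉ Icc l u) (hgb : g b ∉ Icc l u) :
    volume (Ioo a b ∩ g ⁻¹' (Icc l u)) = ENNReal.ofReal (∫ y in Icc l u, |r y|⁻¹) := by
  obtain ⟨hVmeas, hkey⟩ := piece_time_eq hg hr
  set V := Ioo a b ∩ g ⁻¹' (Icc l u) with hV
  have hfin : volume V < ⊤ :=
    lt_of_le_of_lt (measure_mono (fun t ht => ht.1)) measure_Ioo_lt_top
  have himg : g '' V = Icc l u := by
    apply Subset.antisymm
    · rintro y ⟨t, ht, rfl⟩; exact ht.2
    · intro y hy
      obtain ⟨t, ht, hgt⟩ := band_subset_image hg hr hab hx (Ioo_subset_Icc_self hs) hgs hga hgb hy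
      have hta : t ≠ a := fun h => hga (by rw [← h, hgt]; exact hy)
      have htb : t ≠ b := fun h => hgb (by rw [← h, hgt]; exact hy)
      exact ⟨t, ⟨⟨lt_of_le_of_ne ht.1 (Ne.symm hta), lt_of_le_of_ne ht.2 htb⟩, by simp only [mem_preimage, hgt]; exact hy⟩, hgt⟩
  rw [← ENNReal.ofReal_toReal hfin.ne, hkey, himg]

/-- No-crossing case: the band is not visited at all. -/
lemma piece_vol_zero
    (hg : ∀ t ∈ Icc a b, HasDerivWithinAt g (r (g t)) (Icc a b) t)
    (hr : ∀ y ∈ Icc l u, r y ≠ 0)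
    (hab : a ≤ b) (hx : x ∈ Icc l u)
    (hnc : ∀ s ∈ Ioo a b, g s ≠ x)
    (hga : g a ∉ Icc l u) (hgb : g b ∉ Icc l u) :
    Ioo a b ∩ g ⁻¹' (Icc l u) = ∅ := by
  have hnc' : ∀ t ∈ Icc a b, g t ≠ x := by
    intro t ht
    rcases eq_or_lt_of_le ht.1 with h | h1
    · rw [← h]; exact fun he => hga (he ▸ hx)
    rcases eq_or_lt_of_le ht.2 with h | h2
    · rw [h]; exact fun he => hgb (he ▸ hx)
    exact hnc t ⟨h1, h2⟩
  rw [eq_empty_iff_forall_notMem]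
  intro t ht
  exact no_cross_avoids_band hg hr hab hx hnc' hga hgb t (Ioo_subset_Icc_self ht.1) ht.2

end PieceVol


/-- Pathwise occupation-time identity for a piecewise integral curve. -/
lemma pathwise_occupation {r : ℝ → ℝ} {x H dstar : ℝ} (hH : 0 < H)
    (hdstar : 0 < dstar)
    (hrne : ∀ y ∈ Icc (x - dstar) (x + dstar), r y ≠ 0)
    (hrc : ContinuousOn r (Icc (x - dstar) (x + dstar)))
    (Y : ℝ → ℝ) (n : ℕ) (τ : ℕ → ℝ) (g : ℕ → ℝ → ℝ)
    (hτ0 : τ 0 = 0) (hτN : τ (n + 1) = H)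
    (hτmono : ∀ i ≤ n, τ i < τ (i+1))
    (hderiv : ∀ i ≤ n, ∀ s ∈ Icc (τ i) (τ (i+1)),
      HasDerivWithinAt (g i) (r (g i s)) (Icc (τ i) (τ (i+1))) s)
    (hYg : ∀ i ≤ n, ∀ s ∈ Ico (τ i) (τ (i+1)), Y s = g i s)
    (havoid : ∀ i ≤ n, g i (τ i) ≠ x ∧ g i (τ (i+1)) ≠ x) :
    ∃ K : ℕ, K ≤ n + 1 ∧ (crossSet H x Y).ncard = K ∧
      ∃ δ₀ > 0, ∀ δ, 0 < δ → δ ≤ dstar →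
        (volume {t | t ∈ Ioo 0 H ∧ Y t ∈ Icc (x - δ) (x + δ)}
          ≤ (n + 1 : ℝ≥0∞) * ENNReal.ofReal (∫ y in Icc (x-δ) (x+δ), |r y|⁻¹)) ∧
        (δ < δ₀ → volume {t | t ∈ Ioo 0 H ∧ Y t ∈ Icc (x - δ) (x + δ)}
          = (K : ℝ≥0∞) * ENNReal.ofReal (∫ y in Icc (x-δ) (x+δ), |r y|⁻¹)) := by
  classical
  have hxband : x ∈ Icc (x - dstar) (x + dstar) := ⟨by linarith, by linarith⟩
  have hrxne : r x ≠ 0 := hrne x hxband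
  -- monotonicity of τ
  have hmono2 : ∀ j, j ≤ n + 1 → ∀ i, i ≤ j → τ i ≤ τ j := by
    intro j
    induction j with
    | zero => intro _ i hi; interval_cases i; exact le_refl _
    | succ m ih =>
      intro hj i hi
      rcases Nat.lt_or_ge i (m+1) with h | h
      · have h1 : τ i ≤ τ m := ih (by omega) i (by omega)
        have h2 : τ m < τ (m+1) := hτmono m (by omega)
        linarith
      · have : i = m + 1 := by omega
        rw [this]
  have hτnonneg : ∀ i, i ≤ n + 1 → 0 ≤ τ i := by
    intro i hi
    have := hmono2 i hi 0 (Nat.zero_le i)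
    rw [hτ0] at this; exact this
  have hτleH : ∀ i, i ≤ n + 1 → τ i ≤ H := by
    intro i hi
    have := hmono2 (n+1) (le_refl _) i hi
    rw [hτN] at this; exact this
  have hIooSub : ∀ i, i ≤ n → Ioo (τ i) (τ (i+1)) ⊆ Ioo 0 H := by
    intro i hi t ht
    exact ⟨lt_of_le_of_lt (hτnonneg i (by omega)) ht.1,
      lt_of_lt_of_le ht.2 (hτleH (i+1) (by omega))⟩
  -- the crossing predicate and crossing times
  set C : ℕ → Prop := fun i => ∃ s, s ∈ Ioo (τ i) (τ (i+1)) ∧ g i s = x with hC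
  set σ : ℕ → ℝ := fun i => if h : C i then Classical.choose h else 0 with hσ
  have hσspec : ∀ i, C i → σ i ∈ Ioo (τ i) (τ (i+1)) ∧ g i (σ i) = x := by
    intro i hi
    simp only [hσ, dif_pos hi]
    exact Classical.choose_spec hi
  set F : Finset ℕ := (Finset.range (n+1)).filter C with hF
  set K := F.card with hK
  -- uniqueness of the crossing time within a piece
  have huniq : ∀ i, i ≤ n → ∀ s1 ∈ Icc (τ i) (τ (i+1)), ∀ s2 ∈ Icc (τ i) (τ (i+1)),
      g i s1 = x → g i s2 = x → s1 = s2 := by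
    intro i hi
    exact level_once (hderiv i hi) hrxne
  -- locating a time in a piece
  have hfind : ∀ t, t ∈ Ioo 0 H → ∃ i, i ≤ n ∧ t ∈ Ico (τ i) (τ (i+1)) := by
    intro t ht
    set i := Nat.findGreatest (fun j => τ j ≤ t) n with hidef
    have hi_le : i ≤ n := Nat.findGreatest_le n
    have hP0 : (fun j => τ j ≤ t) 0 := by
      simp only [hτ0]; exact le_of_lt ht.1
    have hτi : τ i ≤ t := Nat.findGreatest_spec (P := fun j => τ j ≤ t) (Nat.zero_le n) hP0
    refine ⟨i, hi_le, hτi, ?_⟩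
    rcases eq_or_lt_of_le hi_le with h | h
    · have : τ (i+1) = H := by rw [h, hτN]
      rw [this]; exact ht.2
    · by_contra hcon
      push_neg at hcon
      exact Nat.findGreatest_is_greatest (P := fun j => τ j ≤ t) (Nat.lt_succ_self i) (by omega) hcon
  -- identification of the cross set
  have hcrossid : crossSet H x Y = ↑(F.image σ) := by
    ext s
    simp only [crossSet, mem_setOf_eq, Finset.coe_image, mem_image, Finset.mem_coe]
    constructor
    · rintro ⟨hs0, hcont, hsx⟩
      obtain ⟨i, hi, hti⟩ := hfind s hs0
      have hsgi : Y s = g i s := hYg i hi s hti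
      have hsne : s ≠ τ i := by
        intro h
        apply (havoid i hi).1
        rw [← h, ← hsgi, hsx]
      have hsIoo : s ∈ Ioo (τ i) (τ (i+1)) := ⟨lt_of_le_of_ne hti.1 (Ne.symm hsne), hti.2⟩
      have hCi : C i := ⟨s, hsIoo, by rw [← hsgi, hsx]⟩
      refine ⟨i, Finset.mem_filter.2 ⟨Finset.mem_range.2 (by omega), hCi⟩, ?_⟩
      obtain ⟨hσIoo, hσx⟩ := hσspec i hCi
      exact huniq i hi (σ i) (Ioo_subset_Icc_self hσIoo) s (Ioo_subset_Icc_self hsIoo)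
        hσx (by rw [← hsgi, hsx])
    · rintro ⟨i, hiF, rfl⟩
      obtain ⟨hiR, hCi⟩ := Finset.mem_filter.1 hiF
      have hi : i ≤ n := by
        have := Finset.mem_range.1 hiR; omega
      obtain ⟨hσIoo, hσx⟩ := hσspec i hCi
      have hYσ : Y (σ i) = g i (σ i) := hYg i hi (σ i) (Ioo_subset_Ico_self hσIoo)
      refine ⟨hIooSub i hi hσIoo, ?_, by rw [hYσ, hσx]⟩
      -- continuity of Y at σ i
      have hIccnhds : Icc (τ i) (τ (i+1)) ∈ 𝓝 (σ i) := Icc_mem_nhds hσIoo.1 hσIoo.2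
      have hgc : ContinuousAt (g i) (σ i) :=
        ((hderiv i hi (σ i) (Ioo_subset_Icc_self hσIoo)).hasDerivAt hIccnhds).continuousAt
      apply hgc.congr
      filter_upwards [Ioo_mem_nhds hσIoo.1 hσIoo.2] with t ht
      exact (hYg i hi t (Ioo_subset_Ico_self ht)).symm
  -- injectivity of crossing times
  have hdisj0 : ∀ i j, i ∈ F → j ∈ F → i < j → σ i < σ j := by
    intro i j hi hj hij
    have hCi := (Finset.mem_filter.1 hi).2
    have hCj := (Finset.mem_filter.1 hj).2
    have hjn : j ≤ n := by have := Finset.mem_range.1 (Finset.mem_filter.1 hj).1; omega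
    have h1 := (hσspec i hCi).1
    have h2 := (hσspec j hCj).1
    have hmid : τ (i+1) ≤ τ j := hmono2 j (by omega) (i+1) (by omega)
    linarith [h1.2, h2.1]
  have hσinj : Set.InjOn σ ↑F := by
    intro i hi j hj hij
    by_contra hne
    rcases Nat.lt_or_ge i j with h | h
    · exact absurd hij (ne_of_lt (hdisj0 i j (Finset.mem_coe.1 hi) (Finset.mem_coe.1 hj) h))
    · have h2 : j < i := by omega
      exact absurd hij.symm (ne_of_lt (hdisj0 j i (Finset.mem_coe.1 hj) (Finset.mem_coe.1 hi) h2))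
  have hncard : (crossSet H x Y).ncard = K := by
    rw [hcrossid, ncard_coe_finset, Finset.card_image_of_injOn hσinj]
  -- the gap to the endpoint values
  obtain ⟨δ₀, hδ₀pos, hδ₀⟩ : ∃ δ₀ > 0, ∀ i ≤ n,
      δ₀ ≤ |g i (τ i) - x| ∧ δ₀ ≤ |g i (τ (i+1)) - x| := by
    refine ⟨(Finset.range (n+1)).inf' ⟨0, by simp⟩
      (fun i => min |g i (τ i) - x| |g i (τ (i+1)) - x|), ?_, ?_⟩
    · refine (Finset.lt_inf'_iff ⟨0, by simp⟩).2 ?_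
      intro i hi
      have hv := havoid i (by have := Finset.mem_range.1 hi; omega)
      exact lt_min (abs_pos.2 (sub_ne_zero.2 hv.1)) (abs_pos.2 (sub_ne_zero.2 hv.2))
    · intro i hi
      have h := Finset.inf'_le (fun i => min |g i (τ i) - x| |g i (τ (i+1)) - x|)
        (Finset.mem_range.2 (by omega : i < n + 1))
      exact ⟨le_trans h (min_le_left _ _), le_trans h (min_le_right _ _)⟩
  have hKle : K ≤ n + 1 := by
    have h1 : K ≤ (Finset.range (n+1)).card := Finset.card_filter_le _ _
    rwa [Finset.card_range] at h1
  refine ⟨K, hKle, hncard, δ₀, hδ₀pos, ?_⟩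
  intro δ hδpos hδle
  set B := Icc (x - δ) (x + δ) with hB
  have hBsub : B ⊆ Icc (x - dstar) (x + dstar) := Icc_subset_Icc (by linarith) (by linarith)
  have hrB : ∀ y ∈ B, r y ≠ 0 := fun y hy => hrne y (hBsub hy)
  have hrcB : ContinuousOn r B := hrc.mono hBsub
  have hxB : x ∈ B := ⟨by linarith, by linarith⟩
  set T := ∫ y in B, |r y|⁻¹ with hT
  set V : ℕ → Set ℝ := fun i => Ioo (τ i) (τ (i+1)) ∩ (g i) ⁻¹' B with hVdef
  have hVmeas : ∀ i, i ≤ n → MeasurableSet (V i) :=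
    fun i hi => (piece_time_eq (hderiv i hi) hrB).1
  set A := {t | t ∈ Ioo 0 H ∧ Y t ∈ B} with hA
  -- decomposition of the occupation time
  have hvolA : volume A = ∑ i ∈ Finset.range (n+1), volume (V i) := by
    have hUA : (⋃ i ∈ Finset.range (n+1), V i) ⊆ A := by
      intro t ht
      simp only [mem_iUnion, exists_prop] at ht
      obtain ⟨i, hiR, hti⟩ := ht
      have hi : i ≤ n := by have := Finset.mem_range.1 hiR; omega
      refine ⟨hIooSub i hi hti.1, ?_⟩
      show Y t ∈ B
      rw [hYg i hi t (Ioo_subset_Ico_self hti.1)]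
      exact hti.2
    have hAU : A ⊆ (⋃ i ∈ Finset.range (n+1), V i) ∪ (⋃ i ∈ Finset.range (n+1), {τ i}) := by
      intro t ht
      obtain ⟨i, hi, hti⟩ := hfind t ht.1
      rcases eq_or_lt_of_le hti.1 with h | h
      · right
        simp only [mem_iUnion, mem_singleton_iff, exists_prop]
        exact ⟨i, Finset.mem_range.2 (by omega), h.symm⟩
      · left
        simp only [mem_iUnion, exists_prop]
        refine ⟨i, Finset.mem_range.2 (by omega), ⟨⟨h, hti.2⟩, ?_⟩⟩
        rw [mem_preimage, ← hYg i hi t hti]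
        exact ht.2
    have hnull : volume (⋃ i ∈ Finset.range (n+1), ({τ i} : Set ℝ)) = 0 := by
      refine measure_biUnion_null_iff (Finset.range (n+1)).countable_toSet |>.2 ?_
      intro i _
      exact Real.volume_singleton
    have hpd : (↑(Finset.range (n+1)) : Set ℕ).PairwiseDisjoint V := by
      have key : ∀ i j, i ≤ n → j ≤ n → i < j → Disjoint (V i) (V j) := by
        intro i j hi hj hij
        rw [Set.disjoint_left]
        intro t hti htj
        have hmid : τ (i+1) ≤ τ j := hmono2 j (by omega) (i+1) (by omega)
        have h1 := hti.1.2
        have h2 := htj.1.1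
        linarith
      intro i hi j hj hne
      have hi' : i ≤ n := by have := Finset.mem_range.1 hi; omega
      have hj' : j ≤ n := by have := Finset.mem_range.1 hj; omega
      rcases Nat.lt_or_ge i j with h | h
      · exact key i j hi' hj' h
      · exact (key j i hj' hi' (by omega)).symm
    have hvolU : volume (⋃ i ∈ Finset.range (n+1), V i)
        = ∑ i ∈ Finset.range (n+1), volume (V i) := by
      apply measure_biUnion_finset hpd
      intro i hi
      exact hVmeas i (by have := Finset.mem_range.1 hi; omega)
    apply le_antisymm
    · calc volume A ≤ volume ((⋃ i ∈ Finset.range (n+1), V i)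
            ∪ (⋃ i ∈ Finset.range (n+1), {τ i})) := measure_mono hAU
        _ ≤ volume (⋃ i ∈ Finset.range (n+1), V i)
            + volume (⋃ i ∈ Finset.range (n+1), ({τ i} : Set ℝ)) := measure_union_le _ _
        _ = ∑ i ∈ Finset.range (n+1), volume (V i) := by rw [hnull, add_zero, hvolU]
    · rw [← hvolU]
      exact measure_mono hUA
  constructor
  · -- general bound
    rw [hvolA]
    calc ∑ i ∈ Finset.range (n+1), volume (V i)
        ≤ ∑ _i ∈ Finset.range (n+1), ENNReal.ofReal T :=
          Finset.sum_le_sum (fun i hi =>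
            piece_vol_bound (hderiv i (by have := Finset.mem_range.1 hi; omega)) hrB hrcB)
      _ = (n + 1 : ℝ≥0∞) * ENNReal.ofReal T := by
          rw [Finset.sum_const, Finset.card_range, nsmul_eq_mul]
          norm_cast
  · -- exact identity for small δ
    intro hδlt
    have hend : ∀ i, i ≤ n → g i (τ i) ∉ B ∧ g i (τ (i+1)) ∉ B := by
      intro i hi
      have h := hδ₀ i hi
      constructor
      · intro hmem
        have : |g i (τ i) - x| ≤ δ := abs_le.2 ⟨by linarith [hmem.1], by linarith [hmem.2]⟩
        linarith [h.1]
      · intro hmem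
        have : |g i (τ (i+1)) - x| ≤ δ := abs_le.2 ⟨by linarith [hmem.1], by linarith [hmem.2]⟩
        linarith [h.2]
    have hVi : ∀ i, i ≤ n → volume (V i) = if C i then ENNReal.ofReal T else 0 := by
      intro i hi
      by_cases hCi : C i
      · rw [if_pos hCi]
        obtain ⟨s, hs, hgs⟩ := hCi
        exact piece_vol_eq (hderiv i hi) hrB (le_of_lt (hτmono i hi)) hxB hs hgs
          (hend i hi).1 (hend i hi).2
      · rw [if_neg hCi]
        have hemp : V i = ∅ := piece_vol_zero (hderiv i hi) hrB (le_of_lt (hτmono i hi)) hxB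
          (fun s hs hgs => hCi ⟨s, hs, hgs⟩) (hend i hi).1 (hend i hi).2
        rw [hemp]
        exact measure_empty
    rw [hvolA]
    calc ∑ i ∈ Finset.range (n+1), volume (V i)
        = ∑ i ∈ Finset.range (n+1), (if C i then ENNReal.ofReal T else 0) :=
          Finset.sum_congr rfl (fun i hi => hVi i (by have := Finset.mem_range.1 hi; omega))
      _ = ∑ _i ∈ F, ENNReal.ofReal T := (Finset.sum_filter _ _).symm
      _ = (K : ℝ≥0∞) * ENNReal.ofReal T := by
          rw [Finset.sum_const, nsmul_eq_mul, hK]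


/-- Averages of a function continuous near `x` over shrinking bands converge to `f x`. -/
lemma avg_tendsto {f : ℝ → ℝ} {x η : ℝ} (hη : 0 < η)
    (hf : ContinuousOn f (Ioo (x - η) (x + η))) :
    Tendsto (fun δ => (∫ y in Icc (x - δ) (x + δ), f y) / (2 * δ)) (𝓝[>] 0) (𝓝 (f x)) := by
  rw [Metric.tendsto_nhdsWithin_nhds]
  intro ε hε
  have hcx : ContinuousAt f x := hf.continuousAt (Ioo_mem_nhds (by linarith) (by linarith))
  obtain ⟨d1, hd1, hb⟩ := Metric.continuousAt_iff.1 hcx (ε/2) (by linarith)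
  refine ⟨min (η/2) d1, lt_min (by linarith) hd1, ?_⟩
  intro δ hδmem hδd
  have hδ : 0 < δ := hδmem
  rw [Real.dist_eq, sub_zero, abs_of_pos hδ] at hδd
  have hδη : δ < η/2 := lt_of_lt_of_le hδd (inf_le_left)
  have hδd1 : δ < d1 := lt_of_lt_of_le hδd (inf_le_right)
  have hsub : Icc (x - δ) (x + δ) ⊆ Ioo (x - η) (x + η) :=
    fun y hy => ⟨by linarith [hy.1], by linarith [hy.2]⟩
  have hint : IntegrableOn f (Icc (x - δ) (x + δ)) :=
    ContinuousOn.integrableOn_compact isCompact_Icc (hf.mono hsub)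
  have hvol : volume (Icc (x - δ) (x + δ)) = ENNReal.ofReal (2 * δ) := by
    rw [Real.volume_Icc]; congr 1; ring
  have hconst : ∫ _ in Icc (x - δ) (x + δ), f x = (2 * δ) * f x := by
    rw [setIntegral_const, measureReal_def, hvol, ENNReal.toReal_ofReal (by linarith), smul_eq_mul]
  have h1 : (∫ y in Icc (x - δ) (x + δ), f y) - (2 * δ) * f x
      = ∫ y in Icc (x - δ) (x + δ), (f y - f x) := by
    rw [integral_sub hint (integrableOn_const (by rw [hvol]; exact ENNReal.ofReal_ne_top)),
      hconst]
  have hkey : |(∫ y in Icc (x - δ) (x + δ), f y) - (2 * δ) * f x| ≤ (ε/2) * (2 * δ) := by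
    rw [h1]
    have := norm_setIntegral_le_of_norm_le_const (μ := volume) (s := Icc (x - δ) (x + δ))
      (f := fun y => f y - f x) (C := ε/2)
      (by rw [hvol]; exact ENNReal.ofReal_lt_top)
      (fun y hy => by
        have hyx : |y - x| ≤ δ := abs_le.2 ⟨by linarith [hy.1], by linarith [hy.2]⟩
        have hdist : dist y x < d1 := by rw [Real.dist_eq]; exact lt_of_le_of_lt hyx hδd1
        have h3 := hb hdist
        rw [Real.dist_eq] at h3
        rw [Real.norm_eq_abs]
        exact le_of_lt h3)
    rw [Real.norm_eq_abs] at this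
    calc |∫ y in Icc (x - δ) (x + δ), (f y - f x)| ≤ ε/2 * (volume (Icc (x - δ) (x + δ))).toReal := this
      _ = ε/2 * (2 * δ) := by rw [hvol, ENNReal.toReal_ofReal (by linarith)]
  rw [Real.dist_eq]
  have h2δ : (0:ℝ) < 2 * δ := by linarith
  have : (∫ y in Icc (x - δ) (x + δ), f y) / (2 * δ) - f x
      = ((∫ y in Icc (x - δ) (x + δ), f y) - (2 * δ) * f x) / (2 * δ) := by
    field_simp
  rw [this, abs_div, abs_of_pos h2δ, div_lt_iff₀ h2δ]
  calc |(∫ y in Icc (x - δ) (x + δ), f y) - (2 * δ) * f x| ≤ (ε/2) * (2*δ) := hkey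
    _ < ε * (2 * δ) := by nlinarith


lemma ratio_tendsto {q r : ℝ → ℝ} {x η : ℝ} (hη : 0 < η)
    (hq : ContinuousOn q (Ioo (x - η) (x + η)))
    (hrinv : ContinuousOn (fun y => |r y|⁻¹) (Ioo (x - η) (x + η)))
    (hrx : r x ≠ 0) :
    Tendsto (fun δ => (∫ y in Icc (x - δ) (x + δ), q y)
      / (∫ y in Icc (x - δ) (x + δ), |r y|⁻¹)) (𝓝[>] 0) (𝓝 (q x * |r x|)) := by
  have h1 := avg_tendsto hη hq
  have h2 := avg_tendsto hη hrinv
  have hne : (|r x|⁻¹ : ℝ) ≠ 0 := inv_ne_zero (abs_ne_zero.2 hrx)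
  have h3 := h1.mul (h2.inv₀ hne)
  rw [inv_inv] at h3
  apply h3.congr'
  filter_upwards [self_mem_nhdsWithin] with δ hδ
  have hδ0 : (2*δ : ℝ) ≠ 0 := by
    have : (0:ℝ) < δ := hδ
    positivity
  rw [inv_div, div_mul_div_comm, mul_comm (∫ y in Icc (x - δ) (x + δ), q y) (2*δ),
    mul_div_mul_left _ _ hδ0]

/-- **Stationary one-dimensional Kac–Rice formula.** Under the hypotheses of the
Dalmao–Mordecki formula, if for every `t ∈ [0,H]` the law of `X(t)` has a common density
`q` continuous near `x`, then `E[c_x(H)] = H |r(x)| q(x)`. -/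
theorem kac_rice_stationary_one_dim
    {Ω : Type*} [MeasurableSpace Ω] (P : Measure Ω) [IsProbabilityMeasure P]
    (H x : ℝ) (hH : 0 < H)
    (r : ℝ → ℝ) (hr : ContDiff ℝ 1 r) (hrx : r x ≠ 0)
    (X : Ω → ℝ → ℝ) (hX : Measurable (Function.uncurry X))
    (N : Ω → ℕ) (hN : Measurable N) (hNint : Integrable (fun ω => (N ω : ℝ)) P)
    (hpath : ∀ᵐ ω ∂P, ∃ (τ : ℕ → ℝ) (g : ℕ → ℝ → ℝ),
      τ 0 = 0 ∧ τ (N ω + 1) = H ∧ (∀ i ≤ N ω, τ i < τ (i+1)) ∧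
      (∀ i ≤ N ω, ∀ s ∈ Icc (τ i) (τ (i+1)),
        HasDerivWithinAt (g i) (r (g i s)) (Icc (τ i) (τ (i+1))) s) ∧
      (∀ i ≤ N ω, ∀ s ∈ Ico (τ i) (τ (i+1)), X ω s = g i s) ∧
      X ω H = g (N ω) H ∧
      (∀ i ≤ N ω, g i (τ i) ≠ x ∧ g i (τ (i+1)) ≠ x))
    (q : ℝ → ℝ)
    (hlaw : ∀ t ∈ Icc (0:ℝ) H, ∀ A : Set ℝ, MeasurableSet A →
      P {ω | X ω t ∈ A} = ENNReal.ofReal (∫ y in A, q y))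
    (hqcont : ∃ η > (0:ℝ), ContinuousOn q (Ioo (x - η) (x + η))) :
    Integrable (fun ω => ((crossSet H x (X ω)).ncard : ℝ)) P ∧
    (∫ ω, ((crossSet H x (X ω)).ncard : ℝ) ∂P) = H * |r x| * q x := by
  classical
  obtain ⟨η, hη, hqc⟩ := hqcont
  have hrcont : Continuous r := hr.continuous
  have hrxpos : 0 < |r x| := abs_pos.2 hrx
  obtain ⟨d, hd, hrb⟩ := Metric.continuousAt_iff.1 hrcont.continuousAt (|r x|/2) (by linarith)
  set dstar := min (d/2) (η/2) with hdstar_def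
  have hdstar : 0 < dstar := lt_min (by linarith) (by linarith)
  have hdd : dstar ≤ d/2 := min_le_left _ _
  have hdη : dstar ≤ η/2 := min_le_right _ _
  have hband_r : ∀ y ∈ Icc (x - dstar) (x + dstar), |r x|/2 < |r y| ∧ |r y| < 3/2 * |r x| := by
    intro y hy
    have h1 : |y - x| ≤ dstar := abs_le.2 ⟨by linarith [hy.1], by linarith [hy.2]⟩
    have h2 : dist y x < d := by
      rw [Real.dist_eq]; linarith
    have h3 := hrb h2
    rw [Real.dist_eq] at h3
    constructor
    · have h4 := abs_sub_abs_le_abs_sub (r x) (r y)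
      rw [abs_sub_comm (r x) (r y)] at h4
      linarith
    · have h4 := abs_sub_abs_le_abs_sub (r y) (r x)
      linarith
  have hrne : ∀ y ∈ Icc (x - dstar) (x + dstar), r y ≠ 0 := by
    intro y hy
    have := (hband_r y hy).1
    intro h
    rw [h, abs_zero] at this
    linarith
  have hrcOn : ContinuousOn r (Icc (x - dstar) (x + dstar)) := hrcont.continuousOn
  have hrinvcont : ContinuousOn (fun y => |r y|⁻¹) (Ioo (x - dstar) (x + dstar)) :=
    (hrcont.continuousOn.abs).inv₀
      (fun y hy => abs_ne_zero.2 (hrne y (Ioo_subset_Icc_self hy)))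
  have hqc' : ContinuousOn q (Ioo (x - dstar) (x + dstar)) :=
    hqc.mono (Ioo_subset_Ioo (by linarith) (by linarith))
  -- measurability of sections
  have hXsec : ∀ ω, Measurable (X ω) :=
    fun ω => hX.comp (measurable_const.prodMk measurable_id)
  have hXt : ∀ t, Measurable (fun ω => X ω t) :=
    fun t => hX.comp (measurable_id.prodMk measurable_const)
  -- facts about q
  have h0mem : (0:ℝ) ∈ Icc (0:ℝ) H := ⟨le_refl _, hH.le⟩
  have hqint : Integrable q volume := by
    by_contra hcon
    have h1 := hlaw 0 h0mem univ MeasurableSet.univ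
    rw [setIntegral_univ, integral_undef hcon] at h1
    have h2 : {ω | X ω 0 ∈ univ} = (univ : Set Ω) := by simp
    rw [h2, measure_univ] at h1
    simp at h1
  have hqtot : ∫ y, q y = 1 := by
    have h1 := hlaw 0 h0mem univ MeasurableSet.univ
    have h2 : {ω | X ω 0 ∈ univ} = (univ : Set Ω) := by simp
    rw [h2, measure_univ, setIntegral_univ] at h1
    exact ENNReal.ofReal_eq_one.1 h1.symm
  have hq_setint_nonneg : ∀ A : Set ℝ, MeasurableSet A → 0 ≤ ∫ y in A, q y := by
    intro A hA
    by_contra hcon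
    push_neg at hcon
    have h1 := hlaw 0 h0mem A hA
    have h2 := hlaw 0 h0mem Aᶜ hA.compl
    have hcompl : ∫ y in Aᶜ, q y = 1 - ∫ y in A, q y := by
      have h3 := integral_add_compl hA hqint
      rw [hqtot] at h3
      linarith
    have hPA : P {ω | X ω 0 ∈ A} = 0 := by
      rw [h1]; exact ENNReal.ofReal_eq_zero.2 hcon.le
    have hset : {ω | X ω 0 ∈ Aᶜ} = {ω | X ω 0 ∈ A}ᶜ := by ext ω; simp
    have hmeas : MeasurableSet {ω | X ω 0 ∈ A} := (hXt 0) hA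
    have hsum := measure_add_measure_compl (μ := P) hmeas
    rw [hPA, zero_add, ← hset, h2, measure_univ] at hsum
    have h3 : ∫ y in Aᶜ, q y = 1 := ENNReal.ofReal_eq_one.1 hsum
    linarith
  have hqx_nonneg : 0 ≤ q x := by
    by_contra hcon
    push_neg at hcon
    have hqcx : ContinuousAt q x := hqc.continuousAt (Ioo_mem_nhds (by linarith) (by linarith))
    obtain ⟨d2, hd2, hb2⟩ := Metric.continuousAt_iff.1 hqcx (-(q x)/2) (by linarith)
    have hkey : ∀ y ∈ Icc (x - d2/2) (x + d2/2), q y ≤ q x / 2 := by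
      intro y hy
      have h1 : dist y x < d2 := by
        rw [Real.dist_eq]
        have : |y - x| ≤ d2/2 := abs_le.2 ⟨by linarith [hy.1], by linarith [hy.2]⟩
        linarith
      have h4 := hb2 h1
      rw [Real.dist_eq] at h4
      have h5 := (abs_lt.1 h4).2
      linarith
    have hle : ∫ y in Icc (x - d2/2) (x + d2/2), q y
        ≤ ∫ _y in Icc (x - d2/2) (x + d2/2), q x / 2 := by
      apply setIntegral_mono_on hqint.integrableOn
        (integrableOn_const (by rw [Real.volume_Icc]; exact ENNReal.ofReal_ne_top))
        measurableSet_Icc hkey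
    rw [setIntegral_const, measureReal_def, Real.volume_Icc, ENNReal.toReal_ofReal (by linarith), smul_eq_mul] at hle
    have hpos := hq_setint_nonneg (Icc (x - d2/2) (x + d2/2)) measurableSet_Icc
    nlinarith
  -- occupation times: expression as a lintegral
  have hocc_lint : ∀ (δ : ℝ) (ω : Ω), volume {t : ℝ | t ∈ Ioo 0 H ∧ X ω t ∈ Icc (x-δ) (x+δ)}
      = ∫⁻ t in Ioo 0 H, (Icc (x-δ) (x+δ)).indicator (fun _ => (1:ℝ≥0∞)) (X ω t) := by
    intro δ ω
    have hpre : MeasurableSet (X ω ⁻¹' (Icc (x-δ) (x+δ))) := hXsec ω measurableSet_Icc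
    have hform : (fun t => (Icc (x-δ) (x+δ)).indicator (fun _ => (1:ℝ≥0∞)) (X ω t))
        = fun t => (X ω ⁻¹' (Icc (x-δ) (x+δ))).indicator (fun _ => 1) t := by
      ext t
      by_cases h : X ω t ∈ Icc (x-δ) (x+δ)
      · rw [Set.indicator_of_mem h,
          Set.indicator_of_mem (show t ∈ X ω ⁻¹' (Icc (x-δ) (x+δ)) from h)]
      · rw [Set.indicator_of_notMem h,
          Set.indicator_of_notMem (show t ∉ X ω ⁻¹' (Icc (x-δ) (x+δ)) from h)]
    rw [hform, lintegral_indicator hpre, setLIntegral_one, Measure.restrict_apply hpre]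
    congr 1
    ext t
    simp only [mem_setOf_eq, mem_inter_iff, mem_preimage]
    exact and_comm
  have hindmeas : ∀ δ : ℝ, Measurable (fun p : Ω × ℝ =>
      (Icc (x-δ) (x+δ)).indicator (fun _ => (1:ℝ≥0∞)) (Function.uncurry X p)) :=
    fun δ => (measurable_const.indicator measurableSet_Icc).comp hX
  have hocc_meas : ∀ δ : ℝ,
      Measurable (fun ω => volume {t : ℝ | t ∈ Ioo 0 H ∧ X ω t ∈ Icc (x-δ) (x+δ)}) := by
    intro δ
    have heq : (fun ω => volume {t : ℝ | t ∈ Ioo 0 H ∧ X ω t ∈ Icc (x-δ) (x+δ)})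
        = fun ω => ∫⁻ t, (fun p : Ω × ℝ =>
            (Icc (x-δ) (x+δ)).indicator (fun _ => (1:ℝ≥0∞)) (Function.uncurry X p)) (ω, t)
          ∂(volume.restrict (Ioo 0 H)) := by
      funext ω; exact hocc_lint δ ω
    rw [heq]
    exact Measurable.lintegral_prod_right' (hindmeas δ)
  have hocc_le : ∀ (δ : ℝ) ω, volume {t : ℝ | t ∈ Ioo 0 H ∧ X ω t ∈ Icc (x-δ) (x+δ)}
      ≤ ENNReal.ofReal H := by
    intro δ ω
    calc volume {t : ℝ | t ∈ Ioo 0 H ∧ X ω t ∈ Icc (x-δ) (x+δ)} ≤ volume (Ioo 0 H) :=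
          measure_mono (fun t ht => ht.1)
      _ = ENNReal.ofReal H := by rw [Real.volume_Ioo, sub_zero]
  -- Tonelli
  have hTon : ∀ δ : ℝ, ∫⁻ ω, volume {t : ℝ | t ∈ Ioo 0 H ∧ X ω t ∈ Icc (x-δ) (x+δ)} ∂P
      = ENNReal.ofReal (∫ y in Icc (x-δ) (x+δ), q y) * ENNReal.ofReal H := by
    intro δ
    calc ∫⁻ ω, volume {t : ℝ | t ∈ Ioo 0 H ∧ X ω t ∈ Icc (x-δ) (x+δ)} ∂P
        = ∫⁻ ω, (∫⁻ t in Ioo 0 H,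
            (Icc (x-δ) (x+δ)).indicator (fun _ => (1:ℝ≥0∞)) (X ω t)) ∂P :=
          lintegral_congr (fun ω => hocc_lint δ ω)
      _ = ∫⁻ t in Ioo 0 H, (∫⁻ ω,
            (Icc (x-δ) (x+δ)).indicator (fun _ => (1:ℝ≥0∞)) (X ω t) ∂P) :=
          lintegral_lintegral_swap (hindmeas δ).aemeasurable
      _ = ∫⁻ _t in Ioo 0 H, ENNReal.ofReal (∫ y in Icc (x-δ) (x+δ), q y) := by
          apply setLIntegral_congr_fun measurableSet_Ioo
          intro t ht
          have hform : (fun ω => (Icc (x-δ) (x+δ)).indicator (fun _ => (1:ℝ≥0∞)) (X ω t))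
              = fun ω => ({ω | X ω t ∈ Icc (x-δ) (x+δ)}).indicator (fun _ => 1) ω := by
            ext ω
            by_cases h : X ω t ∈ Icc (x-δ) (x+δ)
            · rw [Set.indicator_of_mem h,
                Set.indicator_of_mem (show ω ∈ {ω | X ω t ∈ Icc (x-δ) (x+δ)} from h)]
            · rw [Set.indicator_of_notMem h,
                Set.indicator_of_notMem (show ω ∉ {ω | X ω t ∈ Icc (x-δ) (x+δ)} from h)]
          beta_reduce
          rw [hform, lintegral_indicator (show MeasurableSet {ω | X ω t ∈ Icc (x-δ) (x+δ)} from (hXt t) measurableSet_Icc), setLIntegral_one,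
            hlaw t ⟨ht.1.le, ht.2.le⟩ _ measurableSet_Icc]
      _ = ENNReal.ofReal (∫ y in Icc (x-δ) (x+δ), q y) * ENNReal.ofReal H := by
          rw [setLIntegral_const, Real.volume_Ioo, sub_zero]
  -- positivity and bounds for T δ
  have hrinv_int : ∀ δ : ℝ, 0 < δ → δ ≤ dstar →
      IntegrableOn (fun y => |r y|⁻¹) (Icc (x-δ) (x+δ)) := by
    intro δ hδ hδd
    apply ContinuousOn.integrableOn_compact isCompact_Icc
    apply ((hrcOn.mono (Icc_subset_Icc (by linarith) (by linarith))).abs).inv₀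
    intro y hy
    exact abs_ne_zero.2 (hrne y (Icc_subset_Icc (by linarith) (by linarith) hy))
  have hTpos : ∀ δ : ℝ, 0 < δ → δ ≤ dstar → 0 < ∫ y in Icc (x-δ) (x+δ), |r y|⁻¹ := by
    intro δ hδ hδd
    have hc : (0:ℝ) < (3/2 * |r x|)⁻¹ := by positivity
    have hlow : ∀ y ∈ Icc (x-δ) (x+δ), (3/2 * |r x|)⁻¹ ≤ |r y|⁻¹ := by
      intro y hy
      have hyb : y ∈ Icc (x - dstar) (x + dstar) :=
        Icc_subset_Icc (by linarith) (by linarith) hy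
      have h1 := (hband_r y hyb).2
      have h2 := (hband_r y hyb).1
      apply inv_anti₀ (by linarith) (le_of_lt h1)
    have hint := hrinv_int δ hδ hδd
    have hmono := setIntegral_mono_on
      (integrableOn_const (by rw [Real.volume_Icc]; exact ENNReal.ofReal_ne_top))
      hint measurableSet_Icc hlow
    rw [setIntegral_const, measureReal_def, Real.volume_Icc, ENNReal.toReal_ofReal (by linarith), smul_eq_mul] at hmono
    have : (0:ℝ) < (x + δ - (x - δ)) * (3/2 * |r x|)⁻¹ := by
      have : x + δ - (x - δ) = 2*δ := by ring
      rw [this]; positivity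
    linarith
  -- a.e. pathwise structure
  have hae : ∀ᵐ ω ∂P, ∃ K : ℕ, K ≤ N ω + 1 ∧ (crossSet H x (X ω)).ncard = K ∧
      ∃ δ₀ > 0, ∀ δ : ℝ, 0 < δ → δ ≤ dstar →
        (volume {t | t ∈ Ioo 0 H ∧ X ω t ∈ Icc (x - δ) (x + δ)}
          ≤ (N ω + 1 : ℝ≥0∞) * ENNReal.ofReal (∫ y in Icc (x-δ) (x+δ), |r y|⁻¹)) ∧
        (δ < δ₀ → volume {t | t ∈ Ioo 0 H ∧ X ω t ∈ Icc (x - δ) (x + δ)}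
          = (K : ℝ≥0∞) * ENNReal.ofReal (∫ y in Icc (x-δ) (x+δ), |r y|⁻¹)) := by
    filter_upwards [hpath] with ω hω
    obtain ⟨τ, g, hτ0, hτN, hτmono, hderiv, hYg, _hYH, havoid⟩ := hω
    exact pathwise_occupation hH hdstar hrne hrcOn (X ω) (N ω) τ g hτ0 hτN hτmono hderiv hYg havoid
  -- the sequence of band widths
  set δn : ℕ → ℝ := fun n => dstar / (n + 1) with hδn_def
  have hδn_pos : ∀ n, 0 < δn n := fun n => by positivity
  have hδn_le : ∀ n, δn n ≤ dstar := by
    intro n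
    rw [hδn_def]
    apply div_le_self hdstar.le
    have : (0:ℝ) ≤ (n:ℝ) := Nat.cast_nonneg n
    linarith
  have hδn0 : Tendsto δn atTop (𝓝 0) := by
    have h1 := tendsto_one_div_add_atTop_nhds_zero_nat.const_mul dstar
    rw [mul_zero] at h1
    apply h1.congr
    intro n
    rw [hδn_def]
    ring
  have hδn_tendsto : Tendsto δn atTop (𝓝[>] 0) :=
    tendsto_nhdsWithin_iff.2 ⟨hδn0, Eventually.of_forall hδn_pos⟩
  -- ratio limit
  have hratio := (ratio_tendsto hdstar hqc' hrinvcont hrx).comp hδn_tendsto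
  -- the approximating functions
  set F : ℕ → Ω → ℝ := fun n ω =>
    (volume {t | t ∈ Ioo 0 H ∧ X ω t ∈ Icc (x - δn n) (x + δn n)}).toReal
      / (∫ y in Icc (x - δn n) (x + δn n), |r y|⁻¹) with hFdef
  have hF_meas : ∀ n, AEStronglyMeasurable (F n) P := by
    intro n
    exact (((hocc_meas (δn n)).ennreal_toReal).div_const _).aestronglyMeasurable
  have h_bound : ∀ n, ∀ᵐ ω ∂P, ‖F n ω‖ ≤ (N ω : ℝ) + 1 := by
    intro n
    filter_upwards [hae] with ω hω
    obtain ⟨K, hK, hncard, δ₀, hδ₀pos, hprop⟩ := hω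
    have hTp := hTpos (δn n) (hδn_pos n) (hδn_le n)
    have hb := (hprop (δn n) (hδn_pos n) (hδn_le n)).1
    have hF_nonneg : 0 ≤ F n ω := div_nonneg ENNReal.toReal_nonneg hTp.le
    rw [Real.norm_eq_abs, abs_of_nonneg hF_nonneg]
    have hfin : ((N ω : ℝ≥0∞) + 1) * ENNReal.ofReal (∫ y in Icc (x - δn n) (x + δn n), |r y|⁻¹) ≠ ⊤ :=
      ENNReal.mul_ne_top (by simp) ENNReal.ofReal_ne_top
    have h2 := ENNReal.toReal_mono hfin hb
    rw [ENNReal.toReal_mul, ENNReal.toReal_ofReal hTp.le] at h2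
    have h3 : ((N ω : ℝ≥0∞) + 1).toReal = (N ω : ℝ) + 1 := by
      rw [ENNReal.toReal_add (by simp) (by simp)]
      simp
    rw [h3] at h2
    rw [hFdef]
    rw [div_le_iff₀ hTp]
    exact h2
  have h_lim : ∀ᵐ ω ∂P, Tendsto (fun n => F n ω) atTop
      (𝓝 ((crossSet H x (X ω)).ncard : ℝ)) := by
    filter_upwards [hae] with ω hω
    obtain ⟨K, hK, hncard, δ₀, hδ₀pos, hprop⟩ := hω
    rw [hncard]
    have hev : ∀ᶠ n in atTop, δn n < δ₀ := hδn0.eventually_lt_const hδ₀pos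
    have heq : ∀ᶠ n in atTop, F n ω = (K : ℝ) := by
      filter_upwards [hev] with n hn
      have hTp := hTpos (δn n) (hδn_pos n) (hδn_le n)
      have he := (hprop (δn n) (hδn_pos n) (hδn_le n)).2 hn
      rw [hFdef]
      simp only []
      rw [he, ENNReal.toReal_mul, ENNReal.toReal_ofReal hTp.le, ENNReal.toReal_natCast,
        mul_div_assoc, div_self (ne_of_gt hTp), mul_one]
    exact Tendsto.congr' (by filter_upwards [heq] with n hn; exact hn.symm) tendsto_const_nhds
  have hbound_int : Integrable (fun ω => (N ω : ℝ) + 1) P := hNint.add (integrable_const 1)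
  -- integrability of the crossing number
  have hf_aesm : AEStronglyMeasurable (fun ω => ((crossSet H x (X ω)).ncard : ℝ)) P :=
    aestronglyMeasurable_of_tendsto_ae atTop hF_meas h_lim
  have hf_bound : ∀ᵐ ω ∂P, ‖((crossSet H x (X ω)).ncard : ℝ)‖ ≤ (N ω : ℝ) + 1 := by
    filter_upwards [hae] with ω hω
    obtain ⟨K, hK, hncard, _⟩ := hω
    rw [hncard, Real.norm_eq_abs, abs_of_nonneg (Nat.cast_nonneg K)]
    exact_mod_cast hK
  have hf_int : Integrable (fun ω => ((crossSet H x (X ω)).ncard : ℝ)) P :=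
    Integrable.mono' hbound_int hf_aesm hf_bound
  refine ⟨hf_int, ?_⟩
  -- value of ∫ F n
  have hIntVal : ∀ n, ∫ ω, F n ω ∂P
      = (∫ y in Icc (x - δn n) (x + δn n), q y) * H / (∫ y in Icc (x - δn n) (x + δn n), |r y|⁻¹) := by
    intro n
    rw [hFdef]
    simp only []
    rw [integral_div]
    congr 1
    rw [integral_toReal ((hocc_meas (δn n)).aemeasurable)
      (ae_of_all _ (fun ω => lt_of_le_of_lt (hocc_le (δn n) ω) ENNReal.ofReal_lt_top))]
    rw [hTon (δn n), ENNReal.toReal_mul,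
      ENNReal.toReal_ofReal (hq_setint_nonneg _ measurableSet_Icc),
      ENNReal.toReal_ofReal hH.le]
  -- dominated convergence
  have hDCT := tendsto_integral_of_dominated_convergence _ hF_meas hbound_int h_bound h_lim
  have hlim2 : Tendsto (fun n => ∫ ω, F n ω ∂P) atTop (𝓝 (H * (q x * |r x|))) := by
    have h1 := hratio.const_mul H
    apply h1.congr
    intro n
    rw [hIntVal n]
    simp only [Function.comp]
    ring
  have := tendsto_nhds_unique hDCT hlim2
  rw [this]
  ring
end

section
/- Let H > 0, d ≥ 1, ρ : ℝ^d → ℝ continuously differentiable, S = ρ⁻¹({0}), and r : ℝ^d → ℝ^d continuous with ⟨r(z), ∇ρ(z)⟩ ≠ 0 for every z ∈ S. Let γ : [0,H] → ℝ^d be a piecewise integral curve of r with jump times 0 = t₀ < t₁ < ⋯ < t_k < t_{k+1} = H and pieces g_i, avoiding S at endpoints and jumps. Then the continuous crossing set C_S(γ) is finite and (1/(2δ)) ∫₀^H |⟨r(γ(t)), ∇ρ(γ(t))⟩| · 1_{|ρ(γ(t))| ≤ δ} dt tends to the cardinality of C_S(γ) as δ → 0⁺. (Pathwise Kac counting formula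 for hypersurface crossings via a defining function.) -/
open MeasureTheory Filter Set Topology RealInnerProductSpace

lemma kacLocal (z ε δ : ℝ) (hε : 0 < ε) (hδ : 0 < δ)
    (φ ψ : ℝ → ℝ)
    (hder : ∀ s ∈ Icc (z-ε) (z+ε), HasDerivWithinAt φ (ψ s) (Icc (z-ε) (z+ε)) s)
    (hψc : ContinuousOn ψ (Icc (z-ε) (z+ε)))
    (hψpos : ∀ s ∈ Icc (z-ε) (z+ε), 0 < ψ s)
    (hφz : φ z = 0)
    (hl : δ < |φ (z-ε)|) (hr : δ < |φ (z+ε)|) :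
    ∃ α β : ℝ, α ≤ β ∧ Icc α β ⊆ Ioo (z-ε) (z+ε) ∧
      {s ∈ Icc (z-ε) (z+ε) | |φ s| ≤ δ} = Icc α β ∧
      ∫ s in Icc α β, |ψ s| = 2 * δ := by
  have hz1 : z - ε < z := by linarith
  have hz2 : z < z + ε := by linarith
  have hzm : z ∈ Icc (z-ε) (z+ε) := ⟨hz1.le, hz2.le⟩
  have hab : z - ε ≤ z + ε := by linarith
  have hφc : ContinuousOn φ (Icc (z-ε) (z+ε)) := fun s hs =>
    (hder s hs).continuousWithinAt
  have hdAt : ∀ s ∈ Ioo (z-ε) (z+ε), HasDerivAt φ (ψ s) s := by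
    intro s hs
    exact (hder s (Ioo_subset_Icc_self hs)).hasDerivAt (Icc_mem_nhds hs.1 hs.2)
  have hmono : StrictMonoOn φ (Icc (z-ε) (z+ε)) := by
    apply strictMonoOn_of_deriv_pos (convex_Icc _ _) hφc
    intro s hs
    rw [interior_Icc] at hs
    rw [(hdAt s hs).deriv]
    exact hψpos s (Ioo_subset_Icc_self hs)
  have hφl : φ (z-ε) < 0 := by
    have := hmono ⟨le_refl _, hab⟩ hzm hz1
    rwa [hφz] at this
  have hφr : 0 < φ (z+ε) := by
    have := hmono hzm ⟨hab, le_refl _⟩ hz2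
    rwa [hφz] at this
  rw [abs_of_neg hφl] at hl
  rw [abs_of_pos hφr] at hr
  -- find α with φ α = -δ
  obtain ⟨α, hαm, hφα⟩ : ∃ α ∈ Icc (z-ε) z, φ α = -δ := by
    have := intermediate_value_Icc hz1.le (hφc.mono (Icc_subset_Icc le_rfl hz2.le))
    exact this ⟨by linarith, by rw [hφz]; linarith⟩
  obtain ⟨β, hβm, hφβ⟩ : ∃ β ∈ Icc z (z+ε), φ β = δ := by
    have := intermediate_value_Icc hz2.le (hφc.mono (Icc_subset_Icc hz1.le le_rfl))
    exact this ⟨by rw [hφz]; linarith, by linarith⟩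
  have hαI : α ∈ Icc (z-ε) (z+ε) := ⟨hαm.1, le_trans hαm.2 hz2.le⟩
  have hβI : β ∈ Icc (z-ε) (z+ε) := ⟨le_trans hz1.le hβm.1, hβm.2⟩
  have hαβ : α ≤ β := le_trans hαm.2 hβm.1
  have hα1 : z - ε < α := by
    rcases eq_or_lt_of_le hαm.1 with h | h
    · exfalso; rw [← h] at hφα; linarith
    · exact h
  have hβ2 : β < z + ε := by
    rcases eq_or_lt_of_le hβm.2 with h | h
    · exfalso; rw [h] at hφβ; linarith
    · exact h
  have hsub : Icc α β ⊆ Ioo (z-ε) (z+ε) := fun s hs =>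
    ⟨lt_of_lt_of_le hα1 hs.1, lt_of_le_of_lt hs.2 hβ2⟩
  have hsubI : Icc α β ⊆ Icc (z-ε) (z+ε) := hsub.trans Ioo_subset_Icc_self
  refine ⟨α, β, hαβ, hsub, ?_, ?_⟩
  · ext s
    simp only [Set.mem_setOf_eq, Set.mem_sep_iff, Set.mem_Icc]
    constructor
    · rintro ⟨hs, habs⟩
      rw [abs_le] at habs
      constructor
      · by_contra h
        push_neg at h
        have := hmono hs hαI h
        rw [hφα] at this; linarith [habs.1]
      · by_contra h
        push_neg at h
        have := hmono hβI hs h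
        rw [hφβ] at this; linarith [habs.2]
    · intro hs
      have hsI : s ∈ Icc (z-ε) (z+ε) := hsubI hs
      refine ⟨hsI, ?_⟩
      rw [abs_le]
      constructor
      · rw [← hφα]; exact hmono.monotoneOn hαI hsI hs.1
      · rw [← hφβ]; exact hmono.monotoneOn hsI hβI hs.2
  · have h1 : ∫ s in Icc α β, |ψ s| = ∫ s in Icc α β, ψ s := by
      apply setIntegral_congr_fun measurableSet_Icc
      intro s hs
      exact abs_of_pos (hψpos s (hsubI hs))
    rw [h1]
    have h2 : ∫ s in Icc α β, ψ s = ∫ s in α..β, ψ s := by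
      rw [intervalIntegral.integral_of_le hαβ]
      exact setIntegral_congr_set Ioc_ae_eq_Icc.symm
    rw [h2]
    rw [intervalIntegral.integral_eq_sub_of_hasDerivAt_of_le hαβ
      (hφc.mono hsubI)
      (fun s hs => hdAt s (hsub (Ioo_subset_Icc_self hs)))
      ((hψc.mono hsubI).intervalIntegrable_of_Icc hαβ)]
    rw [hφα, hφβ]; ring

lemma kacLocalAbs (z ε δ : ℝ) (hε : 0 < ε) (hδ : 0 < δ)
    (φ ψ : ℝ → ℝ)
    (hder : ∀ s ∈ Icc (z-ε) (z+ε), HasDerivWithinAt φ (ψ s) (Icc (z-ε) (z+ε)) s)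
    (hψc : ContinuousOn ψ (Icc (z-ε) (z+ε)))
    (hsign : ∀ s ∈ Icc (z-ε) (z+ε), 0 < ψ s * ψ z)
    (hφz : φ z = 0)
    (hl : δ < |φ (z-ε)|) (hr : δ < |φ (z+ε)|) :
    ∃ α β : ℝ, α ≤ β ∧ Icc α β ⊆ Ioo (z-ε) (z+ε) ∧
      {s ∈ Icc (z-ε) (z+ε) | |φ s| ≤ δ} = Icc α β ∧
      ∫ s in Icc α β, |ψ s| = 2 * δ := by
  have hzm : z ∈ Icc (z-ε) (z+ε) := ⟨by linarith, by linarith⟩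
  have hψz : ψ z ≠ 0 := by
    intro h
    have := hsign z hzm
    rw [h] at this; simp at this
  rcases hψz.lt_or_gt with hneg | hpos
  · -- ψ z < 0 : apply to -φ, -ψ
    obtain ⟨α, β, h1, h2, h3, h4⟩ := kacLocal z ε δ hε hδ (fun s => -φ s) (fun s => -ψ s)
      (fun s hs => (hder s hs).neg)
      (hψc.neg)
      (fun s hs => by
        have h := hsign s hs
        show 0 < -ψ s
        nlinarith)
      (by show -φ z = 0; rw [hφz]; ring)
      (by rwa [abs_neg]) (by rwa [abs_neg])
    refine ⟨α, β, h1, h2, ?_, ?_⟩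
    · rw [← h3]; ext s; simp [abs_neg]
    · rw [← h4]; congr 1; ext s; rw [abs_neg]
  · exact kacLocal z ε δ hε hδ φ ψ hder hψc
      (fun s hs => by nlinarith [hsign s hs]) hφz hl hr

lemma kacOneD (a b : ℝ) (hab : a < b) (φ ψ : ℝ → ℝ)
    (hder : ∀ s ∈ Icc a b, HasDerivWithinAt φ (ψ s) (Icc a b) s)
    (hψc : ContinuousOn ψ (Icc a b))
    (hpa : φ a ≠ 0) (hpb : φ b ≠ 0)
    (hnz : ∀ s ∈ Icc a b, φ s = 0 → ψ s ≠ 0) :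
    {s ∈ Ioo a b | φ s = 0}.Finite ∧
    ∀ᶠ δ in 𝓝[>] (0:ℝ),
      (∫ s in Icc a b, |ψ s| * ({u ∈ Icc a b | |φ u| ≤ δ}.indicator (fun _ => (1:ℝ)) s))
        = 2 * δ * ({s ∈ Ioo a b | φ s = 0}.ncard) := by
  have hφc : ContinuousOn φ (Icc a b) := fun s hs => (hder s hs).continuousWithinAt
  set Z : Set ℝ := {s ∈ Ioo a b | φ s = 0} with hZ
  have hZIcc : Z = Icc a b ∩ φ ⁻¹' {0} := by
    ext s
    simp only [hZ, Set.mem_sep_iff, Set.mem_inter_iff, Set.mem_preimage, Set.mem_singleton_iff]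
    constructor
    · rintro ⟨hs, h0⟩; exact ⟨Ioo_subset_Icc_self hs, h0⟩
    · rintro ⟨hs, h0⟩
      refine ⟨⟨hs.1.lt_of_ne ?_, hs.2.lt_of_ne ?_⟩, h0⟩
      · rintro rfl; exact hpa h0
      · rintro rfl; exact hpb h0
  have hZclosed : IsClosed Z := by
    rw [hZIcc]
    exact hφc.preimage_isClosed_of_isClosed isClosed_Icc isClosed_singleton
  have hZsub : Z ⊆ Icc a b := by rw [hZIcc]; exact Set.inter_subset_left
  have hZIoo : Z ⊆ Ioo a b := fun s hs => hs.1
  -- isolation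
  have hiso : ∀ z ∈ Z, ∀ᶠ s in 𝓝[Icc a b] z, φ s = 0 → s = z := by
    intro z hz
    have hzI : z ∈ Icc a b := hZsub hz
    have hψz : ψ z ≠ 0 := hnz z hzI hz.2
    have hlo := hasDerivWithinAt_iff_isLittleO.1 (hder z hzI)
    have hc : (0:ℝ) < |ψ z| / 2 := by positivity
    filter_upwards [hlo.def hc] with s hs hφs
    rw [hφs, hz.2] at hs
    simp only [neg_zero, zero_sub, smul_eq_mul, Real.norm_eq_abs, abs_neg, abs_mul] at hs
    by_contra hne
    have h1 : 0 < |s - z| := abs_pos.2 (sub_ne_zero.2 hne)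
    have h2 : 0 < |ψ z| := abs_pos.2 hψz
    nlinarith
  -- finiteness
  have hfin : Z.Finite := by
    by_contra hinf
    have hinf' : Z.Infinite := hinf
    obtain ⟨x, hxI, hacc⟩ := hinf'.exists_accPt_of_subset_isCompact isCompact_Icc hZsub
    have hxZ : x ∈ Z := by
      rw [← hZclosed.closure_eq]
      rw [mem_closure_iff_frequently]
      have := accPt_iff_frequently.1 hacc
      exact this.mono fun y hy => hy.2
    have hfreq : ∃ᶠ y in 𝓝[Icc a b] x, y ≠ x ∧ y ∈ Z := by
      rw [frequently_nhdsWithin_iff]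
      have := accPt_iff_frequently.1 hacc
      exact this.mono fun y hy => ⟨hy, hZsub hy.2⟩
    obtain ⟨y, hy1, hy2⟩ := (hfreq.and_eventually (hiso x hxZ)).exists
    exact hy1.1 (hy2 hy1.2.2)
  refine ⟨hfin, ?_⟩
  -- choose local eps
  have hloc : ∀ z ∈ Z, ∃ e > 0, Icc (z-e) (z+e) ⊆ Ioo a b ∧
      ∀ s ∈ Icc (z-e) (z+e), 0 < ψ s * ψ z := by
    intro z hz
    have hzI : z ∈ Ioo a b := hZIoo hz
    have hψz : ψ z ≠ 0 := hnz z (hZsub hz) hz.2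
    have hca : ContinuousAt ψ z :=
      (hψc z (hZsub hz)).continuousAt (Icc_mem_nhds hzI.1 hzI.2)
    have hca2 : ContinuousAt (fun s => ψ s * ψ z) z := hca.mul continuousAt_const
    have hpos : (0:ℝ) < ψ z * ψ z := mul_self_pos.2 hψz
    have hev : ∀ᶠ s in 𝓝 z, 0 < ψ s * ψ z := hca2.eventually (eventually_gt_nhds hpos)
    have hIoo : Ioo a b ∈ 𝓝 z := isOpen_Ioo.mem_nhds hzI
    obtain ⟨e, he, hball⟩ := Metric.mem_nhds_iff.1 (Filter.inter_mem hIoo hev)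
    refine ⟨e/2, by positivity, ?_, ?_⟩
    · intro s hs
      have : s ∈ Metric.ball z e := by
        rw [Real.ball_eq_Ioo]
        constructor <;> [linarith [hs.1]; linarith [hs.2]]
      exact (hball this).1
    · intro s hs
      have : s ∈ Metric.ball z e := by
        rw [Real.ball_eq_Ioo]
        constructor <;> [linarith [hs.1]; linarith [hs.2]]
      exact (hball this).2
  classical
  choose! e he0 heP using hloc
  set F : Finset ℝ := hfin.toFinset with hF
  have hFmem : ∀ {z : ℝ}, z ∈ F ↔ z ∈ Z := fun {z} => hfin.mem_toFinset
  obtain ⟨ε, hε, hεe, hεgap⟩ : ∃ ε > 0, (∀ z ∈ Z, ε ≤ e z) ∧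
      (∀ z ∈ Z, ∀ z' ∈ Z, z ≠ z' → 2 * ε ≤ |z - z'|) := by
    set T : Finset ℝ := insert 1 (F.image e ∪
      ((F ×ˢ F).filter (fun p => p.1 ≠ p.2)).image (fun p => |p.1 - p.2| / 2)) with hT
    have hTne : T.Nonempty := ⟨1, Finset.mem_insert_self _ _⟩
    refine ⟨T.min' hTne, ?_, ?_, ?_⟩
    · have hTpos : ∀ x ∈ T, 0 < x := by
        intro x hx
        rw [hT] at hx
        simp only [Finset.mem_insert, Finset.mem_union, Finset.mem_image, Finset.mem_filter,
          Finset.mem_product] at hx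
        rcases hx with h1 | ⟨z, hz, hez⟩ | ⟨q, ⟨⟨hq1, hq2⟩, hqne⟩, hqe⟩
        · rw [h1]; norm_num
        · rw [← hez]; exact he0 z (hFmem.1 hz)
        · rw [← hqe]
          have : q.1 - q.2 ≠ 0 := sub_ne_zero.2 hqne
          have := abs_pos.2 this
          linarith
      exact hTpos _ (T.min'_mem hTne)
    · intro z hz
      apply T.min'_le
      rw [hT]
      exact Finset.mem_insert_of_mem (Finset.mem_union_left _
        (Finset.mem_image_of_mem e (hFmem.2 hz)))
    · intro z hz z' hz' hne
      have hmm : |z - z'| / 2 ∈ T := by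
        rw [hT]
        refine Finset.mem_insert_of_mem (Finset.mem_union_right _ ?_)
        refine Finset.mem_image.2 ⟨(z, z'), ?_, rfl⟩
        rw [Finset.mem_filter, Finset.mem_product]
        exact ⟨⟨hFmem.2 hz, hFmem.2 hz'⟩, hne⟩
      have := T.min'_le _ hmm
      linarith
  have hIccsub : ∀ z ∈ Z, Icc (z-ε) (z+ε) ⊆ Ioo a b := by
    intro z hz
    refine Set.Subset.trans ?_ (heP z hz).1
    apply Icc_subset_Icc <;> [linarith [hεe z hz]; linarith [hεe z hz]]
  have hsign' : ∀ z ∈ Z, ∀ s ∈ Icc (z-ε) (z+ε), 0 < ψ s * ψ z := by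
    intro z hz s hs
    refine (heP z hz).2 s ?_
    have h1 := hεe z hz
    exact ⟨by linarith [hs.1], by linarith [hs.2]⟩
  set U : Set ℝ := ⋃ z ∈ F, Ioo (z-ε) (z+ε) with hU
  set K : Set ℝ := Icc a b \ U with hKdef
  have hKne0 : ∀ s ∈ K, φ s ≠ 0 := by
    intro s hs h0
    have hsZ : s ∈ Z := by rw [hZIcc]; exact ⟨hs.1, h0⟩
    apply hs.2
    rw [hU]
    exact Set.mem_biUnion (hFmem.2 hsZ) ⟨by linarith [hε], by linarith [hε]⟩
  have hKcl : IsClosed K := isClosed_Icc.sdiff (isOpen_biUnion fun z _ => isOpen_Ioo)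
  have hKcp : IsCompact K := isCompact_Icc.of_isClosed_subset hKcl diff_subset
  have hKne : K.Nonempty := by
    refine ⟨a, left_mem_Icc.2 hab.le, fun hmem => ?_⟩
    rw [hU] at hmem
    obtain ⟨z, hzF, hzm⟩ := Set.mem_iUnion₂.1 hmem
    have := hIccsub z (hFmem.1 hzF) (Ioo_subset_Icc_self hzm)
    exact lt_irrefl a this.1
  obtain ⟨x₀, hx₀K, hx₀min⟩ := hKcp.exists_isMinOn hKne ((hφc.mono diff_subset).abs)
  set m : ℝ := |φ x₀| with hmdef
  have hm : 0 < m := abs_pos.2 (hKne0 x₀ hx₀K)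
  have hKlb : ∀ s ∈ K, m ≤ |φ s| := fun s hs => hx₀min hs
  have hendK : ∀ z ∈ Z, (z - ε) ∈ K ∧ (z + ε) ∈ K := by
    intro z hz
    have hzIoo := hIccsub z hz
    have h1 : z - ε ∈ Icc a b := Ioo_subset_Icc_self (hzIoo ⟨le_refl _, by linarith⟩)
    have h2 : z + ε ∈ Icc a b := Ioo_subset_Icc_self (hzIoo ⟨by linarith, le_refl _⟩)
    have key : ∀ w : ℝ, |w - z| = ε → w ∉ U := by
      intro w hw hmem
      rw [hU] at hmem
      obtain ⟨z', hz'F, hz'm⟩ := Set.mem_iUnion₂.1 hmem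
      have hz'Z := hFmem.1 hz'F
      have habs : |w - z'| < ε := by
        rw [abs_lt]; constructor <;> [linarith [hz'm.1]; linarith [hz'm.2]]
      rcases eq_or_ne z z' with rfl | hne
      · rw [hw] at habs; linarith
      · have := hεgap z hz z' hz'Z hne
        have htri : |z - z'| ≤ |w - z| + |w - z'| := by
          have := abs_sub_abs_le_abs_sub (z - z') 0
          calc |z - z'| = |(w - z') - (w - z)| := by ring_nf
            _ ≤ |w - z'| + |w - z| := abs_sub _ _
            _ = |w - z| + |w - z'| := by ring
        rw [hw] at htri
        linarith
    constructor
    · exact ⟨h1, key _ (by rw [abs_of_nonpos (by linarith)]; ring) ⟩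
    · exact ⟨h2, key _ (by rw [abs_of_nonneg (by linarith)]; ring) ⟩
  filter_upwards [Ioo_mem_nhdsGT hm] with δ hδm
  have hδ : 0 < δ := hδm.1
  set E : Set ℝ := {u ∈ Icc a b | |φ u| ≤ δ} with hE
  have hex : ∀ z ∈ F, ∃ q : ℝ × ℝ, q.1 ≤ q.2 ∧ Icc q.1 q.2 ⊆ Ioo (z-ε) (z+ε) ∧
      {s ∈ Icc (z-ε) (z+ε) | |φ s| ≤ δ} = Icc q.1 q.2 ∧
      (∫ s in Icc q.1 q.2, |ψ s|) = 2 * δ := by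
    intro z hzF
    have hzZ := hFmem.1 hzF
    have hsubIcc : Icc (z-ε) (z+ε) ⊆ Icc a b :=
      (hIccsub z hzZ).trans Ioo_subset_Icc_self
    obtain ⟨α, β, h1, h2, h3, h4⟩ := kacLocalAbs z ε δ hε hδ φ ψ
      (fun s hs => (hder s (hsubIcc hs)).mono hsubIcc)
      (hψc.mono hsubIcc)
      (hsign' z hzZ)
      hzZ.2
      (lt_of_lt_of_le hδm.2 (hKlb _ (hendK z hzZ).1))
      (lt_of_lt_of_le hδm.2 (hKlb _ (hendK z hzZ).2))
    exact ⟨(α, β), h1, h2, h3, h4⟩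
  choose! q hq1 hq2 hq3 hq4 using hex
  have hqIcc : ∀ z ∈ F, Icc (q z).1 (q z).2 ⊆ Icc a b := fun z hz =>
    (hq2 z hz).trans (Ioo_subset_Icc_self.trans
      ((hIccsub z (hFmem.1 hz)).trans Ioo_subset_Icc_self))
  have hEeq : E = ⋃ z ∈ F, Icc (q z).1 (q z).2 := by
    ext s
    constructor
    · intro hs
      have hsK : s ∉ K := by
        intro hK
        have := hKlb s hK
        have := hs.2
        linarith [hδm.2]
      have hsU : s ∈ U := by
        by_contra hnotU
        exact hsK ⟨hs.1, hnotU⟩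
      rw [hU] at hsU
      obtain ⟨z, hzF, hzm⟩ := Set.mem_iUnion₂.1 hsU
      refine Set.mem_biUnion hzF ?_
      rw [← hq3 z hzF]
      exact ⟨Ioo_subset_Icc_self hzm, hs.2⟩
    · intro hs
      obtain ⟨z, hzF, hzm⟩ := Set.mem_iUnion₂.1 hs
      rw [← hq3 z hzF] at hzm
      exact ⟨((hIccsub z (hFmem.1 hzF)).trans Ioo_subset_Icc_self) hzm.1, hzm.2⟩
  have hEmeas : MeasurableSet E := by
    rw [hEeq]
    exact F.measurableSet_biUnion (fun z _ => measurableSet_Icc)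
  have hdisj : Set.Pairwise (↑F) (Function.onFun Disjoint (fun z => Icc (q z).1 (q z).2)) := by
    intro z hz z' hz' hne
    have hgap := hεgap z (hFmem.1 hz) z' (hFmem.1 hz') hne
    refine Set.disjoint_left.2 fun s hs hs' => ?_
    have h1 := hq2 z hz hs
    have h2 := hq2 z' hz' hs'
    rcases abs_cases (z - z') with ⟨he, _⟩ | ⟨he, _⟩ <;>
      [linarith [h1.1, h1.2, h2.1, h2.2, hgap, he]; linarith [h1.1, h1.2, h2.1, h2.2, hgap, he]]
  have hint : (fun s => |ψ s| * (E.indicator (fun _ => (1:ℝ)) s)) =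
      fun s => E.indicator (fun u => |ψ u|) s := by
    funext s
    by_cases h : s ∈ E <;> simp [Set.indicator_of_mem, Set.indicator_of_notMem, h]
  calc (∫ s in Icc a b, |ψ s| * (E.indicator (fun _ => (1:ℝ)) s))
      = ∫ s in Icc a b, E.indicator (fun u => |ψ u|) s := by rw [hint]
    _ = ∫ s in Icc a b ∩ E, |ψ s| := setIntegral_indicator hEmeas
    _ = ∫ s in E, |ψ s| := by
        rw [Set.inter_eq_self_of_subset_right (fun s hs => hs.1)]
    _ = ∑ z ∈ F, ∫ s in Icc (q z).1 (q z).2, |ψ s| := by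
        rw [hEeq]
        exact integral_biUnion_finset F (fun z _ => measurableSet_Icc) hdisj
          (fun z hz => ((hψc.mono (hqIcc z hz)).abs).integrableOn_Icc)
    _ = ∑ z ∈ F, 2 * δ := Finset.sum_congr rfl hq4
    _ = 2 * δ * (Z.ncard : ℝ) := by
        rw [Finset.sum_const, Set.ncard_eq_toFinset_card _ hfin]
        simp [hF, nsmul_eq_mul, mul_comm]

lemma pieceIntegral (a b δ : ℝ) (φ ψ : ℝ → ℝ) (G : ℝ → ℝ) (P : ℝ → Prop)
    (hφc : ContinuousOn φ (Icc a b)) (hψc : ContinuousOn ψ (Icc a b))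
    (hagree : ∀ s ∈ Ioo a b, G s = |ψ s| ∧ (P s ↔ |φ s| ≤ δ)) :
    (IntegrableOn (fun s => G s * ({u | P u}.indicator (fun _ => (1:ℝ)) s)) (Ioc a b)) ∧
    (∫ s in Ioc a b, G s * ({u | P u}.indicator (fun _ => (1:ℝ)) s))
      = ∫ s in Icc a b, |ψ s| * ({u ∈ Icc a b | |φ u| ≤ δ}.indicator (fun _ => (1:ℝ)) s) := by
  set Eset : Set ℝ := {u ∈ Icc a b | |φ u| ≤ δ} with hEset
  have hEclosed : IsClosed Eset := by
    have : Eset = Icc a b ∩ (fun u => |φ u|) ⁻¹' (Iic δ) := by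
      ext u; simp [hEset, Set.mem_sep_iff]
    rw [this]
    exact (hφc.abs).preimage_isClosed_of_isClosed isClosed_Icc isClosed_Iic
  have hEmeas : MeasurableSet Eset := hEclosed.measurableSet
  have hnice : (fun s => |ψ s| * (Eset.indicator (fun _ => (1:ℝ)) s)) =
      fun s => Eset.indicator (fun u => |ψ u|) s := by
    funext s
    by_cases h : s ∈ Eset <;> simp [Set.indicator_of_mem, Set.indicator_of_notMem, h]
  have hnice_int : IntegrableOn (fun s => |ψ s| * (Eset.indicator (fun _ => (1:ℝ)) s)) (Icc a b) := by
    rw [hnice]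
    exact (hψc.abs.integrableOn_Icc).indicator hEmeas
  have haeq : (fun s => G s * ({u | P u}.indicator (fun _ => (1:ℝ)) s))
      =ᵐ[volume.restrict (Ioc a b)]
      (fun s => |ψ s| * (Eset.indicator (fun _ => (1:ℝ)) s)) := by
    rw [Filter.EventuallyEq, ae_restrict_iff' measurableSet_Ioc]
    have h1 : ∀ᵐ s : ℝ, s ≠ b := by
      rw [ae_iff]
      have : {s : ℝ | ¬s ≠ b} = {b} := by ext s; simp
      rw [this]
      exact measure_singleton b
    filter_upwards [h1] with s hsb hs
    have hsIoo : s ∈ Ioo a b := ⟨hs.1, lt_of_le_of_ne hs.2 hsb⟩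
    obtain ⟨hG, hP⟩ := hagree s hsIoo
    by_cases hp : P s
    · rw [Set.indicator_of_mem (show s ∈ {u | P u} from hp),
        Set.indicator_of_mem (show s ∈ Eset from ⟨Ioo_subset_Icc_self hsIoo, hP.1 hp⟩)]
      simp [hG]
    · rw [Set.indicator_of_notMem (show s ∉ {u | P u} from hp),
        Set.indicator_of_notMem (show s ∉ Eset from fun hc => hp (hP.2 hc.2))]
      ring
  refine ⟨((hnice_int.mono_set Ioc_subset_Icc_self).congr haeq.symm), ?_⟩
  rw [integral_congr_ae haeq, setIntegral_congr_set Ioc_ae_eq_Icc]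

lemma ncard_biUnion_range {Z : ℕ → Set ℝ} (n : ℕ) (hfin : ∀ i < n, (Z i).Finite)
    (hdisj : ∀ i j, i < j → j < n → Disjoint (Z i) (Z j)) :
    (⋃ i ∈ Finset.range n, Z i).ncard = ∑ i ∈ Finset.range n, (Z i).ncard := by
  induction n with
  | zero => simp
  | succ n ih =>
    rw [Finset.range_add_one, Finset.sum_insert Finset.notMem_range_self]
    have hU : (⋃ i ∈ insert n (Finset.range n), Z i) = Z n ∪ ⋃ i ∈ Finset.range n, Z i := by
      simp [Set.biUnion_insert]
    rw [hU]
    have hd : Disjoint (Z n) (⋃ i ∈ Finset.range n, Z i) := by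
      refine Set.disjoint_left.2 fun s hs hs' => ?_
      obtain ⟨i, hi, hsi⟩ := Set.mem_iUnion₂.1 hs'
      rw [Finset.mem_range] at hi
      exact Set.disjoint_left.1 (hdisj i n hi (Nat.lt_succ_self n)) hsi hs
    have hfinU : (⋃ i ∈ Finset.range n, Z i).Finite :=
      Set.Finite.biUnion (Finset.range n).finite_toSet
        (fun i hi => hfin i (by simpa using Nat.lt_succ_of_lt (Finset.mem_range.1 hi)))
    rw [Set.ncard_union_eq hd (hfin n (Nat.lt_succ_self n)) hfinU,
      ih (fun i hi => hfin i (Nat.lt_succ_of_lt hi))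
        (fun i j hij hj => hdisj i j hij (Nat.lt_succ_of_lt hj))]

/-- The continuous crossing set of a set `S` by a path `γ` on `(0,H)`. -/
def crossSetS {d : ℕ} (H : ℝ) (S : Set (EuclideanSpace ℝ (Fin d)))
    (γ : ℝ → EuclideanSpace ℝ (Fin d)) : Set ℝ :=
  {s : ℝ | s ∈ Set.Ioo 0 H ∧ ContinuousAt γ s ∧ γ s ∈ S}

/-- **Pathwise Kac counting formula for hypersurface crossings via a defining function.** -/
theorem kac_counting_hypersurface_pathwise
    (d : ℕ) (hd : 1 ≤ d) (H : ℝ) (hH : 0 < H)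
    (ρ : EuclideanSpace ℝ (Fin d) → ℝ) (hρ : ContDiff ℝ 1 ρ)
    (r : EuclideanSpace ℝ (Fin d) → EuclideanSpace ℝ (Fin d)) (hr : Continuous r)
    (hnt : ∀ z, ρ z = 0 → ⟪r z, gradient ρ z⟫ ≠ 0)
    (k : ℕ) (τ : ℕ → ℝ) (g : ℕ → ℝ → EuclideanSpace ℝ (Fin d))
    (γ : ℝ → EuclideanSpace ℝ (Fin d))
    (hτ0 : τ 0 = 0) (hτH : τ (k+1) = H)
    (hτmono : ∀ i ≤ k, τ i < τ (i+1))
    (hderiv : ∀ i ≤ k, ∀ s ∈ Icc (τ i) (τ (i+1)),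
      HasDerivWithinAt (g i) (r (g i s)) (Icc (τ i) (τ (i+1))) s)
    (hγg : ∀ i ≤ k, ∀ s ∈ Ico (τ i) (τ (i+1)), γ s = g i s)
    (hγH : γ H = g k H)
    (havoid : ∀ i ≤ k, ρ (g i (τ i)) ≠ 0 ∧ ρ (g i (τ (i+1))) ≠ 0) :
    (crossSetS H (ρ ⁻¹' {0}) γ).Finite ∧
    Tendsto
      (fun δ : ℝ => (1 / (2 * δ)) *
        ∫ s in Icc (0:ℝ) H,
          |⟪r (γ s), gradient ρ (γ s)⟫| *
            ({u : ℝ | |ρ (γ u)| ≤ δ}.indicator (fun _ => (1:ℝ)) s))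
      (𝓝[>] (0:ℝ))
      (𝓝 (((crossSetS H (ρ ⁻¹' {0}) γ).ncard : ℝ))) := by
  classical
  have hgradc : Continuous (fun x => gradient ρ x) := by
    show Continuous fun x => (InnerProductSpace.toDual ℝ _).symm (fderiv ℝ ρ x)
    exact (LinearIsometryEquiv.continuous _).comp (hρ.continuous_fderiv one_ne_zero)
  have houter : Continuous (fun x => (⟪r x, gradient ρ x⟫ : ℝ)) := hr.inner hgradc
  have hgradinner : ∀ (x v : EuclideanSpace ℝ (Fin d)),
      (⟪gradient ρ x, v⟫ : ℝ) = fderiv ℝ ρ x v := fun x v =>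
    InnerProductSpace.toDual_symm_apply
  have hmono' : ∀ j ≤ k+1, ∀ i ≤ j, τ i ≤ τ j := by
    intro j
    induction j with
    | zero => intro _ i hi; rw [Nat.le_zero.1 hi]
    | succ n ihn =>
      intro hn i hi
      rcases eq_or_lt_of_le hi with h | h
      · rw [h]
      · exact (ihn (by omega) i (by omega)).trans (hτmono n (by omega)).le
  have hτpos : ∀ i ≤ k+1, 0 ≤ τ i := fun i hi => by
    have := hmono' i hi 0 (Nat.zero_le _); rwa [hτ0] at this
  have hτleH : ∀ i ≤ k+1, τ i ≤ H := fun i hi => by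
    have := hmono' (k+1) le_rfl i hi; rwa [hτH] at this
  have hone : ∀ i ≤ k, ({s ∈ Ioo (τ i) (τ (i+1)) | ρ (g i s) = 0} : Set ℝ).Finite ∧
      ∀ᶠ δ in 𝓝[>] (0:ℝ),
      (∫ s in Icc (τ i) (τ (i+1)), |(⟪r (g i s), gradient ρ (g i s)⟫ : ℝ)| *
        ({u ∈ Icc (τ i) (τ (i+1)) | |ρ (g i u)| ≤ δ}.indicator (fun _ => (1:ℝ)) s))
        = 2 * δ * (({s ∈ Ioo (τ i) (τ (i+1)) | ρ (g i s) = 0} : Set ℝ).ncard : ℝ) := by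
    intro i hi
    have hgc : ContinuousOn (g i) (Icc (τ i) (τ (i+1))) := fun s hs =>
      (hderiv i hi s hs).continuousWithinAt
    have hψc : ContinuousOn (fun s => (⟪r (g i s), gradient ρ (g i s)⟫ : ℝ))
        (Icc (τ i) (τ (i+1))) := houter.comp_continuousOn hgc
    have hchain : ∀ s ∈ Icc (τ i) (τ (i+1)), HasDerivWithinAt (fun t => ρ (g i t))
        ((⟪r (g i s), gradient ρ (g i s)⟫ : ℝ)) (Icc (τ i) (τ (i+1))) s := by
      intro s hs
      have h1 : HasFDerivAt ρ (fderiv ℝ ρ (g i s)) (g i s) :=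
        (hρ.differentiable one_ne_zero (g i s)).hasFDerivAt
      have h2 := h1.comp_hasDerivWithinAt s (hderiv i hi s hs)
      have h3 : (⟪r (g i s), gradient ρ (g i s)⟫ : ℝ) = fderiv ℝ ρ (g i s) (r (g i s)) := by
        rw [real_inner_comm]; exact hgradinner _ _
      rw [h3]; exact h2
    exact kacOneD _ _ (hτmono i hi) _ _ hchain hψc (havoid i hi).1 (havoid i hi).2
      (fun s _ h0 => hnt (g i s) h0)
  have hZfin : ∀ i ≤ k, ({s ∈ Ioo (τ i) (τ (i+1)) | ρ (g i s) = 0} : Set ℝ).Finite :=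
    fun i hi => (hone i hi).1
  have hcross : crossSetS H (ρ ⁻¹' {0}) γ
      = ⋃ i ∈ Finset.range (k+1), {s ∈ Ioo (τ i) (τ (i+1)) | ρ (g i s) = 0} := by
    ext s
    simp only [crossSetS, Set.mem_setOf_eq, Set.mem_iUnion, Finset.mem_range, exists_prop,
      Set.mem_preimage, Set.mem_singleton_iff]
    constructor
    · rintro ⟨hs, hcont, h0⟩
      have hcov : ∃ i ≤ k, τ i ≤ s ∧ s < τ (i+1) := by
        have key : ∀ j ≤ k+1, s < τ j → ∃ i ≤ k, τ i ≤ s ∧ s < τ (i+1) := by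
          intro j
          induction j with
          | zero => intro _ hlt; rw [hτ0] at hlt; exact absurd hlt (by linarith [hs.1])
          | succ n ihn =>
            intro hn hlt
            by_cases hc : τ n ≤ s
            · exact ⟨n, by omega, hc, hlt⟩
            · exact ihn (by omega) (not_le.1 hc)
        exact key (k+1) le_rfl (by rw [hτH]; exact hs.2)
      obtain ⟨i, hik, h1, h2⟩ := hcov
      have hne : τ i ≠ s := by
        intro he
        have hg1 := hγg i hik s ⟨h1, h2⟩
        rw [hg1, ← he] at h0
        exact (havoid i hik).1 h0
      refine ⟨i, by omega, ⟨lt_of_le_of_ne h1 hne, h2⟩, ?_⟩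
      rw [← hγg i hik s ⟨h1, h2⟩]; exact h0
    · rintro ⟨i, hik, hsIoo, h0⟩
      have hik' : i ≤ k := by omega
      have hIc : Icc (τ i) (τ (i+1)) ∈ 𝓝 s := Icc_mem_nhds hsIoo.1 hsIoo.2
      have hgAt : ContinuousAt (g i) s :=
        ((hderiv i hik' s (Ioo_subset_Icc_self hsIoo)).hasDerivAt hIc).continuousAt
      have hEq : γ =ᶠ[𝓝 s] g i := by
        filter_upwards [Ioo_mem_nhds hsIoo.1 hsIoo.2] with t ht
        exact hγg i hik' t (Ioo_subset_Ico_self ht)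
      refine ⟨⟨?_, ?_⟩, hgAt.congr hEq.symm, ?_⟩
      · have := hτpos i (by omega); linarith [hsIoo.1]
      · have := hτleH (i+1) (by omega); linarith [hsIoo.2]
      · rw [hγg i hik' s (Ioo_subset_Ico_self hsIoo)]; exact h0
  have hfinCross : (crossSetS H (ρ ⁻¹' {0}) γ).Finite := by
    rw [hcross]
    exact Set.Finite.biUnion (Finset.range (k+1)).finite_toSet
      (fun i hi => hZfin i (by simpa using Nat.lt_succ_iff.1 (Finset.mem_range.1 hi)))
  refine ⟨hfinCross, ?_⟩
  have hZdisj : ∀ i j, i < j → j < k+1 →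
      Disjoint ({s ∈ Ioo (τ i) (τ (i+1)) | ρ (g i s) = 0} : Set ℝ)
        ({s ∈ Ioo (τ j) (τ (j+1)) | ρ (g j s) = 0} : Set ℝ) := by
    intro i j hij hj
    refine Set.disjoint_left.2 fun s hsi hsj => ?_
    have h1 : τ (i+1) ≤ τ j := hmono' j (by omega) (i+1) (by omega)
    have : s < s := hsi.1.2.trans_le (h1.trans hsj.1.1.le)
    exact absurd this (lt_irrefl s)
  have hNcard : ((crossSetS H (ρ ⁻¹' {0}) γ).ncard : ℝ)
      = ∑ i ∈ Finset.range (k+1),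
          (({s ∈ Ioo (τ i) (τ (i+1)) | ρ (g i s) = 0} : Set ℝ).ncard : ℝ) := by
    rw [hcross, ncard_biUnion_range (k+1) (fun i hi => hZfin i (by omega)) hZdisj]
    push_cast
    rfl
  have hIocdecomp : Ioc (0:ℝ) H = ⋃ i ∈ Finset.range (k+1), Ioc (τ i) (τ (i+1)) := by
    ext s
    simp only [Set.mem_iUnion, Finset.mem_range, Set.mem_Ioc, exists_prop]
    constructor
    · rintro ⟨h0, hH'⟩
      have key : ∀ j ≤ k+1, s ≤ τ j → ∃ i ≤ k, τ i < s ∧ s ≤ τ (i+1) := by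
        intro j
        induction j with
        | zero => intro _ hle; rw [hτ0] at hle; exact absurd hle (by linarith)
        | succ n ihn =>
          intro hn hle
          by_cases hc : τ n < s
          · exact ⟨n, by omega, hc, hle⟩
          · exact ihn (by omega) (not_lt.1 hc)
      obtain ⟨i, hik, h1, h2⟩ := key (k+1) le_rfl (by rw [hτH]; exact hH')
      exact ⟨i, by omega, h1, h2⟩
    · rintro ⟨i, hik, h1, h2⟩
      constructor
      · have := hτpos i (by omega); linarith
      · have := hτleH (i+1) (by omega); linarith
  have hIocdisj : Set.Pairwise (↑(Finset.range (k+1)))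
      (Function.onFun Disjoint (fun i => Ioc (τ i) (τ (i+1)))) := by
    intro i hi j hj hne
    simp only [Finset.coe_range, Set.mem_Iio] at hi hj
    rcases lt_or_gt_of_ne hne with h | h
    · refine Set.disjoint_left.2 fun s hs hs' => ?_
      have h1 : τ (i+1) ≤ τ j := hmono' j (by omega) (i+1) (by omega)
      exact absurd (hs.2.trans h1) (not_le.2 hs'.1)
    · refine Set.disjoint_left.2 fun s hs hs' => ?_
      have h1 : τ (j+1) ≤ τ i := hmono' i (by omega) (j+1) (by omega)
      exact absurd (hs'.2.trans h1) (not_le.2 hs.1)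
  have hev := (Filter.eventually_all_finset (Finset.range (k+1))).2
    (fun i hi => (hone i (Nat.lt_succ_iff.1 (Finset.mem_range.1 hi))).2)
  refine Tendsto.congr' ?_ tendsto_const_nhds
  filter_upwards [hev, self_mem_nhdsWithin] with δ hδev hδpos
  rw [Set.mem_Ioi] at hδpos
  have hpieces : ∀ i ∈ Finset.range (k+1),
      (IntegrableOn (fun s => |(⟪r (γ s), gradient ρ (γ s)⟫ : ℝ)| *
        ({u : ℝ | |ρ (γ u)| ≤ δ}.indicator (fun _ => (1:ℝ)) s)) (Ioc (τ i) (τ (i+1)))) ∧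
      (∫ s in Ioc (τ i) (τ (i+1)), |(⟪r (γ s), gradient ρ (γ s)⟫ : ℝ)| *
        ({u : ℝ | |ρ (γ u)| ≤ δ}.indicator (fun _ => (1:ℝ)) s))
        = 2 * δ * (({s ∈ Ioo (τ i) (τ (i+1)) | ρ (g i s) = 0} : Set ℝ).ncard : ℝ) := by
    intro i hi
    have hik : i ≤ k := Nat.lt_succ_iff.1 (Finset.mem_range.1 hi)
    have hgc : ContinuousOn (g i) (Icc (τ i) (τ (i+1))) := fun s hs =>
      (hderiv i hik s hs).continuousWithinAt
    have hψc : ContinuousOn (fun s => (⟪r (g i s), gradient ρ (g i s)⟫ : ℝ))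
        (Icc (τ i) (τ (i+1))) := houter.comp_continuousOn hgc
    have hφc : ContinuousOn (fun s => ρ (g i s)) (Icc (τ i) (τ (i+1))) :=
      (hρ.continuous.comp_continuousOn hgc)
    have hagree : ∀ s ∈ Ioo (τ i) (τ (i+1)),
        |(⟪r (γ s), gradient ρ (γ s)⟫ : ℝ)| = |(⟪r (g i s), gradient ρ (g i s)⟫ : ℝ)| ∧
        ((|ρ (γ s)| ≤ δ) ↔ |ρ (g i s)| ≤ δ) := by
      intro s hs
      rw [hγg i hik s (Ioo_subset_Ico_self hs)]
      exact ⟨rfl, Iff.rfl⟩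
    have := pieceIntegral (τ i) (τ (i+1)) δ (fun s => ρ (g i s))
      (fun s => (⟪r (g i s), gradient ρ (g i s)⟫ : ℝ))
      (fun s => |(⟪r (γ s), gradient ρ (γ s)⟫ : ℝ)|)
      (fun u => |ρ (γ u)| ≤ δ) hφc hψc hagree
    exact ⟨this.1, this.2.trans (hδev i hi)⟩
  have htotal : (∫ s in Icc (0:ℝ) H, |(⟪r (γ s), gradient ρ (γ s)⟫ : ℝ)| *
      ({u : ℝ | |ρ (γ u)| ≤ δ}.indicator (fun _ => (1:ℝ)) s))
      = 2 * δ * ((crossSetS H (ρ ⁻¹' {0}) γ).ncard : ℝ) := by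
    rw [← setIntegral_congr_set Ioc_ae_eq_Icc, hIocdecomp,
      integral_biUnion_finset _ (fun i _ => measurableSet_Ioc) hIocdisj
        (fun i hi => (hpieces i hi).1),
      Finset.sum_congr rfl (fun i hi => (hpieces i hi).2), hNcard, Finset.mul_sum]
  rw [htotal]
  field_simp
end
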